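/- arXiv:1811.06493 — 5 statements merged into one kernel-verified Lean document; each statement's English description precedes it below -/
import Mathlib

section
/- For any non-empty bounded F ⊆ ℝⁿ and θ ∈ (0,1), the upper θ-intermediate dimension of F is at least dim_A F − (dim_A F − upper box dimension of F)/θ. In particular, if the lower box dimension of F equals its Assouad dimension, then for all θ ∈ (0,1] both the lower and upper θ-intermediate dimensions of F equal the Assouad dimension of F. -/
open Set

noncomputable section

/-- There is a countable cover of `F` by sets whose diameters all lie between `lo` and `hi`,
with `s`-power diameter sum at most `ε`. -/
def ICov {X : Type} [PseudoEMetricSpace X] (F : Set X) (s lo hi ε : ℝ) : Prop :=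
  ∃ (ι : Type) (_ : Countable ι) (U : ι → Set X), F ⊆ ⋃ i, U i ∧
    (∀ i, ENNReal.ofReal lo ≤ EMetric.diam (U i) ∧ EMetric.diam (U i) ≤ ENNReal.ofReal hi) ∧
    ∑' i, EMetric.diam (U i) ^ s ≤ ENNReal.ofReal ε

/-- There is a countable cover of `F` with no diameter restrictions and
`s`-power diameter sum at most `ε`. -/
def HCov {X : Type} [PseudoEMetricSpace X] (F : Set X) (s ε : ℝ) : Prop :=
  ∃ (ι : Type) (_ : Countable ι) (U : ι → Set X), F ⊆ ⋃ i, U i ∧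
    ∑' i, EMetric.diam (U i) ^ s ≤ ENNReal.ofReal ε

/-- The lower `θ`-intermediate dimension. -/
def lowerIDim {X : Type} [PseudoEMetricSpace X] (F : Set X) (θ : ℝ) : ℝ :=
  if θ = 0 then sInf {s : ℝ | 0 ≤ s ∧ ∀ ε > 0, HCov F s ε}
  else sInf {s : ℝ | 0 ≤ s ∧ ∀ ε > 0, ∀ δ₀ > 0, ∃ δ : ℝ, 0 < δ ∧ δ ≤ δ₀ ∧
    ICov F s (δ ^ (1 / θ)) δ ε}

/-- The upper `θ`-intermediate dimension. -/
def upperIDim {X : Type} [PseudoEMetricSpace X] (F : Set X) (θ : ℝ) : ℝ :=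
  if θ = 0 then sInf {s : ℝ | 0 ≤ s ∧ ∀ ε > 0, HCov F s ε}
  else sInf {s : ℝ | 0 ≤ s ∧ ∀ ε > 0, ∃ δ₀ > (0:ℝ), ∀ δ : ℝ, 0 < δ → δ ≤ δ₀ →
    ICov F s (δ ^ (1 / θ)) δ ε}

/-- A countable cover of `F` by sets all of diameter exactly `δ`,
with `s`-power diameter sum at most `ε`. -/
def EqCov {X : Type} [PseudoEMetricSpace X] (F : Set X) (s δ ε : ℝ) : Prop :=
  ∃ (ι : Type) (_ : Countable ι) (U : ι → Set X), F ⊆ ⋃ i, U i ∧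
    (∀ i, EMetric.diam (U i) = ENNReal.ofReal δ) ∧
    ∑' i, EMetric.diam (U i) ^ s ≤ ENNReal.ofReal ε

/-- The lower box dimension. -/
def lowerBoxDim {X : Type} [PseudoEMetricSpace X] (F : Set X) : ℝ :=
  sInf {s : ℝ | 0 ≤ s ∧ ∀ ε > 0, ∀ δ₀ > 0, ∃ δ : ℝ, 0 < δ ∧ δ ≤ δ₀ ∧ EqCov F s δ ε}

/-- The upper box dimension. -/
def upperBoxDim {X : Type} [PseudoEMetricSpace X] (F : Set X) : ℝ :=
  sInf {s : ℝ | 0 ≤ s ∧ ∀ ε > 0, ∃ δ₀ > (0:ℝ), ∀ δ : ℝ, 0 < δ → δ ≤ δ₀ → EqCov F s δ ε}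

/-- The Assouad dimension. -/
def assouadDim {X : Type} [PseudoEMetricSpace X] (F : Set X) : ℝ :=
  sInf {s : ℝ | 0 ≤ s ∧ ∃ C > (0:ℝ), ∀ x ∈ F, ∀ r R : ℝ, 0 < r → r < R →
    ∃ t : Finset (Set X), (F ∩ EMetric.closedBall x (ENNReal.ofReal R) ⊆ ⋃ U ∈ t, U) ∧
      (∀ U ∈ t, EMetric.diam U ≤ ENNReal.ofReal r) ∧ (t.card : ℝ) ≤ C * (R / r) ^ s}

end

/-! ### Auxiliary definitions -/

noncomputable section Aux

variable {X : Type} [PseudoEMetricSpace X]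

def ASet (F : Set X) : Set ℝ :=
  {s : ℝ | 0 ≤ s ∧ ∃ C > (0:ℝ), ∀ x ∈ F, ∀ r R : ℝ, 0 < r → r < R →
    ∃ t : Finset (Set X), (F ∩ EMetric.closedBall x (ENNReal.ofReal R) ⊆ ⋃ U ∈ t, U) ∧
      (∀ U ∈ t, EMetric.diam U ≤ ENNReal.ofReal r) ∧ (t.card : ℝ) ≤ C * (R / r) ^ s}

def UBSet (F : Set X) : Set ℝ :=
  {s : ℝ | 0 ≤ s ∧ ∀ ε > 0, ∃ δ₀ > (0:ℝ), ∀ δ : ℝ, 0 < δ → δ ≤ δ₀ → EqCov F s δ ε}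

def LBSet (F : Set X) : Set ℝ :=
  {s : ℝ | 0 ≤ s ∧ ∀ ε > 0, ∀ δ₀ > 0, ∃ δ : ℝ, 0 < δ ∧ δ ≤ δ₀ ∧ EqCov F s δ ε}

def UISet (F : Set X) (θ : ℝ) : Set ℝ :=
  {s : ℝ | 0 ≤ s ∧ ∀ ε > 0, ∃ δ₀ > (0:ℝ), ∀ δ : ℝ, 0 < δ → δ ≤ δ₀ →
    ICov F s (δ ^ (1 / θ)) δ ε}

def LISet (F : Set X) (θ : ℝ) : Set ℝ :=
  {s : ℝ | 0 ≤ s ∧ ∀ ε > 0, ∀ δ₀ > 0, ∃ δ : ℝ, 0 < δ ∧ δ ≤ δ₀ ∧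
    ICov F s (δ ^ (1 / θ)) δ ε}

lemma assouadDim_eq (F : Set X) : assouadDim F = sInf (ASet F) := rfl
lemma upperBoxDim_eq (F : Set X) : upperBoxDim F = sInf (UBSet F) := rfl
lemma lowerBoxDim_eq (F : Set X) : lowerBoxDim F = sInf (LBSet F) := rfl
lemma upperIDim_eq (F : Set X) {θ : ℝ} (hθ : θ ≠ 0) : upperIDim F θ = sInf (UISet F θ) := by
  rw [upperIDim, if_neg hθ]; rfl
lemma lowerIDim_eq (F : Set X) {θ : ℝ} (hθ : θ ≠ 0) : lowerIDim F θ = sInf (LISet F θ) := by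
  rw [lowerIDim, if_neg hθ]; rfl

lemma bddBelow_of_nonneg {S : Set ℝ} (h : ∀ s ∈ S, 0 ≤ s) : BddBelow S :=
  ⟨0, fun x hx => h x hx⟩

lemma ASet_bdd (F : Set X) : BddBelow (ASet F) := bddBelow_of_nonneg (fun _ h => h.1)
lemma UBSet_bdd (F : Set X) : BddBelow (UBSet F) := bddBelow_of_nonneg (fun _ h => h.1)
lemma LBSet_bdd (F : Set X) : BddBelow (LBSet F) := bddBelow_of_nonneg (fun _ h => h.1)
lemma UISet_bdd (F : Set X) (θ : ℝ) : BddBelow (UISet F θ) := bddBelow_of_nonneg (fun _ h => h.1)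
lemma LISet_bdd (F : Set X) (θ : ℝ) : BddBelow (LISet F θ) := bddBelow_of_nonneg (fun _ h => h.1)

/-- The Assouad set is upward closed. -/
lemma ASet_mono (F : Set X) {a a' : ℝ} (ha : a ∈ ASet F) (h : a ≤ a') : a' ∈ ASet F := by
  obtain ⟨ha0, C, hC, hA⟩ := ha
  refine ⟨le_trans ha0 h, C, hC, fun x hx r R hr hrR => ?_⟩
  obtain ⟨t, h1, h2, h3⟩ := hA x hx r R hr hrR
  refine ⟨t, h1, h2, le_trans h3 ?_⟩
  have h1R : (1:ℝ) ≤ R / r := le_of_lt ((one_lt_div hr).mpr hrR)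
  exact mul_le_mul_of_nonneg_left (Real.rpow_le_rpow_of_exponent_le h1R h) (le_of_lt hC)

/-- `EqCov` covers are `ICov` covers when `δ ≤ 1`. -/
lemma EqCov_to_ICov {F : Set X} {s δ ε θ : ℝ} (hθ : 0 < θ) (hθ1 : θ ≤ 1)
    (hδ : 0 < δ) (hδ1 : δ ≤ 1) (h : EqCov F s δ ε) : ICov F s (δ ^ (1 / θ)) δ ε := by
  obtain ⟨ι, hι, U, hcov, hdiam, hsum⟩ := h
  refine ⟨ι, hι, U, hcov, fun i => ⟨?_, ?_⟩, hsum⟩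
  · rw [hdiam i]
    apply ENNReal.ofReal_le_ofReal
    calc δ ^ (1 / θ) ≤ δ ^ (1:ℝ) :=
          Real.rpow_le_rpow_of_exponent_ge hδ hδ1 (by
            rw [le_div_iff₀ hθ]; linarith)
      _ = δ := Real.rpow_one δ
  · rw [hdiam i]

/-- Inclusions between the defining sets. -/
lemma UBSet_subset_LBSet (F : Set X) : UBSet F ⊆ LBSet F := by
  rintro s ⟨hs0, hs⟩
  refine ⟨hs0, fun ε hε δ₀' hδ₀' => ?_⟩
  obtain ⟨δ₀, hδ₀, h⟩ := hs ε hε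
  exact ⟨min δ₀ δ₀', lt_min hδ₀ hδ₀', min_le_right _ _,
    h _ (lt_min hδ₀ hδ₀') (min_le_left _ _)⟩

lemma UBSet_subset_UISet (F : Set X) {θ : ℝ} (hθ : 0 < θ) (hθ1 : θ ≤ 1) :
    UBSet F ⊆ UISet F θ := by
  rintro s ⟨hs0, hs⟩
  refine ⟨hs0, fun ε hε => ?_⟩
  obtain ⟨δ₀, hδ₀, h⟩ := hs ε hε
  refine ⟨min δ₀ 1, lt_min hδ₀ one_pos, fun δ hδ hδle => ?_⟩
  exact EqCov_to_ICov hθ hθ1 hδ (le_trans hδle (min_le_right _ _))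
    (h δ hδ (le_trans hδle (min_le_left _ _)))

lemma LBSet_subset_LISet (F : Set X) {θ : ℝ} (hθ : 0 < θ) (hθ1 : θ ≤ 1) :
    LBSet F ⊆ LISet F θ := by
  rintro s ⟨hs0, hs⟩
  refine ⟨hs0, fun ε hε δ₀ hδ₀ => ?_⟩
  obtain ⟨δ, hδ, hδle, h⟩ := hs ε hε (min δ₀ 1) (lt_min hδ₀ one_pos)
  exact ⟨δ, hδ, le_trans hδle (min_le_left _ _),
    EqCov_to_ICov hθ hθ1 hδ (le_trans hδle (min_le_right _ _)) h⟩

end Aux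

/-! ### Euclidean space facts -/

noncomputable section EucSec

variable {n : ℕ}

local notation "Euc" => EuclideanSpace ℝ (Fin n)

/-- Exact diameter of closed balls in a nontrivial Euclidean space. -/
lemma ediam_closedBall_eq (hn : 0 < n) (x : Euc) {ρ : ℝ} (hρ : 0 ≤ ρ) :
    EMetric.diam (Metric.closedBall x ρ) = ENNReal.ofReal (2 * ρ) := by
  apply le_antisymm
  · refine Metric.ediam_le_of_forall_dist_le fun y hy z hz => ?_
    have h1 : dist y x ≤ ρ := Metric.mem_closedBall.mp hy
    have h2 : dist z x ≤ ρ := Metric.mem_closedBall.mp hz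
    calc dist y z ≤ dist y x + dist x z := dist_triangle _ _ _
      _ ≤ 2 * ρ := by rw [dist_comm x z]; linarith
  · set u : Euc := EuclideanSpace.single ⟨0, hn⟩ ρ with hu
    have hnu : ‖u‖ = ρ := by
      rw [hu, EuclideanSpace.norm_single, Real.norm_eq_abs, abs_of_nonneg hρ]
    have h1 : x + u ∈ Metric.closedBall x ρ := by
      rw [Metric.mem_closedBall, dist_comm, dist_self_add_right, hnu]
    have h2 : x - u ∈ Metric.closedBall x ρ := by
      rw [Metric.mem_closedBall, dist_comm, dist_self_sub_right, hnu]
    have hd : dist (x + u) (x - u) = 2 * ρ := by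
      rw [dist_eq_norm]
      have he : (x + u) - (x - u) = (2:ℝ) • u := by module
      rw [he, norm_smul, hnu]
      simp [abs_of_nonneg]
    calc ENNReal.ofReal (2*ρ) = edist (x+u) (x-u) := by rw [edist_dist, hd]
      _ ≤ _ := EMetric.edist_le_diam_of_mem h1 h2

/-- Coordinates are 1-Lipschitz. -/
lemma coord_dist_le (y x : Euc) (i : Fin n) : dist (y i) (x i) ≤ dist y x := by
  calc dist (y i) (x i) = Real.sqrt (dist (y i) (x i)^2) := (Real.sqrt_sq dist_nonneg).symm
    _ ≤ Real.sqrt (∑ j, dist (y j) (x j)^2) :=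
        Real.sqrt_le_sqrt (Finset.single_le_sum (f := fun j => dist (y j) (x j)^2) (fun j _ => sq_nonneg _) (Finset.mem_univ i))
    _ = dist y x := (EuclideanSpace.dist_eq y x).symm

/-- `n` belongs to the Assouad set of any subset of `ℝⁿ`. -/
lemma nat_mem_ASet (F : Set Euc) : (n : ℝ) ∈ ASet F := by
  classical
  refine ⟨Nat.cast_nonneg n, (2 * Real.sqrt n + 4)^n, by positivity, fun x hx r R hr hrR => ?_⟩
  have hR : 0 < R := lt_trans hr hrR
  have h1R : (1:ℝ) ≤ R / r := le_of_lt ((one_lt_div hr).mpr hrR)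
  set h : ℝ := r / (Real.sqrt n + 1) with hh
  have hsn : (0:ℝ) ≤ Real.sqrt n := Real.sqrt_nonneg n
  have hhpos : 0 < h := div_pos hr (by linarith)
  set Box : (Fin n → ℤ) → Set Euc :=
    fun c => {y : Euc | ∀ i, (c i : ℝ) * h ≤ y i ∧ y i ≤ (c i : ℝ) * h + h} with hBox
  set G : Finset (Fin n → ℤ) :=
    Fintype.piFinset (fun i => Finset.Icc ⌊(x i - R)/h⌋ ⌊(x i + R)/h⌋) with hG
  refine ⟨G.image Box, ?_, ?_, ?_⟩
  · -- cover
    rintro y ⟨hyF, hyB⟩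
    have hdist : dist y x ≤ R := by
      rw [← edist_le_ofReal (le_of_lt hR)]
      exact EMetric.mem_closedBall.mp hyB
    have hcoord : ∀ i, x i - R ≤ y i ∧ y i ≤ x i + R := by
      intro i
      have h1 : |y i - x i| ≤ R := by
        have h2 := coord_dist_le y x i
        rw [Real.dist_eq] at h2
        linarith
      have h3 := abs_le.mp h1
      constructor <;> linarith [h3.1, h3.2]
    set c : Fin n → ℤ := fun i => ⌊y i / h⌋ with hc
    have hcG : c ∈ G := by
      rw [hG, Fintype.mem_piFinset]
      intro i
      rw [Finset.mem_Icc]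
      constructor
      · exact Int.floor_le_floor (by
          apply div_le_div_of_nonneg_right ?_ hhpos.le
          exact (hcoord i).1)
      · exact Int.floor_le_floor (by
          apply div_le_div_of_nonneg_right ?_ hhpos.le
          exact (hcoord i).2)
    have hyBox : y ∈ Box c := by
      simp only [hBox, Set.mem_setOf_eq]
      intro i
      constructor
      · calc ((c i : ℝ)) * h ≤ (y i / h) * h :=
            mul_le_mul_of_nonneg_right (Int.floor_le _) hhpos.le
          _ = y i := div_mul_cancel₀ _ (ne_of_gt hhpos)
      · have h2 : y i / h ≤ (c i : ℝ) + 1 := le_of_lt (Int.lt_floor_add_one (y i / h))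
        calc y i = (y i / h) * h := (div_mul_cancel₀ _ (ne_of_gt hhpos)).symm
          _ ≤ ((c i : ℝ) + 1) * h := mul_le_mul_of_nonneg_right h2 hhpos.le
          _ = (c i : ℝ) * h + h := by ring
    exact Set.mem_iUnion₂.mpr ⟨Box c, Finset.mem_image_of_mem Box hcG, hyBox⟩
  · -- diameter bound
    intro U hU
    obtain ⟨c, -, rfl⟩ := Finset.mem_image.mp hU
    apply Metric.ediam_le_of_forall_dist_le
    intro y hy z hz
    simp only [hBox, Set.mem_setOf_eq] at hy hz
    have hyz : ∀ i, dist (y i) (z i) ≤ h := by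
      intro i
      have := Real.dist_le_of_mem_Icc (x := y i) (y := z i)
        (Set.mem_Icc.mpr ⟨(hy i).1, (hy i).2⟩) (Set.mem_Icc.mpr ⟨(hz i).1, (hz i).2⟩)
      linarith
    calc dist y z = Real.sqrt (∑ i, dist (y i) (z i)^2) := EuclideanSpace.dist_eq y z
      _ ≤ Real.sqrt (∑ _i : Fin n, h^2) :=
          Real.sqrt_le_sqrt (Finset.sum_le_sum fun i _ =>
            pow_le_pow_left₀ dist_nonneg (hyz i) 2)
      _ = Real.sqrt ((n:ℝ) * h^2) := by
          rw [Finset.sum_const, Finset.card_univ, Fintype.card_fin, nsmul_eq_mul]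
      _ = Real.sqrt n * h := by
          rw [Real.sqrt_mul (Nat.cast_nonneg n), Real.sqrt_sq hhpos.le]
      _ ≤ r := by
          have h2 : Real.sqrt n * (r / (Real.sqrt n + 1))
              ≤ (Real.sqrt n + 1) * (r / (Real.sqrt n + 1)) :=
            mul_le_mul_of_nonneg_right (by linarith) (by positivity)
          rw [mul_div_cancel₀ r (by positivity : Real.sqrt n + 1 ≠ 0)] at h2
          rw [hh]; exact h2
  · -- cardinality bound
    have hcard : (G.image Box).card ≤ G.card := Finset.card_image_le
    have hGcard : (G.card : ℝ) ≤ (2*R/h + 2)^n := by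
      rw [hG, Fintype.card_piFinset]
      push_cast
      calc (∏ i, ((Finset.Icc ⌊(x i - R)/h⌋ ⌊(x i + R)/h⌋).card : ℝ))
          ≤ ∏ _i : Fin n, (2*R/h + 2) := by
            apply Finset.prod_le_prod (fun i _ => by positivity)
            intro i _
            rw [Int.card_Icc]
            set k : ℤ := ⌊(x i + R)/h⌋ + 1 - ⌊(x i - R)/h⌋ with hk
            have hb : ((k:ℤ):ℝ) ≤ 2*R/h + 2 := by
              have l1 : ((⌊(x i + R)/h⌋:ℝ)) ≤ (x i + R)/h := Int.floor_le _
              have l2 : (x i - R)/h - 1 < ((⌊(x i - R)/h⌋:ℝ)) := Int.sub_one_lt_floor _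
              have l3 : (x i + R)/h - (x i - R)/h = 2*R/h := by
                field_simp
                ring
              push_cast [hk]
              linarith
            have hcast : ((k.toNat : ℕ) : ℝ) = max ((k:ℤ):ℝ) 0 := by
              rw [← Int.cast_natCast, Int.toNat_eq_max, Int.cast_max]
              norm_num
            rw [hcast]
            exact max_le hb (by positivity)
          _ = (2*R/h+2)^n := by
            rw [Finset.prod_const, Finset.card_univ, Fintype.card_fin]
    have hbase : 2*R/h + 2 ≤ (2*Real.sqrt n + 4) * (R/r) := by
      have l1 : 2*R/h = (2*Real.sqrt n + 2) * (R/r) := by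
        rw [hh]
        field_simp
      rw [l1]
      nlinarith [h1R, hsn]
    calc ((G.image Box).card : ℝ) ≤ (G.card:ℝ) := Nat.cast_le.mpr hcard
      _ ≤ (2*R/h+2)^n := hGcard
      _ ≤ ((2*Real.sqrt n + 4)*(R/r))^n := pow_le_pow_left₀ (by positivity) hbase n
      _ = (2*Real.sqrt n+4)^n * (R/r)^n := mul_pow _ _ n
      _ = (2*Real.sqrt n+4)^n * (R/r)^((n:ℝ)) := by rw [Real.rpow_natCast]

end EucSec


/-! ### Core covering lemmas -/

noncomputable section Core

variable {n : ℕ}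

local notation "Euc" => EuclideanSpace ℝ (Fin n)

/-- Assouad covering property with explicit constant. -/
def AProp (F : Set Euc) (C a : ℝ) : Prop :=
  ∀ x ∈ F, ∀ r R : ℝ, 0 < r → r < R →
    ∃ t : Finset (Set Euc), (F ∩ EMetric.closedBall x (ENNReal.ofReal R) ⊆ ⋃ U ∈ t, U) ∧
      (∀ U ∈ t, EMetric.diam U ≤ ENNReal.ofReal r) ∧ (t.card : ℝ) ≤ C * (R / r) ^ a

lemma mem_ASet_iff {F : Set Euc} {s : ℝ} :
    s ∈ ASet F ↔ 0 ≤ s ∧ ∃ C > (0:ℝ), AProp F C s := Iff.rfl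

/-- Fatten a finite family of small sets into closed balls of exact diameter `r`. -/
lemma fatten (hn : 0 < n) {r : ℝ} (hr : 0 < r) (t₀ : Finset (Set Euc)) (z : Euc)
    (h2 : ∀ W ∈ t₀, EMetric.diam W ≤ ENNReal.ofReal (r/2)) :
    ∃ t : Finset (Set Euc), ((⋃ W ∈ t₀, W) ⊆ ⋃ W ∈ t, W) ∧
      (∀ W ∈ t, EMetric.diam W = ENNReal.ofReal r) ∧ t.card ≤ t₀.card := by
  classical
  set pt : Set Euc → Euc := fun W => if hW : W.Nonempty then hW.some else z with hpt
  set f : Set Euc → Set Euc := fun W => Metric.closedBall (pt W) (r/2) with hf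
  refine ⟨t₀.image f, ?_, ?_, Finset.card_image_le⟩
  · intro y hy
    obtain ⟨W, hWt, hyW⟩ := Set.mem_iUnion₂.mp hy
    refine Set.mem_iUnion₂.mpr ⟨f W, Finset.mem_image_of_mem f hWt, ?_⟩
    have hWne : W.Nonempty := ⟨y, hyW⟩
    have hWb : Bornology.IsBounded W := by
      rw [Metric.isBounded_iff_ediam_ne_top]
      exact ne_top_of_le_ne_top ENNReal.ofReal_ne_top (h2 W hWt)
    have hdiamW : Metric.diam W ≤ r/2 := by
      have h3 := ENNReal.toReal_mono ENNReal.ofReal_ne_top (h2 W hWt)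
      rwa [ENNReal.toReal_ofReal (by linarith : (0:ℝ) ≤ r/2)] at h3
    have hptW : pt W ∈ W := by
      rw [hpt]; simp only [dif_pos hWne]; exact hWne.some_mem
    rw [hf]
    simp only
    rw [Metric.mem_closedBall]
    calc dist y (pt W) ≤ Metric.diam W := Metric.dist_le_diam_of_mem hWb hyW hptW
      _ ≤ r/2 := hdiamW
  · intro W hW
    obtain ⟨W₀, -, rfl⟩ := Finset.mem_image.mp hW
    rw [hf]
    simp only
    rw [ediam_closedBall_eq hn _ (by linarith : (0:ℝ) ≤ r/2)]
    congr 1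
    ring

/-- The core covering lemma: from an intermediate-dimension cover at scales
`[δ^(1/θ), δ]`, produce an equal-diameter cover at scale `δ^(1/θ)`. -/
lemma covlemma (hn : 0 < n) {F : Set Euc} {θ a s C ε δ : ℝ}
    (hθ : 0 < θ) (hC : 0 < C) (hA : AProp F C a)
    (h0s : 0 ≤ s) (hsa : s ≤ a) (hδ : 0 < δ)
    (h : ICov F s (δ ^ (1 / θ)) δ ε) :
    EqCov F ((1-θ)*a + θ*s) (δ ^ (1 / θ)) (C * 2 ^ a * ε) := by
  classical
  have hθne : θ ≠ 0 := ne_of_gt hθ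
  obtain ⟨ι, hι, U, hcov, hd, hsum⟩ := h
  set η : ℝ := δ ^ (1 / θ) with hη
  have hηpos : 0 < η := Real.rpow_pos_of_pos hδ _
  set b : ℝ := (1-θ)*a + θ*s with hb
  have hone : δ^(a-s) * η^(b-a) = 1 := by
    rw [hη, ← Real.rpow_mul hδ.le, ← Real.rpow_add hδ]
    have he : (a - s) + (1/θ) * (b - a) = 0 := by
      rw [hb]; field_simp; ring
    rw [he, Real.rpow_zero]
  have key : ∀ i : ι, ∃ t : Finset (Set Euc),
      (F ∩ U i ⊆ ⋃ W ∈ t, W) ∧ (∀ W ∈ t, EMetric.diam W = ENNReal.ofReal η) ∧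
      ((t.card : ℝ) * η ^ b ≤ C * 2 ^ a * (EMetric.diam (U i)).toReal ^ s) := by
    intro i
    set Ri : ℝ := (EMetric.diam (U i)).toReal with hRi
    have hfin : EMetric.diam (U i) ≠ ⊤ :=
      ne_top_of_le_ne_top ENNReal.ofReal_ne_top (hd i).2
    have hηR : η ≤ Ri := by
      have h3 := ENNReal.toReal_mono hfin (hd i).1
      rwa [ENNReal.toReal_ofReal hηpos.le] at h3
    have hRδ : Ri ≤ δ := by
      have h3 := ENNReal.toReal_mono ENNReal.ofReal_ne_top (hd i).2
      rwa [ENNReal.toReal_ofReal hδ.le] at h3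
    have hRpos : 0 < Ri := lt_of_lt_of_le hηpos hηR
    by_cases hFU : (F ∩ U i).Nonempty
    · obtain ⟨xi, hxiF, hxiU⟩ := hFU
      obtain ⟨t₀, hc1, hc2, hc3⟩ := hA xi hxiF (η/2) Ri
        (by linarith) (by linarith [half_lt_self hηpos])
      obtain ⟨t, ht1, ht2, ht3⟩ := fatten hn hηpos t₀ xi hc2
      refine ⟨t, ?_, ht2, ?_⟩
      · intro y hy
        have hy' : y ∈ F ∩ EMetric.closedBall xi (ENNReal.ofReal Ri) := by
          refine ⟨hy.1, ?_⟩
          change edist y xi ≤ ENNReal.ofReal Ri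
          calc edist y xi ≤ EMetric.diam (U i) := EMetric.edist_le_diam_of_mem hy.2 hxiU
            _ = ENNReal.ofReal Ri := (ENNReal.ofReal_toReal hfin).symm
        exact ht1 (hc1 hy')
      · have hcard : ((t.card : ℕ) : ℝ) ≤ C * (Ri/(η/2))^a :=
          le_trans (Nat.cast_le.mpr ht3) hc3
        have hηa : (0:ℝ) < η ^ a := Real.rpow_pos_of_pos hηpos a
        have e1 : (Ri/(η/2))^a = 2^a * (Ri^a / η^a) := by
          have e0 : Ri/(η/2) = 2 * (Ri/η) := by
            rw [div_div_eq_mul_div, mul_comm Ri 2, mul_div_assoc]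
          rw [e0, Real.mul_rpow (by norm_num) (by positivity),
            Real.div_rpow hRpos.le hηpos.le]
        have e2 : Ri^a = Ri^s * Ri^(a-s) := by
          rw [← Real.rpow_add hRpos]; ring_nf
        have e3 : Ri^(a-s) ≤ δ^(a-s) := Real.rpow_le_rpow hRpos.le hRδ (by linarith)
        have e4 : η^b = η^(b-a) * η^a := by rw [← Real.rpow_add hηpos]; ring_nf
        calc ((t.card : ℕ) : ℝ) * η^b ≤ (C * (2^a * (Ri^a/η^a))) * η^b := by
              rw [← e1]
              exact mul_le_mul_of_nonneg_right hcard (Real.rpow_nonneg hηpos.le b)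
          _ = C * 2^a * (Ri^s * (Ri^(a-s) * η^(b-a))) := by
              rw [e2, e4]; field_simp [ne_of_gt hηa]
          _ ≤ C * 2^a * (Ri^s * (δ^(a-s) * η^(b-a))) := by
              refine mul_le_mul_of_nonneg_left ?_ (by positivity)
              refine mul_le_mul_of_nonneg_left ?_ (Real.rpow_nonneg hRpos.le s)
              exact mul_le_mul_of_nonneg_right e3 (Real.rpow_nonneg hηpos.le _)
          _ = C * 2^a * Ri^s := by rw [hone]; ring
    · refine ⟨∅, ?_, by simp, ?_⟩
      · rw [Set.not_nonempty_iff_eq_empty] at hFU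
        rw [hFU]
        exact Set.empty_subset _
      · simp only [Finset.card_empty, Nat.cast_zero, zero_mul]
        have : (0:ℝ) ≤ Ri ^ s := Real.rpow_nonneg ENNReal.toReal_nonneg _
        positivity
  choose t ht1 ht2 ht3 using key
  refine ⟨(i : ι) × {W // W ∈ t i}, inferInstance, fun p => p.2.1, ?_, ?_, ?_⟩
  · intro y hy
    obtain ⟨i, hyU⟩ := Set.mem_iUnion.mp (hcov hy)
    obtain ⟨W, hWt, hyW⟩ := Set.mem_iUnion₂.mp (ht1 i ⟨hy, hyU⟩)
    exact Set.mem_iUnion.mpr ⟨⟨i, ⟨W, hWt⟩⟩, hyW⟩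
  · rintro ⟨i, W, hW⟩
    exact ht2 i W hW
  · rw [ENNReal.tsum_sigma']
    have hperi : ∀ i : ι, (∑' (W : {W // W ∈ t i}), EMetric.diam (W.1) ^ b)
        ≤ ENNReal.ofReal (C * 2^a) * EMetric.diam (U i) ^ s := by
      intro i
      have hfin : EMetric.diam (U i) ≠ ⊤ :=
        ne_top_of_le_ne_top ENNReal.ofReal_ne_top (hd i).2
      have hRpos : 0 < (EMetric.diam (U i)).toReal := by
        have h3 := ENNReal.toReal_mono hfin (hd i).1
        rw [ENNReal.toReal_ofReal hηpos.le] at h3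
        linarith
      calc (∑' (W : {W // W ∈ t i}), EMetric.diam (W.1) ^ b)
          = ∑' (_W : {W // W ∈ t i}), ENNReal.ofReal η ^ b :=
            tsum_congr (fun W => by rw [ht2 i W.1 W.2])
        _ = ((t i).card : ENNReal) * ENNReal.ofReal η ^ b := by
            rw [tsum_fintype, Finset.sum_const, Finset.card_univ, Fintype.card_coe,
              nsmul_eq_mul]
        _ = ENNReal.ofReal (((t i).card : ℝ) * η ^ b) := by
            rw [ENNReal.ofReal_mul (Nat.cast_nonneg _), ENNReal.ofReal_natCast,
              ENNReal.ofReal_rpow_of_pos hηpos]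
        _ ≤ ENNReal.ofReal (C * 2^a * (EMetric.diam (U i)).toReal ^ s) :=
            ENNReal.ofReal_le_ofReal (ht3 i)
        _ = ENNReal.ofReal (C * 2^a) * ENNReal.ofReal ((EMetric.diam (U i)).toReal ^ s) :=
            ENNReal.ofReal_mul (by positivity)
        _ = ENNReal.ofReal (C * 2^a) * EMetric.diam (U i) ^ s := by
            rw [← ENNReal.ofReal_rpow_of_pos hRpos, ENNReal.ofReal_toReal hfin]
    calc (∑' (i : ι), ∑' (W : {W // W ∈ t i}), EMetric.diam (W.1) ^ b)
        ≤ ∑' (i : ι), ENNReal.ofReal (C * 2^a) * EMetric.diam (U i) ^ s :=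
          ENNReal.tsum_le_tsum hperi
      _ = ENNReal.ofReal (C * 2^a) * ∑' (i : ι), EMetric.diam (U i) ^ s :=
          ENNReal.tsum_mul_left
      _ ≤ ENNReal.ofReal (C * 2^a) * ENNReal.ofReal ε := mul_le_mul_right hsum _
      _ = ENNReal.ofReal (C * 2^a * ε) := (ENNReal.ofReal_mul (by positivity)).symm

/-- From the Assouad property, upper box dimension covers exist at every exponent `s > a`. -/
lemma AProp_to_UBSet (hn : 0 < n) {F : Set Euc} (hne : F.Nonempty)
    (hF : Bornology.IsBounded F) {C a s : ℝ} (hC : 0 < C) (hA : AProp F C a)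
    (h0a : 0 ≤ a) (hsa : a < s) : s ∈ UBSet F := by
  classical
  obtain ⟨x₀, hx₀⟩ := hne
  set R : ℝ := Metric.diam F + 1 with hR
  have hdF : 0 ≤ Metric.diam F := Metric.diam_nonneg
  have hRpos : 0 < R := by linarith
  have hFsub : F ⊆ EMetric.closedBall x₀ (ENNReal.ofReal R) := by
    intro y hy
    change edist y x₀ ≤ ENNReal.ofReal R
    rw [edist_dist]
    exact ENNReal.ofReal_le_ofReal
      (le_trans (Metric.dist_le_diam_of_mem hF hy hx₀) (by linarith))
  refine ⟨by linarith, fun ε hε => ?_⟩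
  set K : ℝ := C * 2^a * R^a with hK
  have hKpos : 0 < K := by positivity
  set δ₁ : ℝ := (min (ε/K) 1) ^ (1/(s-a)) with hδ₁
  have hmin : 0 < min (ε/K) 1 := lt_min (div_pos hε hKpos) one_pos
  have hδ₁pos : 0 < δ₁ := Real.rpow_pos_of_pos hmin _
  refine ⟨min δ₁ R, lt_min hδ₁pos hRpos, fun δ hδ hδle => ?_⟩
  have hδR : δ ≤ R := le_trans hδle (min_le_right _ _)
  have hδδ₁ : δ ≤ δ₁ := le_trans hδle (min_le_left _ _)
  obtain ⟨t₀, hc1, hc2, hc3⟩ := hA x₀ hx₀ (δ/2) R (by linarith) (by linarith)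
  obtain ⟨t, ht1, ht2, ht3⟩ := fatten hn hδ t₀ x₀ hc2
  have hcover : F ⊆ ⋃ W ∈ t, W := by
    intro y hy
    exact ht1 (hc1 ⟨hy, hFsub hy⟩)
  have hcard : ((t.card : ℕ) : ℝ) ≤ C * (R/(δ/2))^a := le_trans (Nat.cast_le.mpr ht3) hc3
  -- the sum bound
  have hreal : ((t.card : ℕ) : ℝ) * δ ^ s ≤ ε := by
    have e1 : (R/(δ/2))^a = 2^a * R^a * (δ^a)⁻¹ := by
      have e0 : R/(δ/2) = 2 * R / δ := by rw [div_div_eq_mul_div, mul_comm R 2]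
      rw [e0, Real.div_rpow (by positivity) hδ.le,
        Real.mul_rpow (by norm_num) hRpos.le]
      ring
    have e2 : δ^s = δ^a * δ^(s-a) := by rw [← Real.rpow_add hδ]; ring_nf
    have e3 : δ^(s-a) ≤ ε/K := by
      calc δ^(s-a) ≤ δ₁^(s-a) := Real.rpow_le_rpow hδ.le hδδ₁ (by linarith)
        _ = min (ε/K) 1 := by
            rw [hδ₁, ← Real.rpow_mul hmin.le, one_div_mul_cancel (sub_ne_zero.mpr (ne_of_gt hsa)),
              Real.rpow_one]
        _ ≤ ε/K := min_le_left _ _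
    have hδa : (0:ℝ) < δ ^ a := Real.rpow_pos_of_pos hδ a
    calc ((t.card : ℕ) : ℝ) * δ ^ s ≤ (C * (2^a * R^a * (δ^a)⁻¹)) * (δ^a * δ^(s-a)) := by
          rw [← e1, ← e2]
          exact mul_le_mul_of_nonneg_right hcard (Real.rpow_nonneg hδ.le s)
      _ = K * δ^(s-a) := by rw [hK]; field_simp [ne_of_gt hδa]
      _ ≤ K * (ε/K) := mul_le_mul_of_nonneg_left e3 hKpos.le
      _ = ε := by field_simp
  refine ⟨{W // W ∈ t}, inferInstance, fun W => W.1, ?_, ?_, ?_⟩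
  · intro y hy
    obtain ⟨W, hWt, hyW⟩ := Set.mem_iUnion₂.mp (hcover hy)
    exact Set.mem_iUnion.mpr ⟨⟨W, hWt⟩, hyW⟩
  · rintro ⟨W, hW⟩
    exact ht2 W hW
  · calc (∑' (W : {W // W ∈ t}), EMetric.diam (W.1) ^ s)
        = ∑' (_W : {W // W ∈ t}), ENNReal.ofReal δ ^ s :=
          tsum_congr (fun W => by rw [ht2 W.1 W.2])
      _ = ((t.card : ENNReal)) * ENNReal.ofReal δ ^ s := by
          rw [tsum_fintype, Finset.sum_const, Finset.card_univ, Fintype.card_coe, nsmul_eq_mul]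
      _ = ENNReal.ofReal (((t.card : ℕ) : ℝ) * δ ^ s) := by
          rw [ENNReal.ofReal_mul (Nat.cast_nonneg _), ENNReal.ofReal_natCast,
            ENNReal.ofReal_rpow_of_pos hδ]
      _ ≤ ENNReal.ofReal ε := ENNReal.ofReal_le_ofReal hreal

end Core


/-! ### Dimension-level lemmas -/

noncomputable section Dims

variable {n : ℕ} {F : Set (EuclideanSpace ℝ (Fin n))}

lemma ASet_nonempty (F : Set (EuclideanSpace ℝ (Fin n))) : (ASet F).Nonempty :=
  ⟨(n:ℝ), nat_mem_ASet F⟩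

lemma UBSet_nonempty (hn : 0 < n) (hne : F.Nonempty) (hF : Bornology.IsBounded F) :
    (UBSet F).Nonempty := by
  obtain ⟨h0, C, hC, hA⟩ := nat_mem_ASet F
  exact ⟨(n:ℝ)+1, AProp_to_UBSet hn hne hF hC hA h0 (by linarith)⟩

lemma upperBox_le_assouad (hn : 0 < n) (hne : F.Nonempty) (hF : Bornology.IsBounded F) :
    upperBoxDim F ≤ assouadDim F := by
  rw [upperBoxDim_eq, assouadDim_eq]
  apply le_csInf (ASet_nonempty F)
  rintro a ⟨h0a, C, hC, hA⟩
  refine le_of_forall_gt_imp_ge_of_dense fun s hs => csInf_le (UBSet_bdd F) ?_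
  exact AProp_to_UBSet hn hne hF hC hA h0a hs

lemma lowerBox_le_upperBox (hn : 0 < n) (hne : F.Nonempty) (hF : Bornology.IsBounded F) :
    lowerBoxDim F ≤ upperBoxDim F := by
  rw [lowerBoxDim_eq, upperBoxDim_eq]
  exact csInf_le_csInf (LBSet_bdd F) (UBSet_nonempty hn hne hF) (UBSet_subset_LBSet F)

lemma upperI_le_upperBox (hn : 0 < n) (hne : F.Nonempty) (hF : Bornology.IsBounded F)
    {θ : ℝ} (hθ : 0 < θ) (hθ1 : θ ≤ 1) : upperIDim F θ ≤ upperBoxDim F := by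
  rw [upperIDim_eq F hθ.ne', upperBoxDim_eq]
  exact csInf_le_csInf (UISet_bdd F θ) (UBSet_nonempty hn hne hF) (UBSet_subset_UISet F hθ hθ1)

lemma lowerI_le_lowerBox (hn : 0 < n) (hne : F.Nonempty) (hF : Bornology.IsBounded F)
    {θ : ℝ} (hθ : 0 < θ) (hθ1 : θ ≤ 1) : lowerIDim F θ ≤ lowerBoxDim F := by
  rw [lowerIDim_eq F hθ.ne', lowerBoxDim_eq]
  refine csInf_le_csInf (LISet_bdd F θ) ?_ (LBSet_subset_LISet F hθ hθ1)
  exact (UBSet_nonempty hn hne hF).mono (UBSet_subset_LBSet F)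

lemma UI_to_UB (hn : 0 < n) {θ a s C : ℝ} (hθ : 0 < θ) (hθ1 : θ ≤ 1)
    (hC : 0 < C) (hA : AProp F C a) (hsa : s ≤ a) (hs : s ∈ UISet F θ) :
    (1-θ)*a + θ*s ∈ UBSet F := by
  obtain ⟨h0s, hs⟩ := hs
  have h0a : 0 ≤ a := le_trans h0s hsa
  have hK : 0 < C * 2^a := by positivity
  refine ⟨by nlinarith, fun ε' hε' => ?_⟩
  obtain ⟨δ₀, hδ₀, h⟩ := hs (ε'/(C*2^a)) (div_pos hε' hK)
  refine ⟨δ₀ ^ (1/θ), Real.rpow_pos_of_pos hδ₀ _, fun δ' hδ' hδ'le => ?_⟩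
  have hδpos : 0 < δ' ^ θ := Real.rpow_pos_of_pos hδ' θ
  have hδle : δ' ^ θ ≤ δ₀ := by
    calc δ' ^ θ ≤ (δ₀^(1/θ))^θ := Real.rpow_le_rpow hδ'.le hδ'le hθ.le
      _ = δ₀ := by rw [← Real.rpow_mul hδ₀.le, one_div_mul_cancel hθ.ne', Real.rpow_one]
  have hback : (δ' ^ θ) ^ ((1:ℝ)/θ) = δ' := by
    rw [← Real.rpow_mul hδ'.le, mul_one_div, div_self hθ.ne', Real.rpow_one]
  have hcb := covlemma hn hθ hC hA h0s hsa hδpos (h _ hδpos hδle)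
  rw [hback] at hcb
  rwa [show C * 2^a * (ε'/(C*2^a)) = ε' by field_simp] at hcb

lemma LI_to_LB (hn : 0 < n) {θ a s C : ℝ} (hθ : 0 < θ) (hθ1 : θ ≤ 1)
    (hC : 0 < C) (hA : AProp F C a) (hsa : s ≤ a) (hs : s ∈ LISet F θ) :
    (1-θ)*a + θ*s ∈ LBSet F := by
  obtain ⟨h0s, hs⟩ := hs
  have h0a : 0 ≤ a := le_trans h0s hsa
  have hK : 0 < C * 2^a := by positivity
  refine ⟨by nlinarith, fun ε' hε' δ₀' hδ₀' => ?_⟩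
  obtain ⟨δ, hδ, hδle, hicov⟩ := hs (ε'/(C*2^a)) (div_pos hε' hK) (δ₀' ^ θ)
    (Real.rpow_pos_of_pos hδ₀' θ)
  refine ⟨δ ^ ((1:ℝ)/θ), Real.rpow_pos_of_pos hδ _, ?_, ?_⟩
  · calc δ ^ ((1:ℝ)/θ) ≤ (δ₀'^θ) ^ ((1:ℝ)/θ) :=
        Real.rpow_le_rpow hδ.le hδle (by positivity)
      _ = δ₀' := by rw [← Real.rpow_mul hδ₀'.le, mul_one_div, div_self hθ.ne', Real.rpow_one]
  · have hcb := covlemma hn hθ hC hA h0s hsa hδ hicov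
    rwa [show C * 2^a * (ε'/(C*2^a)) = ε' by field_simp] at hcb

lemma final_ineq {θ : ℝ} (hθ : 0 < θ) (hθ1 : θ ≤ 1) {SI : Set ℝ} (hSIne : SI.Nonempty)
    {D : ℝ} (hDA : D ≤ sInf (ASet F))
    (hkey : ∀ s ∈ SI, ∀ a ∈ ASet F, s ≤ a → D ≤ (1-θ)*a + θ*s) :
    D ≤ (1-θ) * sInf (ASet F) + θ * sInf SI := by
  set A := sInf (ASet F) with hA
  have hstep : ∀ s ∈ SI, D ≤ (1-θ)*A + θ*s := by
    intro s hsSI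
    by_cases hc : ∀ a ∈ ASet F, s ≤ a
    · rcases eq_or_lt_of_le hθ1 with hθe | hθlt
      · obtain ⟨a, ha⟩ := ASet_nonempty F
        have h1 := hkey s hsSI a ha (hc a ha)
        rw [← hθe] at h1 ⊢
        simpa using h1
      · have h1θ : 0 < 1 - θ := by linarith
        have hle : (D - θ*s)/(1-θ) ≤ A := by
          apply le_csInf (ASet_nonempty F)
          intro a ha
          rw [div_le_iff₀ h1θ]
          linarith [hkey s hsSI a ha (hc a ha)]
        have h2 := (div_le_iff₀ h1θ).mp hle
        linarith
    · push_neg at hc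
      obtain ⟨a, ha, has⟩ := hc
      have hAs : A ≤ s := le_trans (csInf_le (ASet_bdd F) ha) has.le
      have hθAs : θ*A ≤ θ*s := mul_le_mul_of_nonneg_left hAs hθ.le
      linarith
  have hle : (D - (1-θ)*A)/θ ≤ sInf SI := by
    apply le_csInf hSIne
    intro s hs
    rw [div_le_iff₀ hθ]
    linarith [hstep s hs]
  have h2 := (div_le_iff₀ hθ).mp hle
  linarith

lemma master_upper (hn : 0 < n) (hne : F.Nonempty) (hF : Bornology.IsBounded F)
    {θ : ℝ} (hθ : 0 < θ) (hθ1 : θ ≤ 1) :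
    upperBoxDim F ≤ (1-θ) * assouadDim F + θ * upperIDim F θ := by
  rw [upperBoxDim_eq, assouadDim_eq, upperIDim_eq F hθ.ne']
  have hSIne : (UISet F θ).Nonempty :=
    (UBSet_nonempty hn hne hF).mono (UBSet_subset_UISet F hθ hθ1)
  refine final_ineq hθ hθ1 hSIne ?_ ?_
  · rw [← upperBoxDim_eq, ← assouadDim_eq]; exact upperBox_le_assouad hn hne hF
  · rintro s hs a ⟨h0a, C, hC, hA⟩ hsa
    exact csInf_le (UBSet_bdd F) (UI_to_UB hn hθ hθ1 hC hA hsa hs)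

lemma master_lower (hn : 0 < n) (hne : F.Nonempty) (hF : Bornology.IsBounded F)
    {θ : ℝ} (hθ : 0 < θ) (hθ1 : θ ≤ 1) :
    lowerBoxDim F ≤ (1-θ) * assouadDim F + θ * lowerIDim F θ := by
  rw [lowerBoxDim_eq, assouadDim_eq, lowerIDim_eq F hθ.ne']
  have hSIne : (LISet F θ).Nonempty :=
    ((UBSet_nonempty hn hne hF).mono (UBSet_subset_LBSet F)).mono (LBSet_subset_LISet F hθ hθ1)
  refine final_ineq hθ hθ1 hSIne ?_ ?_
  · rw [← lowerBoxDim_eq, ← assouadDim_eq]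
    exact le_trans (lowerBox_le_upperBox hn hne hF) (upperBox_le_assouad hn hne hF)
  · rintro s hs a ⟨h0a, C, hC, hA⟩ hsa
    exact csInf_le (LBSet_bdd F) (LI_to_LB hn hθ hθ1 hC hA hsa hs)

end Dims

/-! ### The degenerate case `n = 0` -/

section Zero

variable {F : Set (EuclideanSpace ℝ (Fin 0))}

lemma zero_diam (s : Set (EuclideanSpace ℝ (Fin 0))) : EMetric.diam s = 0 :=
  EMetric.diam_subsingleton (Set.subsingleton_of_subsingleton)

lemma zero_noEqCov (hne : F.Nonempty) {s δ ε : ℝ} (hδ : 0 < δ) : ¬ EqCov F s δ ε := by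
  rintro ⟨ι, hι, U, hcov, hdiam, -⟩
  obtain ⟨x, hx⟩ := hne
  obtain ⟨i, hi⟩ := Set.mem_iUnion.mp (hcov hx)
  have h1 := hdiam i
  rw [zero_diam] at h1
  exact absurd h1.symm (ne_of_gt (ENNReal.ofReal_pos.mpr hδ))

lemma zero_noICov (hne : F.Nonempty) {s lo hi ε : ℝ} (hlo : 0 < lo) : ¬ ICov F s lo hi ε := by
  rintro ⟨ι, hι, U, hcov, hdiam, -⟩
  obtain ⟨x, hx⟩ := hne
  obtain ⟨i, hi⟩ := Set.mem_iUnion.mp (hcov hx)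
  have h1 := (hdiam i).1
  rw [zero_diam] at h1
  exact absurd (le_antisymm h1 zero_le) (ne_of_gt (ENNReal.ofReal_pos.mpr hlo))

lemma zero_assouad (F : Set (EuclideanSpace ℝ (Fin 0))) : assouadDim F = 0 := by
  rw [assouadDim_eq]
  have h1 : ASet F = Set.Ici 0 := by
    ext s
    constructor
    · exact fun h => h.1
    · intro h0
      refine ⟨h0, 1, one_pos, fun x hx r R hr hrR => ⟨{Set.univ}, ?_, ?_, ?_⟩⟩
      · simp
      · intro U hU
        simp only [Finset.mem_singleton] at hU
        rw [hU, zero_diam]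
        exact zero_le
      · simp only [Finset.card_singleton, Nat.cast_one, one_mul]
        exact Real.one_le_rpow (le_of_lt ((one_lt_div hr).mpr hrR)) h0
  rw [h1, csInf_Ici]

lemma zero_upperBox (hne : F.Nonempty) : upperBoxDim F = 0 := by
  rw [upperBoxDim_eq]
  have h1 : UBSet F = ∅ := by
    ext s
    simp only [Set.mem_empty_iff_false, iff_false]
    rintro ⟨h0, h⟩
    obtain ⟨δ₀, hδ₀, hh⟩ := h 1 one_pos
    exact zero_noEqCov hne hδ₀ (hh δ₀ hδ₀ le_rfl)
  rw [h1, Real.sInf_empty]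

lemma zero_lowerBox (hne : F.Nonempty) : lowerBoxDim F = 0 := by
  rw [lowerBoxDim_eq]
  have h1 : LBSet F = ∅ := by
    ext s
    simp only [Set.mem_empty_iff_false, iff_false]
    rintro ⟨h0, h⟩
    obtain ⟨δ, hδ, -, hh⟩ := h 1 one_pos 1 one_pos
    exact zero_noEqCov hne hδ hh
  rw [h1, Real.sInf_empty]

lemma zero_upperI (hne : F.Nonempty) {θ : ℝ} (hθ : 0 < θ) : upperIDim F θ = 0 := by
  rw [upperIDim_eq F hθ.ne']
  have h1 : UISet F θ = ∅ := by
    ext s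
    simp only [Set.mem_empty_iff_false, iff_false]
    rintro ⟨h0, h⟩
    obtain ⟨δ₀, hδ₀, hh⟩ := h 1 one_pos
    exact zero_noICov hne (Real.rpow_pos_of_pos hδ₀ _) (hh δ₀ hδ₀ le_rfl)
  rw [h1, Real.sInf_empty]

lemma zero_lowerI (hne : F.Nonempty) {θ : ℝ} (hθ : 0 < θ) : lowerIDim F θ = 0 := by
  rw [lowerIDim_eq F hθ.ne']
  have h1 : LISet F θ = ∅ := by
    ext s
    simp only [Set.mem_empty_iff_false, iff_false]
    rintro ⟨h0, h⟩
    obtain ⟨δ, hδ, -, hh⟩ := h 1 one_pos 1 one_pos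
    exact zero_noICov hne (Real.rpow_pos_of_pos hδ _) hh
  rw [h1, Real.sInf_empty]

end Zero

theorem stmt12 (n : ℕ) (F : Set (EuclideanSpace ℝ (Fin n))) (hne : F.Nonempty)
    (hF : Bornology.IsBounded F) :
    (∀ θ ∈ Set.Ioo (0:ℝ) 1,
      assouadDim F - (assouadDim F - upperBoxDim F) / θ ≤ upperIDim F θ) ∧
    (lowerBoxDim F = assouadDim F → ∀ θ ∈ Set.Ioc (0:ℝ) 1,
      lowerIDim F θ = assouadDim F ∧ upperIDim F θ = assouadDim F) := by
  rcases Nat.eq_zero_or_pos n with hn | hn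
  · subst hn
    constructor
    · rintro θ ⟨hθ0, hθ1⟩
      rw [zero_assouad F, zero_upperBox hne, zero_upperI hne hθ0]
      norm_num
    · rintro - θ ⟨hθ0, hθ1⟩
      rw [zero_assouad F, zero_upperI hne hθ0, zero_lowerI hne hθ0]
      exact ⟨rfl, rfl⟩
  constructor
  · rintro θ ⟨hθ0, hθ1⟩
    have h := master_upper hn hne hF hθ0 hθ1.le
    have h3 : assouadDim F - upperIDim F θ ≤ (assouadDim F - upperBoxDim F)/θ :=
      (le_div_iff₀ hθ0).mpr (by nlinarith)
    linarith
  · intro hlb θ hθ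
    obtain ⟨hθ0, hθ1⟩ := hθ
    have hu := master_upper hn hne hF hθ0 hθ1
    have hl := master_lower hn hne hF hθ0 hθ1
    have hBA := upperBox_le_assouad hn hne hF
    have hlBu := lowerBox_le_upperBox hn hne hF
    have hub_eq : upperBoxDim F = assouadDim F := le_antisymm hBA (by rw [← hlb]; exact hlBu)
    have huI_le : upperIDim F θ ≤ assouadDim F := by
      rw [← hub_eq]; exact upperI_le_upperBox hn hne hF hθ0 hθ1
    have hlI_le : lowerIDim F θ ≤ assouadDim F := by
      rw [← hlb]; exact lowerI_le_lowerBox hn hne hF hθ0 hθ1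
    have huI_ge : assouadDim F ≤ upperIDim F θ := by
      rw [hub_eq] at hu
      nlinarith
    have hlI_ge : assouadDim F ≤ lowerIDim F θ := by
      rw [hlb] at hl
      nlinarith
    exact ⟨le_antisymm hlI_le hlI_ge, le_antisymm huI_le huI_ge⟩
end

section
/- Product upper bound: For bounded sets E ⊆ ℝⁿ and F ⊆ ℝᵐ and θ ∈ [0,1], the upper θ-intermediate dimension of E × F is at most the upper θ-intermediate dimension of E plus the upper box dimension of F. -/
open Set

section Aux
open ENNReal
variable {X Y : Type} [PseudoEMetricSpace X] [PseudoEMetricSpace Y]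

/-- product set in the L2 product -/
def LpProd (A : Set X) (B : Set Y) : Set (WithLp 2 (X × Y)) := {z | z.fst ∈ A ∧ z.snd ∈ B}

lemma ediam_alias_eq (A : Set X) : EMetric.diam A = Metric.ediam A := rfl

lemma edist2 (z w : WithLp 2 (X × Y)) :
    edist z w = (edist z.fst w.fst ^ (2:ℝ) + edist z.snd w.snd ^ (2:ℝ)) ^ ((1:ℝ)/2) := by
  rw [WithLp.prod_edist_eq_add (by norm_num)]
  simp only [ENNReal.toReal_ofNat]

lemma diam_eq_iSup (A : Set X) : EMetric.diam A = ⨆ p : A × A, edist p.1.1 p.2.1 := by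
  rw [EMetric.diam, Metric.ediam, iSup_prod]
  simp [iSup_subtype']

lemma diam_LpProd_le (A : Set X) (B : Set Y) :
    EMetric.diam (LpProd A B) ≤ (EMetric.diam A ^ (2:ℝ) + EMetric.diam B ^ (2:ℝ)) ^ ((1:ℝ)/2) := by
  refine EMetric.diam_le fun z hz w hw => ?_
  rw [edist2]
  refine ENNReal.rpow_le_rpow ?_ (by norm_num)
  exact add_le_add (ENNReal.rpow_le_rpow (EMetric.edist_le_diam_of_mem hz.1 hw.1) (by norm_num))
    (ENNReal.rpow_le_rpow (EMetric.edist_le_diam_of_mem hz.2 hw.2) (by norm_num))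

lemma le_diam_LpProd {A : Set X} {B : Set Y} (hA : A.Nonempty) (hB : B.Nonempty) :
    (EMetric.diam A ^ (2:ℝ) + EMetric.diam B ^ (2:ℝ)) ^ ((1:ℝ)/2) ≤ EMetric.diam (LpProd A B) := by
  have key : EMetric.diam A ^ (2:ℝ) + EMetric.diam B ^ (2:ℝ) ≤ EMetric.diam (LpProd A B) ^ (2:ℝ) := by
    have hsq : ∀ {ι : Type} (f : ι → ℝ≥0∞), (⨆ i, f i) ^ (2:ℝ) = ⨆ i, f i ^ (2:ℝ) := by
      intro ι f
      have h := OrderIso.map_iSup (ENNReal.orderIsoRpow 2 (by norm_num : (0:ℝ) < 2)) f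
      simp only [ENNReal.orderIsoRpow_apply] at h
      exact h
    rw [diam_eq_iSup A, diam_eq_iSup B, hsq, hsq]
    have : Nonempty (A × A) := ⟨⟨⟨hA.some, hA.some_mem⟩, ⟨hA.some, hA.some_mem⟩⟩⟩
    have : Nonempty (B × B) := ⟨⟨⟨hB.some, hB.some_mem⟩, ⟨hB.some, hB.some_mem⟩⟩⟩
    refine ENNReal.iSup_add_iSup_le fun p q => ?_
    set z : WithLp 2 (X × Y) := (WithLp.equiv 2 (X × Y)).symm (p.1.1, q.1.1) with hzd
    set w : WithLp 2 (X × Y) := (WithLp.equiv 2 (X × Y)).symm (p.2.1, q.2.1) with hwd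
    have hz1 : z.fst = p.1.1 := rfl
    have hz2 : z.snd = q.1.1 := rfl
    have hw1 : w.fst = p.2.1 := rfl
    have hw2 : w.snd = q.2.1 := rfl
    have hz : z ∈ LpProd A B := ⟨by rw [hz1]; exact p.1.2, by rw [hz2]; exact q.1.2⟩
    have hw : w ∈ LpProd A B := ⟨by rw [hw1]; exact p.2.2, by rw [hw2]; exact q.2.2⟩
    have he : edist p.1.1 p.2.1 ^ (2:ℝ) + edist q.1.1 q.2.1 ^ (2:ℝ) = edist z w ^ (2:ℝ) := by
      rw [edist2 z w, hz1, hz2, hw1, hw2, ← ENNReal.rpow_mul]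
      norm_num
    rw [he]
    exact ENNReal.rpow_le_rpow (EMetric.edist_le_diam_of_mem hz hw) (by norm_num)
  calc (EMetric.diam A ^ (2:ℝ) + EMetric.diam B ^ (2:ℝ)) ^ ((1:ℝ)/2)
      ≤ (EMetric.diam (LpProd A B) ^ (2:ℝ)) ^ ((1:ℝ)/2) := ENNReal.rpow_le_rpow key (by norm_num)
    _ = EMetric.diam (LpProd A B) := by
        rw [← ENNReal.rpow_mul]; norm_num

lemma grid_lemma {m : ℕ} (hm : 1 ≤ m) (F : Set (EuclideanSpace ℝ (Fin m)))
    (hF : Bornology.IsBounded F) :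
    ∀ ε > (0:ℝ), ∃ δ₀ > (0:ℝ), ∀ δ : ℝ, 0 < δ → δ ≤ δ₀ → EqCov F ((m:ℝ)+1) δ ε := by
  obtain ⟨R₀, hR₀⟩ := hF.subset_closedBall 0
  set R : ℝ := max R₀ 0 with hRdef
  have hR : F ⊆ Metric.closedBall 0 R := hR₀.trans (Metric.closedBall_subset_closedBall (le_max_left _ _))
  have hR0 : 0 ≤ R := le_max_right _ _
  intro ε hε
  have hm0 : (0:ℝ) < m := by exact_mod_cast hm
  have hsm : 0 < Real.sqrt m := Real.sqrt_pos.2 hm0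
  set sm : ℝ := Real.sqrt m with hsmdef
  set C : ℝ := 2*R*sm + 5 with hCdef
  have hC : 0 < C := by positivity
  have hCm : 0 < C ^ m := by positivity
  refine ⟨min 1 (ε / C^m), by positivity, fun δ hδ hδ₀ => ?_⟩
  have hδ1 : δ ≤ 1 := hδ₀.trans (min_le_left _ _)
  have hδε : δ ≤ ε / C^m := hδ₀.trans (min_le_right _ _)
  set a : ℝ := δ / sm with hadef
  have ha : 0 < a := by positivity
  obtain ⟨K, hK1, hK2⟩ : ∃ K : ℕ, R / a ≤ (K:ℝ) ∧ ((K:ℝ)) < R / a + 2 :=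
    ⟨⌈R/a⌉₊ + 1, by push_cast; linarith [Nat.le_ceil (R/a)],
      by push_cast; linarith [Nat.ceil_lt_add_one (show (0:ℝ) ≤ R/a by positivity)]⟩
  set U : (Fin m → {i : ℤ // i ∈ Finset.Icc (-(K:ℤ)) (K:ℤ)}) → Set (EuclideanSpace ℝ (Fin m)) :=
    fun k => {x | ∀ j, ((k j : ℤ):ℝ) * a ≤ x j ∧ x j ≤ ((k j : ℤ):ℝ) * a + a} with hUdef
  have hsqrt : Real.sqrt ((m:ℝ) * a^2) = δ := by
    have hsm2 : sm^2 = (m:ℝ) := Real.sq_sqrt hm0.le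
    have ham : (m:ℝ) * a ^ 2 = δ ^ 2 := by
      rw [hadef, div_pow, ← hsm2]
      field_simp
    rw [ham, Real.sqrt_sq hδ.le]
  have hdiam : ∀ k, EMetric.diam (U k) = ENNReal.ofReal δ := by
    intro k
    apply le_antisymm
    · refine EMetric.diam_le fun x hx y hy => ?_
      rw [edist_dist]
      refine ENNReal.ofReal_le_ofReal ?_
      rw [EuclideanSpace.dist_eq]
      rw [← hsqrt]
      apply Real.sqrt_le_sqrt
      have hterm : ∀ j : Fin m, dist (x j) (y j) ^ 2 ≤ a ^ 2 := by
        intro j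
        have h1 := hx j
        have h2 := hy j
        have habs : |x j - y j| ≤ a := abs_le.2 ⟨by linarith [h1.1, h1.2, h2.1, h2.2], by linarith [h1.1, h1.2, h2.1, h2.2]⟩
        calc dist (x j) (y j) ^ 2 = |x j - y j| ^ 2 := by rw [Real.dist_eq]
          _ ≤ a ^ 2 := by nlinarith [abs_nonneg (x j - y j)]
      calc ∑ j, dist (x j) (y j) ^ 2 ≤ ∑ _j : Fin m, a ^ 2 := Finset.sum_le_sum fun j _ => hterm j
        _ = (m:ℝ) * a ^ 2 := by rw [Finset.sum_const, Finset.card_univ, Fintype.card_fin, nsmul_eq_mul]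
    · set P : EuclideanSpace ℝ (Fin m) := WithLp.toLp 2 (fun j => ((k j : ℤ):ℝ) * a) with hPdef
      set Q : EuclideanSpace ℝ (Fin m) := WithLp.toLp 2 (fun j => ((k j : ℤ):ℝ) * a + a) with hQdef
      have hP : P ∈ U k := fun j => ⟨le_refl _, by dsimp [P]; linarith⟩
      have hQ : Q ∈ U k := fun j => ⟨by dsimp [Q]; linarith, le_refl _⟩
      have hdist : dist P Q = δ := by
        rw [EuclideanSpace.dist_eq]
        have hco : ∀ j : Fin m, dist (P j) (Q j) ^ 2 = a ^ 2 := by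
          intro j
          rw [Real.dist_eq]
          have hd : P j - Q j = -a := by dsimp [P, Q]; ring
          rw [hd, abs_neg, abs_of_nonneg ha.le]
        rw [Finset.sum_congr rfl (fun j _ => hco j), Finset.sum_const, Finset.card_univ,
          Fintype.card_fin, nsmul_eq_mul, hsqrt]
      calc ENNReal.ofReal δ = edist P Q := by rw [edist_dist, hdist]
        _ ≤ EMetric.diam (U k) := EMetric.edist_le_diam_of_mem hP hQ
  refine ⟨_, inferInstance, U, ?_, hdiam, ?_⟩
  · -- cover
    intro x hx
    have hxR : ‖x‖ ≤ R := by
      have := hR hx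
      rwa [Metric.mem_closedBall, dist_zero_right] at this
    have hco : ∀ j, |x j| ≤ R := by
      intro j
      refine le_trans ?_ hxR
      rw [EuclideanSpace.norm_eq]
      rw [show |x j| = Real.sqrt (|x j|^2) by rw [Real.sqrt_sq (abs_nonneg _)]]
      apply Real.sqrt_le_sqrt
      have hsq : |x j| ^ 2 = ‖x j‖ ^ 2 := by rw [Real.norm_eq_abs]
      rw [hsq]
      exact Finset.single_le_sum (f := fun i => ‖x i‖^2) (fun i _ => sq_nonneg _) (Finset.mem_univ j)
    have hmem : ∀ j, ⌊x j / a⌋ ∈ Finset.Icc (-(K:ℤ)) (K:ℤ) := by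
      intro j
      have habs : |x j / a| ≤ R / a := by
        rw [abs_div, abs_of_nonneg ha.le]
        gcongr
        exact hco j
      have h1 := (abs_le.1 habs).1
      have h2 := (abs_le.1 habs).2
      rw [Finset.mem_Icc]
      constructor
      · refine Int.le_floor.2 ?_
        push_cast
        linarith
      · have : ⌊x j / a⌋ ≤ ⌊(K:ℝ)⌋ := Int.floor_le_floor (by linarith)
        simpa using this
    refine Set.mem_iUnion.2 ⟨fun j => ⟨⌊x j / a⌋, hmem j⟩, fun j => ?_⟩
    constructor
    · calc ((⌊x j / a⌋:ℤ):ℝ) * a ≤ (x j / a) * a := by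
            have := Int.floor_le (x j / a)
            exact mul_le_mul_of_nonneg_right this ha.le
        _ = x j := by field_simp
    · have h2 : x j / a < ⌊x j / a⌋ + 1 := Int.lt_floor_add_one _
      have hxj : x j = (x j / a) * a := by field_simp
      rw [hxj]
      calc (x j / a) * a ≤ (((⌊x j / a⌋:ℤ):ℝ) + 1) * a := mul_le_mul_of_nonneg_right h2.le ha.le
        _ = ((⌊x j / a⌋:ℤ):ℝ) * a + a := by ring
  · -- sum
    have hcardn : Fintype.card (Fin m → {i : ℤ // i ∈ Finset.Icc (-(K:ℤ)) (K:ℤ)}) = (2*K+1)^m := by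
      rw [Fintype.card_fun, Fintype.card_coe, Int.card_Icc, Fintype.card_fin]
      congr 1
      omega
    have hsum : ∑' k, EMetric.diam (U k) ^ ((m:ℝ)+1)
        = (Fintype.card (Fin m → {i : ℤ // i ∈ Finset.Icc (-(K:ℤ)) (K:ℤ)}) : ℝ≥0∞) * ENNReal.ofReal δ ^ ((m:ℝ)+1) := by
      rw [tsum_fintype]
      rw [Finset.sum_congr rfl (fun k _ => by rw [hdiam k])]
      rw [Finset.sum_const, Finset.card_univ, nsmul_eq_mul]
    rw [hsum, hcardn]
    have hrw : ((((2*K+1)^m : ℕ)) : ℝ≥0∞) * ENNReal.ofReal δ ^ ((m:ℝ)+1)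
        = ENNReal.ofReal ((((2*K+1)^m : ℕ):ℝ) * δ ^ (m+1)) := by
      rw [ENNReal.ofReal_rpow_of_pos hδ]
      rw [ENNReal.ofReal_mul (by positivity)]
      rw [ENNReal.ofReal_natCast]
      congr 2
      rw [show ((m:ℝ)+1) = ((m+1 : ℕ):ℝ) by push_cast; ring]
      rw [Real.rpow_natCast]
    rw [hrw]
    refine ENNReal.ofReal_le_ofReal ?_
    have hKC : ((2*K+1 : ℕ):ℝ) * δ ≤ C := by
      have h2 : (R/a) * δ = R * sm := by
        rw [hadef]
        field_simp
      have h3 : ((2*K+1:ℕ):ℝ) * δ ≤ (2*(R/a) + 5) * δ := by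
        push_cast
        nlinarith [hK2, hδ]
      calc ((2*K+1:ℕ):ℝ) * δ ≤ (2*(R/a) + 5) * δ := h3
        _ = 2*((R/a)*δ) + 5*δ := by ring
        _ = 2*(R*sm) + 5*δ := by rw [h2]
        _ ≤ C := by rw [hCdef]; nlinarith
    calc (((2*K+1 : ℕ)^m:ℕ):ℝ) * δ ^ (m+1) = (((2*K+1:ℕ):ℝ) * δ)^m * δ := by
          push_cast
          rw [mul_pow, pow_succ]; ring
      _ ≤ C ^ m * δ := by
          refine mul_le_mul_of_nonneg_right (pow_le_pow_left₀ (by positivity) hKC m) hδ.le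
      _ ≤ C ^ m * (ε / C^m) := mul_le_mul_of_nonneg_left hδε (by positivity)
      _ = ε := by field_simp

lemma ofReal_rpow {x : ℝ} (hx : 0 < x) (y : ℝ) :
    ENNReal.ofReal x ^ y = ENNReal.ofReal (x ^ y) := ENNReal.ofReal_rpow_of_pos hx

lemma diam_LpProd_le_ofReal {A : Set X} {B : Set Y} {p q : ℝ} (hp : 0 < p) (hq : 0 < q)
    (hA : EMetric.diam A ≤ ENNReal.ofReal p) (hB : EMetric.diam B ≤ ENNReal.ofReal q)
    (hpq : p ≤ q) :
    EMetric.diam (LpProd A B) ≤ ENNReal.ofReal (Real.sqrt 2 * q) := by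
  refine (diam_LpProd_le A B).trans ?_
  have h1 : EMetric.diam A ^ (2:ℝ) + EMetric.diam B ^ (2:ℝ)
      ≤ ENNReal.ofReal (p ^ (2:ℝ) + q ^ (2:ℝ)) := by
    rw [ENNReal.ofReal_add (by positivity) (by positivity)]
    exact add_le_add (by rw [← ofReal_rpow hp]; exact ENNReal.rpow_le_rpow hA (by norm_num))
      (by rw [← ofReal_rpow hq]; exact ENNReal.rpow_le_rpow hB (by norm_num))
  calc (EMetric.diam A ^ (2:ℝ) + EMetric.diam B ^ (2:ℝ)) ^ ((1:ℝ)/2)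
      ≤ ENNReal.ofReal (p ^ (2:ℝ) + q ^ (2:ℝ)) ^ ((1:ℝ)/2) := ENNReal.rpow_le_rpow h1 (by norm_num)
    _ = ENNReal.ofReal ((p ^ (2:ℝ) + q ^ (2:ℝ)) ^ ((1:ℝ)/2)) := ofReal_rpow (by positivity) _
    _ ≤ ENNReal.ofReal (Real.sqrt 2 * q) := by
        refine ENNReal.ofReal_le_ofReal ?_
        rw [show ((1:ℝ)/2) = ((2:ℝ)⁻¹) by norm_num, Real.rpow_inv_le_iff_of_pos (by positivity)
          (by positivity) (by norm_num)]
        have hsq : (Real.sqrt 2 * q) ^ (2:ℝ) = 2 * q ^ (2:ℝ) := by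
          rw [Real.mul_rpow (Real.sqrt_nonneg 2) hq.le]
          congr 1
          rw [show (2:ℝ) = ((2:ℕ):ℝ) by norm_num, Real.rpow_natCast, Real.sq_sqrt (by norm_num)]
        rw [hsq]
        have : p ^ (2:ℝ) ≤ q ^ (2:ℝ) := Real.rpow_le_rpow hp.le hpq (by norm_num)
        linarith

lemma main_icov {E : Set X} {F : Set Y} {θ s t : ℝ} (hθ1 : 0 < θ) (hθ2 : θ ≤ 1)
    (hs0 : 0 ≤ s) (ht0 : 0 ≤ t)
    (hsE : ∀ ε > (0:ℝ), ∃ δ₀ > (0:ℝ), ∀ δ, 0 < δ → δ ≤ δ₀ → ICov E s (δ ^ (1/θ)) δ ε)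
    (htF : ∀ ε > (0:ℝ), ∃ δ₀ > (0:ℝ), ∀ δ, 0 < δ → δ ≤ δ₀ → EqCov F t δ ε) :
    ∀ ε > (0:ℝ), ∃ δ₀ > (0:ℝ), ∀ δ, 0 < δ → δ ≤ δ₀ →
      ICov (LpProd E F) (s+t) (δ ^ (1/θ)) δ ε := by
  have hθinv : 1 ≤ 1/θ := by rw [le_div_iff₀ hθ1]; linarith
  have hsqrt2 : (0:ℝ) < Real.sqrt 2 := by positivity
  have hsq2 : (Real.sqrt 2)^2 = 2 := Real.sq_sqrt (by norm_num)
  obtain ⟨A, hA0, hA1, hAval⟩ : ∃ A : ℝ, 0 < A ∧ 1 ≤ A ∧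
      (Real.sqrt 2) ^ ((1:ℝ)/θ) = A := by
    refine ⟨(Real.sqrt 2) ^ ((1:ℝ)/θ), Real.rpow_pos_of_pos hsqrt2 _, ?_, rfl⟩
    apply Real.one_le_rpow
    · rw [show (1:ℝ) = Real.sqrt 1 by simp]
      exact Real.sqrt_le_sqrt (by norm_num)
    · positivity
  intro ε hε
  set Cst : ℝ := (Real.sqrt 2) ^ (s+t) * A ^ s with hCstdef
  have hCst : 0 < Cst := by positivity
  obtain ⟨δE, hδEpos, hE'⟩ := hsE 1 one_pos
  obtain ⟨δF, hδFpos, hF'⟩ := htF (ε / Cst) (by positivity)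
  refine ⟨min (Real.sqrt 2 * δE) (min δF 1), by positivity, fun δ' hδ'0 hδ'le => ?_⟩
  have hδ'1 : δ' ≤ 1 := hδ'le.trans ((min_le_right _ _).trans (min_le_right _ _))
  have hδ'F : δ' ≤ δF := hδ'le.trans ((min_le_right _ _).trans (min_le_left _ _))
  obtain ⟨δ, hδeq⟩ : ∃ δ : ℝ, δ = δ' / Real.sqrt 2 := ⟨_, rfl⟩
  have hδpos : 0 < δ := by rw [hδeq]; positivity
  have hδ'eq : δ * Real.sqrt 2 = δ' := by rw [hδeq]; field_simp
  have hδE : δ ≤ δE := by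
    rw [hδeq, div_le_iff₀ hsqrt2]
    calc δ' ≤ Real.sqrt 2 * δE := hδ'le.trans (min_le_left _ _)
      _ = δE * Real.sqrt 2 := by ring
  have hone_sqrt2 : (1:ℝ) ≤ Real.sqrt 2 := by
    rw [show (1:ℝ) = Real.sqrt 1 by simp]
    exact Real.sqrt_le_sqrt (by norm_num)
  have hδδ' : δ ≤ δ' := by
    calc δ = δ * 1 := (mul_one δ).symm
      _ ≤ δ * Real.sqrt 2 := mul_le_mul_of_nonneg_left hone_sqrt2 hδpos.le
      _ = δ' := hδ'eq
  have sqle : ∀ a b : ℝ, 0 ≤ a → 0 ≤ b → a^2 ≤ b^2 → a ≤ b := by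
    intro a b ha hb h
    rw [← Real.sqrt_sq ha, ← Real.sqrt_sq hb]
    exact Real.sqrt_le_sqrt h
  have hδ'sq : δ'^2 = 2 * δ^2 := by rw [← hδ'eq, mul_pow, hsq2]; ring
  obtain ⟨ιE, hcE, U, hUcov, hUdiam, hUsum⟩ := hE' δ hδpos hδE
  obtain ⟨d, hofd⟩ : ∃ d : ιE → ℝ, ∀ i, ENNReal.ofReal (d i) = EMetric.diam (U i) := by
    refine ⟨fun i => (EMetric.diam (U i)).toReal, fun i => ENNReal.ofReal_toReal ?_⟩
    exact ((hUdiam i).2.trans_lt ENNReal.ofReal_lt_top).ne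
  have hd0 : ∀ i, 0 ≤ d i := by
    intro i
    by_contra h
    have := hofd i
    rw [ENNReal.ofReal_eq_zero.2 (by linarith)] at this
    have h2 := (hUdiam i).1
    rw [← this] at h2
    simp only [nonpos_iff_eq_zero, ENNReal.ofReal_eq_zero] at h2
    nlinarith [Real.rpow_pos_of_pos hδpos (1/θ)]
  have hd_lb : ∀ i, δ ^ (1/θ) ≤ d i := by
    intro i
    have h := (hUdiam i).1
    rw [← hofd i] at h
    exact (ENNReal.ofReal_le_ofReal_iff (hd0 i)).1 h
  have hd_ub : ∀ i, d i ≤ δ := by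
    intro i
    have h := (hUdiam i).2
    rw [← hofd i] at h
    exact (ENNReal.ofReal_le_ofReal_iff hδpos.le).1 h
  have hdpos : ∀ i, 0 < d i := fun i => lt_of_lt_of_le (Real.rpow_pos_of_pos hδpos _) (hd_lb i)
  obtain ⟨lo, hlodef⟩ : ∃ lo : ℝ, lo = δ' ^ (1/θ) := ⟨_, rfl⟩
  have hlopos : 0 < lo := hlodef ▸ Real.rpow_pos_of_pos hδ'0 _
  have hloδ' : lo ≤ δ' := by
    rw [hlodef]
    calc δ' ^ (1/θ) ≤ δ' ^ (1:ℝ) := Real.rpow_le_rpow_of_exponent_ge hδ'0 hδ'1 hθinv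
      _ = δ' := Real.rpow_one δ'
  have hlo_le : ∀ i, lo ≤ A * d i := by
    intro i
    have h1 : lo = A * δ ^ ((1:ℝ)/θ) := by
      rw [hlodef, ← hδ'eq, mul_comm δ (Real.sqrt 2), Real.mul_rpow hsqrt2.le hδpos.le, hAval]
    rw [h1]
    exact mul_le_mul_of_nonneg_left (hd_lb i) hA0.le
  obtain ⟨r, hrsq, hrpos⟩ : ∃ r : ιE → ℝ,
      (∀ i, (r i)^2 = max ((d i)^2) (lo^2 - (d i)^2)) ∧ (∀ i, 0 < r i) := by
    refine ⟨fun i => Real.sqrt (max ((d i)^2) (lo^2 - (d i)^2)), fun i => ?_, fun i => ?_⟩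
    · exact Real.sq_sqrt (le_max_of_le_left (by positivity))
    · exact Real.sqrt_pos.2 (lt_max_of_lt_left (pow_pos (hdpos i) 2))
  have hd_le_r : ∀ i, d i ≤ r i := by
    intro i
    refine sqle _ _ (hd0 i) (hrpos i).le ?_
    rw [hrsq i]
    exact le_max_left _ _
  have hr_ub : ∀ i, r i ≤ δ' := by
    intro i
    refine sqle _ _ (hrpos i).le hδ'0.le ?_
    rw [hrsq i]
    refine max_le (pow_le_pow_left₀ (hd0 i) ((hd_ub i).trans hδδ') 2) ?_
    have h1 := pow_le_pow_left₀ hlopos.le hloδ' 2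
    have h2 := sq_nonneg (d i)
    linarith
  have hr_le : ∀ i, r i ≤ A * d i := by
    intro i
    refine sqle _ _ (hrpos i).le (mul_nonneg hA0.le (hd0 i)) ?_
    rw [hrsq i]
    refine max_le (pow_le_pow_left₀ (hd0 i) (le_mul_of_one_le_left (hd0 i) hA1) 2) ?_
    have h1 := pow_le_pow_left₀ hlopos.le (hlo_le i) 2
    have h2 := sq_nonneg (d i)
    linarith
  have hrF : ∀ i, r i ≤ δF := fun i => (hr_ub i).trans hδ'F
  have hVex := fun i => hF' (r i) (hrpos i) (hrF i)
  choose ιF hcF V hVcov hVdiam hVsum using hVex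
  refine ⟨Σ i, ιF i, inferInstance, fun p => LpProd (U p.1) (V p.1 p.2), ?_, ?_, ?_⟩
  · rintro z ⟨hz1, hz2⟩
    obtain ⟨i, hi⟩ := Set.mem_iUnion.1 (hUcov hz1)
    obtain ⟨j, hj⟩ := Set.mem_iUnion.1 (hVcov i hz2)
    exact Set.mem_iUnion.2 ⟨⟨i, j⟩, ⟨hi, hj⟩⟩
  · rintro ⟨i, j⟩
    have hUne : (U i).Nonempty := by
      rcases Set.eq_empty_or_nonempty (U i) with h | h
      · exfalso
        have h2 := (hUdiam i).1
        rw [h, ediam_alias_eq, EMetric.diam_empty, nonpos_iff_eq_zero, ENNReal.ofReal_eq_zero] at h2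
        linarith [Real.rpow_pos_of_pos hδpos (1/θ)]
      · exact h
    have hVne : (V i j).Nonempty := by
      rcases Set.eq_empty_or_nonempty (V i j) with h | h
      · exfalso
        have h2 := hVdiam i j
        rw [h, ediam_alias_eq, EMetric.diam_empty] at h2
        have h0 := ENNReal.ofReal_eq_zero.1 h2.symm
        linarith [hrpos i]
      · exact h
    constructor
    · -- lower bound
      refine le_trans ?_ (le_diam_LpProd hUne hVne)
      rw [← hofd i, hVdiam i j, ofReal_rpow (hdpos i), ofReal_rpow (hrpos i),
        ← ENNReal.ofReal_add (Real.rpow_nonneg (hd0 i) _) (Real.rpow_nonneg (hrpos i).le _),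
        ofReal_rpow (add_pos (Real.rpow_pos_of_pos (hdpos i) _) (Real.rpow_pos_of_pos (hrpos i) _))]
      refine ENNReal.ofReal_le_ofReal ?_
      rw [show ((1:ℝ)/2) = ((2:ℝ)⁻¹) by norm_num,
        Real.le_rpow_inv_iff_of_pos (Real.rpow_pos_of_pos hδ'0 _).le
          (add_pos (Real.rpow_pos_of_pos (hdpos i) _) (Real.rpow_pos_of_pos (hrpos i) _)).le
          (by norm_num)]
      have h1 : (δ' ^ (1/θ)) ^ (2:ℝ) = lo^2 := by
        rw [← hlodef, show (2:ℝ) = ((2:ℕ):ℝ) by norm_num, Real.rpow_natCast]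
      have h2 : d i ^ (2:ℝ) = (d i)^2 := by
        rw [show (2:ℝ) = ((2:ℕ):ℝ) by norm_num, Real.rpow_natCast]
      have h3 : r i ^ (2:ℝ) = (r i)^2 := by
        rw [show (2:ℝ) = ((2:ℕ):ℝ) by norm_num, Real.rpow_natCast]
      rw [h1, h2, h3, hrsq i]
      linarith [le_max_right ((d i)^2) (lo^2 - (d i)^2)]
    · -- upper bound
      refine le_trans (diam_LpProd_le _ _) ?_
      rw [← hofd i, hVdiam i j, ofReal_rpow (hdpos i), ofReal_rpow (hrpos i),
        ← ENNReal.ofReal_add (Real.rpow_nonneg (hd0 i) _) (Real.rpow_nonneg (hrpos i).le _),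
        ofReal_rpow (add_pos (Real.rpow_pos_of_pos (hdpos i) _) (Real.rpow_pos_of_pos (hrpos i) _))]
      refine ENNReal.ofReal_le_ofReal ?_
      rw [show ((1:ℝ)/2) = ((2:ℝ)⁻¹) by norm_num,
        Real.rpow_inv_le_iff_of_pos
          (add_pos (Real.rpow_pos_of_pos (hdpos i) _) (Real.rpow_pos_of_pos (hrpos i) _)).le
          hδ'0.le (by norm_num)]
      have h2 : d i ^ (2:ℝ) = (d i)^2 := by
        rw [show (2:ℝ) = ((2:ℕ):ℝ) by norm_num, Real.rpow_natCast]
      have h3 : r i ^ (2:ℝ) = (r i)^2 := by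
        rw [show (2:ℝ) = ((2:ℕ):ℝ) by norm_num, Real.rpow_natCast]
      have h4 : δ' ^ (2:ℝ) = δ'^2 := by
        rw [show (2:ℝ) = ((2:ℕ):ℝ) by norm_num, Real.rpow_natCast]
      rw [h2, h3, h4, hrsq i]
      rcases le_total (lo^2 - (d i)^2) ((d i)^2) with h | h
      · rw [max_eq_left h]
        have h5 : (d i)^2 ≤ δ^2 := pow_le_pow_left₀ (hd0 i) (hd_ub i) 2
        linarith
      · rw [max_eq_right h]
        have h5 := pow_le_pow_left₀ hlopos.le hloδ' 2
        linarith
  · -- sum bound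
    rw [ENNReal.tsum_sigma']
    have hinner : ∀ i, (∑' j, EMetric.diam (LpProd (U i) (V i j)) ^ (s+t))
        ≤ ENNReal.ofReal ((Real.sqrt 2)^(s+t) * (A^s * (ε/Cst))) * EMetric.diam (U i) ^ s := by
      intro i
      have hstep : ∀ j, EMetric.diam (LpProd (U i) (V i j)) ^ (s+t)
          ≤ ENNReal.ofReal ((Real.sqrt 2)^(s+t) * r i ^ s) * EMetric.diam (V i j) ^ t := by
        intro j
        have hD : EMetric.diam (LpProd (U i) (V i j)) ≤ ENNReal.ofReal (Real.sqrt 2 * r i) :=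
          diam_LpProd_le_ofReal (hdpos i) (hrpos i) (le_of_eq (hofd i).symm)
            (le_of_eq (hVdiam i j)) (hd_le_r i)
        calc EMetric.diam (LpProd (U i) (V i j)) ^ (s+t)
            ≤ ENNReal.ofReal (Real.sqrt 2 * r i) ^ (s+t) :=
              ENNReal.rpow_le_rpow hD (by linarith)
          _ = ENNReal.ofReal ((Real.sqrt 2 * r i) ^ (s+t)) := ofReal_rpow (mul_pos hsqrt2 (hrpos i)) _
          _ = ENNReal.ofReal ((Real.sqrt 2)^(s+t) * (r i ^ s * r i ^ t)) := by
              rw [Real.mul_rpow hsqrt2.le (hrpos i).le, ← Real.rpow_add (hrpos i)]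
          _ = ENNReal.ofReal ((Real.sqrt 2)^(s+t) * r i ^ s) * ENNReal.ofReal (r i ^ t) := by
              rw [← ENNReal.ofReal_mul (mul_nonneg (Real.rpow_nonneg hsqrt2.le _) (Real.rpow_nonneg (hrpos i).le _)), mul_assoc]
          _ = ENNReal.ofReal ((Real.sqrt 2)^(s+t) * r i ^ s) * EMetric.diam (V i j) ^ t := by
              rw [hVdiam i j, ofReal_rpow (hrpos i)]
      calc (∑' j, EMetric.diam (LpProd (U i) (V i j)) ^ (s+t))
          ≤ ∑' j, ENNReal.ofReal ((Real.sqrt 2)^(s+t) * r i ^ s) * EMetric.diam (V i j) ^ t :=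
            ENNReal.tsum_le_tsum hstep
        _ = ENNReal.ofReal ((Real.sqrt 2)^(s+t) * r i ^ s) * ∑' j, EMetric.diam (V i j) ^ t :=
            ENNReal.tsum_mul_left
        _ ≤ ENNReal.ofReal ((Real.sqrt 2)^(s+t) * r i ^ s) * ENNReal.ofReal (ε/Cst) :=
            mul_le_mul_right (hVsum i) _
        _ ≤ ENNReal.ofReal ((Real.sqrt 2)^(s+t) * (A * d i) ^ s) * ENNReal.ofReal (ε/Cst) := by
            refine mul_le_mul_left (ENNReal.ofReal_le_ofReal ?_) _
            have h5 : r i ^ s ≤ (A * d i)^s := Real.rpow_le_rpow (hrpos i).le (hr_le i) hs0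
            have h6 : (0:ℝ) < (Real.sqrt 2)^(s+t) := Real.rpow_pos_of_pos hsqrt2 _
            exact mul_le_mul_of_nonneg_left h5 h6.le
        _ = ENNReal.ofReal ((Real.sqrt 2)^(s+t) * (A^s * (ε/Cst))) * EMetric.diam (U i) ^ s := by
            rw [← hofd i, ofReal_rpow (hdpos i),
              ← ENNReal.ofReal_mul (mul_nonneg (Real.rpow_nonneg hsqrt2.le _) (Real.rpow_nonneg (mul_nonneg hA0.le (hd0 i)) _)),
              ← ENNReal.ofReal_mul (mul_nonneg (Real.rpow_nonneg hsqrt2.le _) (mul_nonneg (Real.rpow_nonneg hA0.le _) (div_nonneg hε.le hCst.le)))]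
            congr 1
            rw [Real.mul_rpow hA0.le (hdpos i).le]
            ring
    calc ∑' i, ∑' j, EMetric.diam (LpProd (U i) (V i j)) ^ (s+t)
        ≤ ∑' i, ENNReal.ofReal ((Real.sqrt 2)^(s+t) * (A^s * (ε/Cst))) * EMetric.diam (U i) ^ s :=
          ENNReal.tsum_le_tsum hinner
      _ = ENNReal.ofReal ((Real.sqrt 2)^(s+t) * (A^s * (ε/Cst))) * ∑' i, EMetric.diam (U i) ^ s :=
          ENNReal.tsum_mul_left
      _ ≤ ENNReal.ofReal ((Real.sqrt 2)^(s+t) * (A^s * (ε/Cst))) * ENNReal.ofReal 1 :=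
          mul_le_mul_right hUsum _
      _ = ENNReal.ofReal ((Real.sqrt 2)^(s+t) * (A^s * (ε/Cst)) * 1) :=
          (ENNReal.ofReal_mul (mul_nonneg (Real.rpow_nonneg hsqrt2.le _) (mul_nonneg (Real.rpow_nonneg hA0.le _) (div_nonneg hε.le hCst.le)))).symm
      _ ≤ ENNReal.ofReal ε := by
          refine ENNReal.ofReal_le_ofReal (le_of_eq ?_)
          rw [mul_one, show (Real.sqrt 2)^(s+t) * (A^s * (ε/Cst)) = ((Real.sqrt 2)^(s+t) * A^s) * (ε/Cst) by ring,
            ← hCstdef]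
          field_simp

lemma main_hcov {E : Set X} {F : Set Y} {s t : ℝ} (hEne : E.Nonempty)
    (hs0 : 0 ≤ s) (ht0 : 0 ≤ t)
    (hsE : ∀ ε > (0:ℝ), HCov E s ε)
    (htF : ∀ ε > (0:ℝ), ∃ δ₀ > (0:ℝ), ∀ δ, 0 < δ → δ ≤ δ₀ → EqCov F t δ ε) :
    ∀ ε > (0:ℝ), HCov (LpProd E F) (s+t) ε := by
  have hsqrt2 : (0:ℝ) < Real.sqrt 2 := by positivity
  have hspos : 0 < s := by
    rcases eq_or_lt_of_le hs0 with h | h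
    · exfalso
      obtain ⟨ι, hι, U, hUcov, hUsum⟩ := hsE (1/2) (by norm_num)
      rcases isEmpty_or_nonempty ι with hi | hi
      · obtain ⟨x, hx⟩ := hEne
        have hmem := hUcov hx
        rw [Set.iUnion_of_empty] at hmem
        exact Set.notMem_empty _ hmem
      · obtain ⟨i⟩ := hi
        have h1 : (1:ℝ≥0∞) ≤ ∑' i, EMetric.diam (U i) ^ s := by
          have he : EMetric.diam (U i) ^ s = 1 := by rw [← h, ENNReal.rpow_zero]
          calc (1:ℝ≥0∞) = EMetric.diam (U i) ^ s := he.symm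
            _ ≤ _ := ENNReal.le_tsum i
        have h2 : (ENNReal.ofReal (1/2) : ℝ≥0∞) < 1 := by
          rw [ENNReal.ofReal_lt_one]
          norm_num
        exact absurd (h1.trans hUsum) (not_le.2 h2)
    · exact h
  intro ε hε
  obtain ⟨x, hxdef⟩ : ∃ x : ℝ, x = (1/2:ℝ) ^ s := ⟨_, rfl⟩
  have hx0 : 0 < x := hxdef ▸ Real.rpow_pos_of_pos (by norm_num) s
  have hx1 : x < 1 := hxdef ▸ Real.rpow_lt_one (by norm_num) (by norm_num) hspos
  obtain ⟨G, hGdef⟩ : ∃ G : ℝ, G = 1 + (1 - x)⁻¹ := ⟨_, rfl⟩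
  have hG0 : 0 < G := by rw [hGdef]; have : 0 < (1-x)⁻¹ := inv_pos.2 (by linarith); linarith
  obtain ⟨Cst, hCstdef⟩ : ∃ C : ℝ, C = (Real.sqrt 2)^(s+t) * G := ⟨_, rfl⟩
  have hCst : 0 < Cst := by rw [hCstdef]; positivity
  obtain ⟨δF, hδFpos, hF'⟩ := htF (ε / Cst) (by positivity)
  obtain ⟨β, hβdef⟩ : ∃ β : ℝ, β = min δF 1 := ⟨_, rfl⟩
  have hβpos : 0 < β := by rw [hβdef]; positivity
  have hβδF : β ≤ δF := hβdef ▸ min_le_left _ _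
  have hβ1 : β ≤ 1 := hβdef ▸ min_le_right _ _
  obtain ⟨ι, hι, U, hUcov, hUsum⟩ := hsE (β ^ s) (Real.rpow_pos_of_pos hβpos s)
  have hdle : ∀ i, EMetric.diam (U i) ≤ ENNReal.ofReal β := by
    intro i
    have h1 : EMetric.diam (U i) ^ s ≤ ENNReal.ofReal β ^ s := by
      rw [ofReal_rpow hβpos]
      exact le_trans (ENNReal.le_tsum i) hUsum
    have h2 := ENNReal.rpow_le_rpow h1 (by positivity : (0:ℝ) ≤ 1/s)
    rwa [← ENNReal.rpow_mul, ← ENNReal.rpow_mul, mul_one_div_cancel hspos.ne',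
      ENNReal.rpow_one, ENNReal.rpow_one] at h2
  obtain ⟨d, hofd, hd0⟩ : ∃ d : ι → ℝ, (∀ i, ENNReal.ofReal (d i) = EMetric.diam (U i)) ∧
      (∀ i, 0 ≤ d i) := by
    refine ⟨fun i => (EMetric.diam (U i)).toReal, fun i => ENNReal.ofReal_toReal ?_,
      fun i => ENNReal.toReal_nonneg⟩
    exact ((hdle i).trans_lt ENNReal.ofReal_lt_top).ne
  have hd_ub : ∀ i, d i ≤ β := by
    intro i
    have h := hdle i
    rw [← hofd i] at h
    exact (ENNReal.ofReal_le_ofReal_iff hβpos.le).1 h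
  obtain ⟨f, hf⟩ : ∃ f : ι → ℕ, Function.Injective f := (countable_iff_exists_injective ι).1 hι
  obtain ⟨γ, hγdef⟩ : ∃ γ : ι → ℝ, ∀ i, γ i = β * (1/2:ℝ)^(f i) := ⟨_, fun i => rfl⟩
  have hγpos : ∀ i, 0 < γ i := by intro i; rw [hγdef i]; positivity
  have hγβ : ∀ i, γ i ≤ β := by
    intro i
    rw [hγdef i]
    calc β * (1/2:ℝ)^(f i) ≤ β * 1 := by
          refine mul_le_mul_of_nonneg_left ?_ hβpos.le
          exact pow_le_one₀ (by norm_num) (by norm_num)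
      _ = β := mul_one β
  obtain ⟨r, hrdef⟩ : ∃ r : ι → ℝ, ∀ i, r i = max (d i) (γ i) := ⟨_, fun i => rfl⟩
  have hrpos : ∀ i, 0 < r i := fun i => by rw [hrdef i]; exact lt_max_of_lt_right (hγpos i)
  have hr_ub : ∀ i, r i ≤ β := fun i => by rw [hrdef i]; exact max_le (hd_ub i) (hγβ i)
  have hd_le_r : ∀ i, d i ≤ r i := fun i => by rw [hrdef i]; exact le_max_left _ _
  have hVex := fun i => hF' (r i) (hrpos i) ((hr_ub i).trans hβδF)
  choose ιF hcF V hVcov hVdiam hVsum using hVex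
  refine ⟨Σ i, ιF i, inferInstance, fun p => LpProd (U p.1) (V p.1 p.2), ?_, ?_⟩
  · rintro z ⟨hz1, hz2⟩
    obtain ⟨i, hi⟩ := Set.mem_iUnion.1 (hUcov hz1)
    obtain ⟨j, hj⟩ := Set.mem_iUnion.1 (hVcov i hz2)
    exact Set.mem_iUnion.2 ⟨⟨i, j⟩, ⟨hi, hj⟩⟩
  · rw [ENNReal.tsum_sigma']
    have hor : ∀ (c:ℝ), 0 ≤ c → ENNReal.ofReal (c ^ s) = ENNReal.ofReal c ^ s := by
      intro c hc
      rcases eq_or_lt_of_le hc with h | h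
      · rw [← h, Real.zero_rpow hspos.ne', ENNReal.ofReal_zero, ENNReal.zero_rpow_of_pos hspos]
      · rw [ofReal_rpow h]
    have hinner : ∀ i, (∑' j, EMetric.diam (LpProd (U i) (V i j)) ^ (s+t))
        ≤ ENNReal.ofReal ((Real.sqrt 2)^(s+t) * (ε/Cst)) * ENNReal.ofReal (r i ^ s) := by
      intro i
      have hstep : ∀ j, EMetric.diam (LpProd (U i) (V i j)) ^ (s+t)
          ≤ ENNReal.ofReal ((Real.sqrt 2)^(s+t) * r i ^ s) * EMetric.diam (V i j) ^ t := by
        intro j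
        have hD : EMetric.diam (LpProd (U i) (V i j)) ≤ ENNReal.ofReal (Real.sqrt 2 * r i) := by
          refine diam_LpProd_le_ofReal (hrpos i) (hrpos i) ?_ (le_of_eq (hVdiam i j)) le_rfl
          rw [← hofd i]
          exact ENNReal.ofReal_le_ofReal (hd_le_r i)
        calc EMetric.diam (LpProd (U i) (V i j)) ^ (s+t)
            ≤ ENNReal.ofReal (Real.sqrt 2 * r i) ^ (s+t) :=
              ENNReal.rpow_le_rpow hD (by linarith)
          _ = ENNReal.ofReal ((Real.sqrt 2 * r i) ^ (s+t)) :=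
              ofReal_rpow (mul_pos hsqrt2 (hrpos i)) _
          _ = ENNReal.ofReal ((Real.sqrt 2)^(s+t) * (r i ^ s * r i ^ t)) := by
              rw [Real.mul_rpow hsqrt2.le (hrpos i).le, ← Real.rpow_add (hrpos i)]
          _ = ENNReal.ofReal ((Real.sqrt 2)^(s+t) * r i ^ s) * ENNReal.ofReal (r i ^ t) := by
              rw [← ENNReal.ofReal_mul (mul_nonneg (Real.rpow_nonneg hsqrt2.le _)
                (Real.rpow_nonneg (hrpos i).le _)), mul_assoc]
          _ = ENNReal.ofReal ((Real.sqrt 2)^(s+t) * r i ^ s) * EMetric.diam (V i j) ^ t := by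
              rw [hVdiam i j, ofReal_rpow (hrpos i)]
      calc (∑' j, EMetric.diam (LpProd (U i) (V i j)) ^ (s+t))
          ≤ ∑' j, ENNReal.ofReal ((Real.sqrt 2)^(s+t) * r i ^ s) * EMetric.diam (V i j) ^ t :=
            ENNReal.tsum_le_tsum hstep
        _ = ENNReal.ofReal ((Real.sqrt 2)^(s+t) * r i ^ s) * ∑' j, EMetric.diam (V i j) ^ t :=
            ENNReal.tsum_mul_left
        _ ≤ ENNReal.ofReal ((Real.sqrt 2)^(s+t) * r i ^ s) * ENNReal.ofReal (ε/Cst) :=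
            mul_le_mul_right (hVsum i) _
        _ = ENNReal.ofReal ((Real.sqrt 2)^(s+t) * (ε/Cst)) * ENNReal.ofReal (r i ^ s) := by
            rw [← ENNReal.ofReal_mul (mul_nonneg (Real.rpow_nonneg hsqrt2.le _)
              (Real.rpow_nonneg (hrpos i).le _)),
              ← ENNReal.ofReal_mul (mul_nonneg (Real.rpow_nonneg hsqrt2.le _)
              (div_nonneg hε.le hCst.le))]
            congr 1
            ring
    have hsum_r : ∑' i, ENNReal.ofReal (r i ^ s) ≤ ENNReal.ofReal G := by
      have hpt : ∀ i, ENNReal.ofReal (r i ^ s) ≤ ENNReal.ofReal (d i ^ s) + ENNReal.ofReal (γ i ^ s) := by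
        intro i
        rw [← ENNReal.ofReal_add (Real.rpow_nonneg (hd0 i) _) (Real.rpow_nonneg (hγpos i).le _)]
        refine ENNReal.ofReal_le_ofReal ?_
        rw [hrdef i]
        rcases le_total (d i) (γ i) with h | h
        · rw [max_eq_right h]
          have := Real.rpow_nonneg (hd0 i) s
          linarith
        · rw [max_eq_left h]
          have := Real.rpow_nonneg (hγpos i).le s
          linarith
      have hsum_d : ∑' i, ENNReal.ofReal (d i ^ s) ≤ ENNReal.ofReal 1 := by
        have heq : ∀ i, ENNReal.ofReal (d i ^ s) = EMetric.diam (U i) ^ s := by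
          intro i
          rw [hor (d i) (hd0 i), hofd i]
        rw [tsum_congr heq]
        refine hUsum.trans (ENNReal.ofReal_le_ofReal ?_)
        exact Real.rpow_le_one hβpos.le hβ1 hs0
      have hsum_γ : ∑' i, ENNReal.ofReal (γ i ^ s) ≤ ENNReal.ofReal ((1-x)⁻¹) := by
        have heq : ∀ i, ENNReal.ofReal (γ i ^ s) = ENNReal.ofReal (β ^ s) * ENNReal.ofReal x ^ (f i) := by
          intro i
          rw [hγdef i]
          have h1 : (β * (1/2:ℝ)^(f i)) ^ s = β ^ s * x ^ (f i) := by
            rw [Real.mul_rpow hβpos.le (by positivity), hxdef]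
            congr 1
            rw [← Real.rpow_natCast ((1/2:ℝ)) (f i), ← Real.rpow_mul (by norm_num : (0:ℝ) ≤ 1/2),
              mul_comm, Real.rpow_mul (by norm_num : (0:ℝ) ≤ 1/2), Real.rpow_natCast]
          rw [h1, ENNReal.ofReal_mul (Real.rpow_nonneg hβpos.le _), ENNReal.ofReal_pow hx0.le]
        rw [tsum_congr heq, ENNReal.tsum_mul_left]
        have hgeo : ∑' i, ENNReal.ofReal x ^ (f i) ≤ (1 - ENNReal.ofReal x)⁻¹ := by
          rw [← ENNReal.tsum_geometric]
          exact ENNReal.summable.tsum_le_tsum_of_inj f hf (fun c _ => zero_le) (fun i => le_rfl)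
            ENNReal.summable
        have hβs1 : ENNReal.ofReal (β ^ s) ≤ 1 := by
          rw [show (1:ℝ≥0∞) = ENNReal.ofReal 1 by simp]
          exact ENNReal.ofReal_le_ofReal (Real.rpow_le_one hβpos.le hβ1 hs0)
        calc ENNReal.ofReal (β^s) * ∑' i, ENNReal.ofReal x ^ (f i)
            ≤ 1 * (1 - ENNReal.ofReal x)⁻¹ := mul_le_mul' hβs1 hgeo
          _ = (1 - ENNReal.ofReal x)⁻¹ := one_mul _
          _ = ENNReal.ofReal ((1-x)⁻¹) := by
              rw [← ENNReal.ofReal_one, ← ENNReal.ofReal_sub 1 hx0.le,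
                ENNReal.ofReal_inv_of_pos (by linarith)]
      calc ∑' i, ENNReal.ofReal (r i ^ s)
          ≤ ∑' i, (ENNReal.ofReal (d i ^ s) + ENNReal.ofReal (γ i ^ s)) := ENNReal.tsum_le_tsum hpt
        _ = (∑' i, ENNReal.ofReal (d i ^ s)) + ∑' i, ENNReal.ofReal (γ i ^ s) := ENNReal.tsum_add
        _ ≤ ENNReal.ofReal 1 + ENNReal.ofReal ((1-x)⁻¹) := add_le_add hsum_d hsum_γ
        _ = ENNReal.ofReal G := by
            rw [← ENNReal.ofReal_add (by norm_num) (inv_nonneg.2 (by linarith)), hGdef]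
    calc ∑' i, ∑' j, EMetric.diam (LpProd (U i) (V i j)) ^ (s+t)
        ≤ ∑' i, ENNReal.ofReal ((Real.sqrt 2)^(s+t) * (ε/Cst)) * ENNReal.ofReal (r i ^ s) :=
          ENNReal.tsum_le_tsum hinner
      _ = ENNReal.ofReal ((Real.sqrt 2)^(s+t) * (ε/Cst)) * ∑' i, ENNReal.ofReal (r i ^ s) :=
          ENNReal.tsum_mul_left
      _ ≤ ENNReal.ofReal ((Real.sqrt 2)^(s+t) * (ε/Cst)) * ENNReal.ofReal G :=
          mul_le_mul_right hsum_r _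
      _ = ENNReal.ofReal ((Real.sqrt 2)^(s+t) * (ε/Cst) * G) :=
          (ENNReal.ofReal_mul (mul_nonneg (Real.rpow_nonneg hsqrt2.le _)
            (div_nonneg hε.le hCst.le))).symm
      _ ≤ ENNReal.ofReal ε := by
          refine ENNReal.ofReal_le_ofReal (le_of_eq ?_)
          rw [show (Real.sqrt 2)^(s+t) * (ε/Cst) * G = ((Real.sqrt 2)^(s+t) * G) * (ε/Cst) by ring,
            ← hCstdef]
          field_simp

section Transfer
variable {Z : Type} [PseudoEMetricSpace Z]

lemma HCov_image {f : X → Z} (hf : Isometry f) {G : Set Z} {E : Set X}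
    (hG : G ⊆ f '' E) {s ε : ℝ} (h : HCov E s ε) : HCov G s ε := by
  obtain ⟨ι, hι, U, hcov, hsum⟩ := h
  refine ⟨ι, hι, fun i => f '' (U i), ?_, ?_⟩
  · intro z hz
    obtain ⟨x, hx, rfl⟩ := hG hz
    obtain ⟨i, hi⟩ := Set.mem_iUnion.1 (hcov hx)
    exact Set.mem_iUnion.2 ⟨i, Set.mem_image_of_mem f hi⟩
  · refine le_trans (le_of_eq (tsum_congr fun i => by rw [ediam_alias_eq, hf.ediam_image]; rfl)) hsum

lemma ICov_image {f : X → Z} (hf : Isometry f) {G : Set Z} {E : Set X}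
    (hG : G ⊆ f '' E) {s lo hi ε : ℝ} (h : ICov E s lo hi ε) : ICov G s lo hi ε := by
  obtain ⟨ι, hι, U, hcov, hdiam, hsum⟩ := h
  refine ⟨ι, hι, fun i => f '' (U i), ?_, fun i => by rw [ediam_alias_eq, hf.ediam_image]; exact hdiam i, ?_⟩
  · intro z hz
    obtain ⟨x, hx, rfl⟩ := hG hz
    obtain ⟨i, hi⟩ := Set.mem_iUnion.1 (hcov hx)
    exact Set.mem_iUnion.2 ⟨i, Set.mem_image_of_mem f hi⟩
  · refine le_trans (le_of_eq (tsum_congr fun i => by rw [ediam_alias_eq, hf.ediam_image]; rfl)) hsum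

lemma EqCov_image {f : X → Z} (hf : Isometry f) {G : Set Z} {E : Set X}
    (hG : G ⊆ f '' E) {s δ ε : ℝ} (h : EqCov E s δ ε) : EqCov G s δ ε := by
  obtain ⟨ι, hι, U, hcov, hdiam, hsum⟩ := h
  refine ⟨ι, hι, fun i => f '' (U i), ?_, fun i => by rw [ediam_alias_eq, hf.ediam_image]; exact hdiam i, ?_⟩
  · intro z hz
    obtain ⟨x, hx, rfl⟩ := hG hz
    obtain ⟨i, hi⟩ := Set.mem_iUnion.1 (hcov hx)
    exact Set.mem_iUnion.2 ⟨i, Set.mem_image_of_mem f hi⟩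
  · refine le_trans (le_of_eq (tsum_congr fun i => by rw [ediam_alias_eq, hf.ediam_image]; rfl)) hsum

end Transfer

lemma isom_fst [Subsingleton Y] : Isometry (fun z : WithLp 2 (X × Y) => z.fst) := by
  intro z w
  rw [edist2 z w, Subsingleton.elim z.snd w.snd, edist_self,
    ENNReal.zero_rpow_of_pos (by norm_num), add_zero, ← ENNReal.rpow_mul,
    show (2:ℝ) * (1/2) = 1 by norm_num, ENNReal.rpow_one]

lemma isom_mk_left (y0 : Y) :
    Isometry (fun x : X => (WithLp.equiv 2 (X × Y)).symm (x, y0)) := by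
  intro a b
  rw [edist2]
  simp only [WithLp.equiv_symm_apply, WithLp.toLp_fst, WithLp.toLp_snd]
  rw [edist_self, ENNReal.zero_rpow_of_pos (by norm_num), add_zero, ← ENNReal.rpow_mul,
    show (2:ℝ) * (1/2) = 1 by norm_num, ENNReal.rpow_one]

lemma isom_mk_right (x0 : X) :
    Isometry (fun y : Y => (WithLp.equiv 2 (X × Y)).symm (x0, y)) := by
  intro a b
  rw [edist2]
  simp only [WithLp.equiv_symm_apply, WithLp.toLp_fst, WithLp.toLp_snd]
  rw [edist_self, ENNReal.zero_rpow_of_pos (by norm_num), zero_add, ← ENNReal.rpow_mul,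
    show (2:ℝ) * (1/2) = 1 by norm_num, ENNReal.rpow_one]

lemma LpProd_sub_mk_left [Subsingleton Y] {E : Set X} {F : Set Y} (y0 : Y) :
    LpProd E F ⊆ (fun x : X => (WithLp.equiv 2 (X × Y)).symm (x, y0)) '' E := by
  rintro z ⟨hz1, _⟩
  refine ⟨z.fst, hz1, ?_⟩
  rw [Subsingleton.elim y0 z.snd]
  rfl

lemma LpProd_sub_mk_right [Subsingleton X] {E : Set X} {F : Set Y} (x0 : X) :
    LpProd E F ⊆ (fun y : Y => (WithLp.equiv 2 (X × Y)).symm (x0, y)) '' F := by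
  rintro z ⟨_, hz2⟩
  refine ⟨z.snd, hz2, ?_⟩
  rw [Subsingleton.elim x0 z.fst]
  rfl

lemma fst_sub_image [Subsingleton Y] {E : Set X} {F : Set Y} (hF : F.Nonempty) :
    E ⊆ (fun z : WithLp 2 (X × Y) => z.fst) '' (LpProd E F) := by
  intro x hx
  obtain ⟨y0, hy0⟩ := hF
  exact ⟨(WithLp.equiv 2 (X × Y)).symm (x, y0), ⟨hx, hy0⟩, rfl⟩

/-- The three dimension sets -/
def ISet {W : Type} [PseudoEMetricSpace W] (E : Set W) (θ : ℝ) : Set ℝ :=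
  {s : ℝ | 0 ≤ s ∧ ∀ ε > 0, ∃ δ₀ > (0:ℝ), ∀ δ : ℝ, 0 < δ → δ ≤ δ₀ →
    ICov E s (δ ^ (1 / θ)) δ ε}

def HSSet {W : Type} [PseudoEMetricSpace W] (E : Set W) : Set ℝ :=
  {s : ℝ | 0 ≤ s ∧ ∀ ε > 0, HCov E s ε}

def BSet {W : Type} [PseudoEMetricSpace W] (F : Set W) : Set ℝ :=
  {s : ℝ | 0 ≤ s ∧ ∀ ε > 0, ∃ δ₀ > (0:ℝ), ∀ δ : ℝ, 0 < δ → δ ≤ δ₀ → EqCov F s δ ε}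

lemma upperIDim_eq_s14 {W : Type} [PseudoEMetricSpace W] (E : Set W) (θ : ℝ) :
    upperIDim E θ = if θ = 0 then sInf (HSSet E) else sInf (ISet E θ) := rfl

lemma upperBoxDim_eq_s14 {W : Type} [PseudoEMetricSpace W] (F : Set W) :
    upperBoxDim F = sInf (BSet F) := rfl

lemma BSet_subset_ISet {W : Type} [PseudoEMetricSpace W] {F : Set W} {θ : ℝ}
    (hθ1 : 0 < θ) (hθ2 : θ ≤ 1) : BSet F ⊆ ISet F θ := by
  rintro t ⟨ht0, ht⟩
  refine ⟨ht0, fun ε hε => ?_⟩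
  obtain ⟨δ₀, hδ₀, h⟩ := ht ε hε
  refine ⟨min δ₀ 1, by positivity, fun δ hδ hδle => ?_⟩
  obtain ⟨ι, hι, U, hcov, hdiam, hsum⟩ := h δ hδ (hδle.trans (min_le_left _ _))
  have hδ1 : δ ≤ 1 := hδle.trans (min_le_right _ _)
  refine ⟨ι, hι, U, hcov, fun i => ⟨?_, le_of_eq (hdiam i)⟩, hsum⟩
  rw [hdiam i]
  refine ENNReal.ofReal_le_ofReal ?_
  calc δ ^ (1/θ) ≤ δ ^ (1:ℝ) :=
        Real.rpow_le_rpow_of_exponent_ge hδ hδ1 (by rw [le_div_iff₀ hθ1]; linarith)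
    _ = δ := Real.rpow_one δ

lemma BSet_subset_HSSet {W : Type} [PseudoEMetricSpace W] {F : Set W} :
    BSet F ⊆ HSSet F := by
  rintro t ⟨ht0, ht⟩
  refine ⟨ht0, fun ε hε => ?_⟩
  obtain ⟨δ₀, hδ₀, h⟩ := ht ε hε
  obtain ⟨ι, hι, U, hcov, _, hsum⟩ := h δ₀ hδ₀ le_rfl
  exact ⟨ι, hι, U, hcov, hsum⟩

lemma csInf_add_le {S T R : Set ℝ} (hS : S.Nonempty) (hT : T.Nonempty)
    (hR0 : ∀ x ∈ R, 0 ≤ x) (h : ∀ s ∈ S, ∀ t ∈ T, s + t ∈ R) :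
    sInf R ≤ sInf S + sInf T := by
  have hRb : BddBelow R := ⟨0, hR0⟩
  have h1 : ∀ s ∈ S, ∀ t ∈ T, sInf R ≤ s + t := fun s hs t ht => csInf_le hRb (h s hs t ht)
  have h3 : sInf R - sInf T ≤ sInf S := by
    refine le_csInf hS fun s hs => ?_
    have h2 : sInf R - s ≤ sInf T := by
      refine le_csInf hT fun t ht => ?_
      linarith [h1 s hs t ht]
    linarith
  linarith

lemma ISet_nonneg {W : Type} [PseudoEMetricSpace W] {E : Set W} {θ : ℝ} :
    ∀ x ∈ ISet E θ, 0 ≤ x := fun _ hx => hx.1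
lemma HSSet_nonneg {W : Type} [PseudoEMetricSpace W] {E : Set W} :
    ∀ x ∈ HSSet E, 0 ≤ x := fun _ hx => hx.1
lemma BSet_nonneg {W : Type} [PseudoEMetricSpace W] {F : Set W} :
    ∀ x ∈ BSet F, 0 ≤ x := fun _ hx => hx.1

end Aux
theorem stmt14 (n m : ℕ) (E : Set (EuclideanSpace ℝ (Fin n))) (F : Set (EuclideanSpace ℝ (Fin m)))
    (hE : Bornology.IsBounded E) (hF : Bornology.IsBounded F)
    (θ : ℝ) (hθ : θ ∈ Set.Icc (0:ℝ) 1) :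
    upperIDim {z : WithLp 2 (EuclideanSpace ℝ (Fin n) × EuclideanSpace ℝ (Fin m)) |
        (WithLp.equiv 2 _ z).1 ∈ E ∧ (WithLp.equiv 2 _ z).2 ∈ F} θ ≤
      upperIDim E θ + upperBoxDim F := by
  show upperIDim (LpProd E F) θ ≤ upperIDim E θ + upperBoxDim F
  have hIdimE_nonneg : 0 ≤ upperIDim E θ := by
    rw [upperIDim_eq_s14]
    split
    · exact Real.sInf_nonneg HSSet_nonneg
    · exact Real.sInf_nonneg ISet_nonneg
  have hBox_nonneg : 0 ≤ upperBoxDim F := by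
    rw [upperBoxDim_eq_s14]
    exact Real.sInf_nonneg BSet_nonneg
  rcases Set.eq_empty_or_nonempty E with hEe | hEne
  · have hPRe : LpProd E F = ∅ := by
      ext z
      simp [LpProd, hEe]
    have hle : upperIDim (LpProd E F) θ ≤ 0 := by
      rw [upperIDim_eq_s14]
      split
      · refine csInf_le ⟨0, HSSet_nonneg⟩ ⟨le_rfl, fun ε hε => ?_⟩
        exact ⟨Empty, inferInstance, fun i => i.elim,
          by rw [hPRe]; exact Set.empty_subset _, by simp⟩
      · refine csInf_le ⟨0, ISet_nonneg⟩ ⟨le_rfl, fun ε hε => ?_⟩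
        exact ⟨1, one_pos, fun δ hδ hδle => ⟨Empty, inferInstance, fun i => i.elim,
          by rw [hPRe]; exact Set.empty_subset _, fun i => i.elim, by simp⟩⟩
    linarith
  rcases Set.eq_empty_or_nonempty F with hFe | hFne
  · have hPRe : LpProd E F = ∅ := by
      ext z
      simp [LpProd, hFe]
    have hle : upperIDim (LpProd E F) θ ≤ 0 := by
      rw [upperIDim_eq_s14]
      split
      · refine csInf_le ⟨0, HSSet_nonneg⟩ ⟨le_rfl, fun ε hε => ?_⟩
        exact ⟨Empty, inferInstance, fun i => i.elim,
          by rw [hPRe]; exact Set.empty_subset _, by simp⟩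
      · refine csInf_le ⟨0, ISet_nonneg⟩ ⟨le_rfl, fun ε hε => ?_⟩
        exact ⟨1, one_pos, fun δ hδ hδle => ⟨Empty, inferInstance, fun i => i.elim,
          by rw [hPRe]; exact Set.empty_subset _, fun i => i.elim, by simp⟩⟩
    linarith
  rcases Nat.eq_zero_or_pos m with hm0 | hm1
  · subst hm0
    haveI hsub : Subsingleton (EuclideanSpace ℝ (Fin 0)) :=
      ⟨fun a b => PiLp.ext fun i => i.elim0⟩
    have hBe : BSet F = ∅ := by
      rw [Set.eq_empty_iff_forall_notMem]
      rintro t ⟨ht0, ht⟩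
      obtain ⟨δ₀, hδ₀, h⟩ := ht 1 one_pos
      obtain ⟨ι, hι, U, hcov, hdiam, _⟩ := h δ₀ hδ₀ le_rfl
      obtain ⟨y, hy⟩ := hFne
      obtain ⟨i, hi⟩ := Set.mem_iUnion.1 (hcov hy)
      have h0 : EMetric.diam (U i) = 0 :=
        EMetric.diam_subsingleton (Set.subsingleton_of_subsingleton)
      rw [hdiam i, ENNReal.ofReal_eq_zero] at h0
      linarith
    have hbox : upperBoxDim F = 0 := by rw [upperBoxDim_eq_s14, hBe, Real.sInf_empty]
    obtain ⟨y0, hy0⟩ := hFne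
    have hset : upperIDim (LpProd E F) θ = upperIDim E θ := by
      rw [upperIDim_eq_s14, upperIDim_eq_s14]
      split
      · congr 1
        ext s
        constructor
        · rintro ⟨h0, h⟩
          exact ⟨h0, fun ε hε => HCov_image isom_fst (fst_sub_image ⟨y0, hy0⟩) (h ε hε)⟩
        · rintro ⟨h0, h⟩
          exact ⟨h0, fun ε hε =>
            HCov_image (isom_mk_left y0) (LpProd_sub_mk_left y0) (h ε hε)⟩
      · congr 1
        ext s
        constructor
        · rintro ⟨h0, h⟩
          refine ⟨h0, fun ε hε => ?_⟩
          obtain ⟨δ₀, hδ₀p, hh⟩ := h ε hε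
          exact ⟨δ₀, hδ₀p, fun δ h1 h2 =>
            ICov_image isom_fst (fst_sub_image ⟨y0, hy0⟩) (hh δ h1 h2)⟩
        · rintro ⟨h0, h⟩
          refine ⟨h0, fun ε hε => ?_⟩
          obtain ⟨δ₀, hδ₀p, hh⟩ := h ε hε
          exact ⟨δ₀, hδ₀p, fun δ h1 h2 =>
            ICov_image (isom_mk_left y0) (LpProd_sub_mk_left y0) (hh δ h1 h2)⟩
    rw [hset, hbox, add_zero]
  have hBF : ((m:ℝ)+1) ∈ BSet F := ⟨by positivity, grid_lemma hm1 F hF⟩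
  rcases Nat.eq_zero_or_pos n with hn0 | hn1
  · subst hn0
    haveI hsub : Subsingleton (EuclideanSpace ℝ (Fin 0)) :=
      ⟨fun a b => PiLp.ext fun i => i.elim0⟩
    obtain ⟨x0, hx0⟩ := hEne
    have hBsub : BSet F ⊆ BSet (LpProd E F) := by
      rintro t ⟨ht0, ht⟩
      refine ⟨ht0, fun ε hε => ?_⟩
      obtain ⟨δ₀, hδ₀p, hh⟩ := ht ε hε
      exact ⟨δ₀, hδ₀p, fun δ h1 h2 =>
        EqCov_image (isom_mk_right x0) (LpProd_sub_mk_right x0) (hh δ h1 h2)⟩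
    have hle : upperIDim (LpProd E F) θ ≤ upperBoxDim F := by
      rw [upperIDim_eq_s14, upperBoxDim_eq_s14]
      split
      · exact csInf_le_csInf ⟨0, HSSet_nonneg⟩ ⟨_, hBF⟩
          (fun s hs => BSet_subset_HSSet (hBsub hs))
      · rename_i hθne
        have hθpos : 0 < θ := lt_of_le_of_ne hθ.1 (Ne.symm hθne)
        exact csInf_le_csInf ⟨0, ISet_nonneg⟩ ⟨_, hBF⟩
          (fun s hs => BSet_subset_ISet hθpos hθ.2 (hBsub hs))
    linarith
  have hBE : ((n:ℝ)+1) ∈ BSet E := ⟨by positivity, grid_lemma hn1 E hE⟩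
  rcases eq_or_ne θ 0 with hθ0 | hθne
  · simp only [upperIDim_eq_s14, upperBoxDim_eq_s14, if_pos hθ0]
    have hSE : ((n:ℝ)+1) ∈ HSSet E := BSet_subset_HSSet hBE
    refine csInf_add_le ⟨_, hSE⟩ ⟨_, hBF⟩ HSSet_nonneg ?_
    rintro s ⟨hs0, hsE⟩ t ⟨ht0, htF⟩
    exact ⟨by linarith, main_hcov hEne hs0 ht0 hsE htF⟩
  · simp only [upperIDim_eq_s14, upperBoxDim_eq_s14, if_neg hθne]
    have hθpos : 0 < θ := lt_of_le_of_ne hθ.1 (Ne.symm hθne)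
    have hSE : ((n:ℝ)+1) ∈ ISet E θ := BSet_subset_ISet hθpos hθ.2 hBE
    refine csInf_add_le ⟨_, hSE⟩ ⟨_, hBF⟩ ISet_nonneg ?_
    rintro s ⟨hs0, hsE⟩ t ⟨ht0, htF⟩
    exact ⟨by linarith, main_icov hθpos hθ.2 hs0 ht0 hsE htF⟩
end

section
/- For p > 0 let F_p = {0} ∪ {k^{-p} : k ∈ ℕ, k ≥ 1} ⊆ ℝ. Then for every θ ∈ [0,1], the lower and upper θ-intermediate dimensions of F_p both equal θ/(p+θ). -/
set_option maxHeartbeats 1000000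


open Set

/-- The set `{0} ∪ {k ^ (-p) : k ∈ ℕ, k ≥ 1}`. -/
noncomputable def Fp (p : ℝ) : Set ℝ :=
  insert 0 {x : ℝ | ∃ k : ℕ, 1 ≤ k ∧ x = (k : ℝ) ^ (-p)}



lemma sInf_eq_of_between {S : Set ℝ} {t : ℝ} (h1 : S ⊆ Ici t) (h2 : Ioi t ⊆ S) :
    sInf S = t := by
  have hne : S.Nonempty := ⟨t + 1, h2 (mem_Ioi.mpr (by linarith))⟩
  have hbdd : BddBelow S := ⟨t, h1⟩
  refine le_antisymm (le_of_forall_pos_le_add fun ε hε => ?_) (le_csInf hne h1)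
  exact csInf_le_of_le hbdd (h2 (mem_Ioi.mpr (by linarith))) le_rfl

lemma gap_lower (p : ℝ) (hp : 0 < p) (m : ℕ) (hm : 1 ≤ m) :
    p * ((m : ℝ) + 1) ^ (-p - 1) ≤ (m : ℝ) ^ (-p) - ((m : ℝ) + 1) ^ (-p) := by
  have hm1 : (1 : ℝ) ≤ (m : ℝ) := by exact_mod_cast hm
  have hlt : (m : ℝ) < (m : ℝ) + 1 := by linarith
  obtain ⟨c, hc, hceq⟩ := exists_hasDerivAt_eq_slope (fun x => x ^ (-p))
    (fun x => (-p) * x ^ (-p - 1)) hlt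
    (fun x hx => by
      have hx0 : x ≠ 0 := by simp only [mem_Icc] at hx; intro h; rw [h] at hx; linarith [hx.1]
      exact (Real.hasDerivAt_rpow_const (Or.inl hx0)).continuousAt.continuousWithinAt)
    (fun x hx => by
      have hx0 : x ≠ 0 := by simp only [mem_Ioo] at hx; intro h; rw [h] at hx; linarith [hx.1]
      exact Real.hasDerivAt_rpow_const (Or.inl hx0))
  simp only [mem_Ioo] at hc
  have hc0 : 0 < c := by linarith
  have h1 : ((m:ℝ)+1) ^ (-p-1) ≤ c ^ (-p-1) :=
    Real.rpow_le_rpow_of_nonpos hc0 (le_of_lt hc.2) (by linarith)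
  have hslope : ((m:ℝ)+1) ^ (-p) - (m:ℝ) ^ (-p) = (-p) * c ^ (-p-1) := by
    have := hceq
    field_simp at this
    linarith [this]
  nlinarith [Real.rpow_pos_of_pos hc0 (-p-1)]

lemma mem_Fp_pow (p : ℝ) (k : ℕ) (hk : 1 ≤ k) : (k : ℝ) ^ (-p) ∈ Fp p :=
  Or.inr ⟨k, hk, rfl⟩

lemma hcov0 (p s ε : ℝ) (hs : 0 < s) : HCov (Fp p) s ε := by
  refine ⟨ℕ, inferInstance, fun n => {if n = 0 then 0 else ((n : ℝ)) ^ (-p)}, ?_, ?_⟩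
  · rintro x (rfl | ⟨k, hk, rfl⟩)
    · exact mem_iUnion.mpr ⟨0, by simp⟩
    · exact mem_iUnion.mpr ⟨k, by rw [mem_singleton_iff, if_neg (by omega : ¬ k = 0)]⟩
  · simp only [EMetric.diam, EMetric.diam_singleton, ENNReal.zero_rpow_of_pos hs, tsum_zero]
    exact zero_le

lemma telescope (p : ℝ) (hp : 0 < p) (K : ℕ) :
    ∀ j k : ℕ, K + 1 ≤ j → j ≤ k → k ≤ 2 * K →
      ((k : ℝ) - (j : ℝ)) * (p * ((2 * K : ℕ) : ℝ) ^ (-p - 1)) ≤ (j : ℝ) ^ (-p) - (k : ℝ) ^ (-p) := by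
  intro j k hj hjk hk2
  induction k, hjk using Nat.le_induction with
  | base => simp
  | succ k hjk ih =>
    have hk2' : k ≤ 2 * K := by omega
    have ih' := ih hk2'
    have hgap := gap_lower p hp k (by omega)
    have hmono : ((2 * K : ℕ) : ℝ) ^ (-p - 1) ≤ ((k : ℝ) + 1) ^ (-p - 1) := by
      apply Real.rpow_le_rpow_of_nonpos
      · positivity
      · push_cast; exact_mod_cast (by exact_mod_cast hk2 : ((k+1:ℕ):ℝ) ≤ ((2*K:ℕ):ℝ))
      · linarith
    push_cast at ih' hgap hmono ⊢
    nlinarith [hp]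

lemma coverB (p θ : ℝ) (hp : 0 < p) (hθ : 0 < θ) (hθ1 : θ ≤ 1) (s : ℝ)
    (hs : θ / (p + θ) < s) (ε : ℝ) (hε : 0 < ε) :
    ∃ δ₀ > (0:ℝ), ∀ δ : ℝ, 0 < δ → δ ≤ δ₀ → ICov (Fp p) s (δ ^ (1/θ)) δ ε := by
  have hpθ : 0 < p + θ := by linarith
  set a : ℝ := p / (p + θ) with ha
  have ha0 : 0 < a := by positivity
  have ha1 : a < 1 := by rw [ha, div_lt_one hpθ]; linarith
  have hs0 : 0 < s := lt_of_le_of_lt (by positivity) hs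
  set e1 : ℝ := a + s - 1 with he1def
  set e2 : ℝ := s / θ - a / p with he2def
  have hap : a / p = 1 / (p + θ) := by rw [ha]; field_simp
  have he1 : 0 < e1 := by
    have h1 : a + θ / (p + θ) = 1 := by rw [ha]; field_simp
    rw [he1def]; nlinarith
  have he2 : 0 < e2 := by
    rw [he2def, hap, sub_pos, div_lt_div_iff₀ hpθ hθ]
    nlinarith [(div_lt_iff₀ hpθ).mp hs]
  have he1s : e1 ≤ s := by rw [he1def]; linarith
  have he2s : e2 ≤ s / θ := by rw [he2def, hap]; nlinarith [one_div_pos.mpr hpθ]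
  set e : ℝ := min e1 e2 with hedef
  have he : 0 < e := lt_min he1 he2
  refine ⟨min (1/2) ((ε/5) ^ (1/e)), by positivity, fun δ hδ0 hδ1 => ?_⟩
  have hδhalf : δ ≤ 1/2 := le_trans hδ1 (min_le_left _ _)
  have hδle1 : δ ≤ 1 := by linarith
  have hkey : 5 * δ ^ e ≤ ε := by
    have h1 : δ ^ e ≤ ((ε/5) ^ (1/e)) ^ e :=
      Real.rpow_le_rpow hδ0.le (le_trans hδ1 (min_le_right _ _)) he.le
    have h2 : ((ε/5) ^ (1/e)) ^ e = ε/5 := by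
      rw [← Real.rpow_mul (by positivity : (0:ℝ) ≤ ε/5),
        show (1/e) * e = 1 by field_simp, Real.rpow_one]
    rw [h2] at h1; linarith
  set T : ℝ := δ ^ a with hTdef
  set n' : ℕ := Nat.ceil (T / δ) with hn'def
  set m : ℕ := Nat.ceil (T ^ (-(1/p))) with hmdef
  set δ1 : ℝ := δ ^ (1/θ) with hδ1def
  have hT0 : 0 < T := Real.rpow_pos_of_pos hδ0 a
  have hδ10 : 0 < δ1 := Real.rpow_pos_of_pos hδ0 _
  have hTle1 : T ≤ 1 := Real.rpow_le_one hδ0.le hδle1 ha0.le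
  have hδ1le : δ1 ≤ δ := by
    have h1 : (1:ℝ) ≤ 1/θ := by rw [le_div_iff₀ hθ]; linarith
    have := Real.rpow_le_rpow_of_exponent_ge hδ0 hδle1 h1
    rwa [Real.rpow_one] at this
  have hm1 : 1 ≤ m := Nat.one_le_ceil_iff.mpr (by positivity)
  refine ⟨Fin (n'+1) ⊕ Fin m, inferInstance,
    Sum.elim (fun j => Icc ((j:ℕ) * δ) ((j:ℕ) * δ + δ))
             (fun k => Icc ((((k:ℕ):ℝ) + 1) ^ (-p)) ((((k:ℕ):ℝ) + 1) ^ (-p) + δ1)),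
    ?_, ?_, ?_⟩
  · -- coverage
    rintro x (rfl | ⟨k, hk, rfl⟩)
    · refine mem_iUnion.mpr ⟨Sum.inl ⟨0, by omega⟩, ?_⟩
      simp only [Sum.elim_inl]
      constructor <;> simp <;> positivity
    · by_cases hkm : k ≤ m
      · refine mem_iUnion.mpr ⟨Sum.inr ⟨k-1, by omega⟩, ?_⟩
        simp only [Sum.elim_inr]
        have hcast : (((k-1:ℕ):ℝ) + 1) = (k:ℝ) := by
          rw [Nat.cast_sub hk]; push_cast; ring
        rw [hcast]
        exact ⟨le_refl _, by linarith⟩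
      · set y : ℝ := (k:ℝ) ^ (-p) with hydef
        have hy0 : 0 ≤ y := Real.rpow_nonneg (Nat.cast_nonneg k) _
        have hyT : y ≤ T := by
          have h1 : T ^ (-(1/p)) ≤ (m:ℝ) := Nat.le_ceil _
          have hk' : (m:ℝ) + 1 ≤ (k:ℝ) := by exact_mod_cast (by omega : m + 1 ≤ k)
          have hTp : (0:ℝ) < T ^ (-(1/p)) := by positivity
          have h2 : (k:ℝ) ^ (-p) ≤ (T ^ (-(1/p))) ^ (-p) :=
            Real.rpow_le_rpow_of_nonpos hTp (by linarith) (by linarith)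
          calc y ≤ (T ^ (-(1/p))) ^ (-p) := h2
          _ = T := by
            rw [← Real.rpow_mul hT0.le, show (-(1/p)) * (-p) = 1 by field_simp, Real.rpow_one]
        set j : ℕ := Nat.floor (y / δ) with hjdef
        have hjr : (j:ℝ) ≤ y / δ := Nat.floor_le (by positivity)
        have hjn : j ≤ n' := by
          have h3 : y / δ ≤ T / δ := by gcongr
          have h4 : (j:ℝ) ≤ (n':ℝ) := le_trans hjr (le_trans h3 (Nat.le_ceil _))
          exact_mod_cast h4
        refine mem_iUnion.mpr ⟨Sum.inl ⟨j, by omega⟩, ?_⟩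
        simp only [Sum.elim_inl]
        constructor
        · calc (j:ℝ) * δ ≤ (y/δ) * δ := mul_le_mul_of_nonneg_right hjr hδ0.le
          _ = y := div_mul_cancel₀ y hδ0.ne'
        · have h5 : y / δ < (j:ℝ) + 1 := Nat.lt_floor_add_one _
          have h6 : y < ((j:ℝ) + 1) * δ := (div_lt_iff₀ hδ0).mp h5
          nlinarith
  · -- diameters
    rintro (j | k) <;> simp only [Sum.elim_inl, Sum.elim_inr]
    · rw [EMetric.diam, Real.ediam_Icc, show ((j:ℕ):ℝ) * δ + δ - ((j:ℕ):ℝ) * δ = δ by ring]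
      exact ⟨ENNReal.ofReal_le_ofReal hδ1le, le_refl _⟩
    · rw [EMetric.diam, Real.ediam_Icc, show ((((k:ℕ):ℝ)+1) ^ (-p) + δ1) - (((k:ℕ):ℝ)+1) ^ (-p) = δ1 by ring]
      exact ⟨le_refl _, ENNReal.ofReal_le_ofReal hδ1le⟩
  · -- sum
    rw [tsum_fintype, Fintype.sum_sum_type]
    simp only [Sum.elim_inl, Sum.elim_inr, EMetric.diam, Real.ediam_Icc, add_sub_cancel_left]
    simp only [Finset.sum_const, Finset.card_univ, Fintype.card_fin]
    rw [nsmul_eq_mul, nsmul_eq_mul,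
      ENNReal.ofReal_rpow_of_pos hδ0, ENNReal.ofReal_rpow_of_pos hδ10,
      ← ENNReal.ofReal_natCast (n'+1), ← ENNReal.ofReal_natCast m,
      ← ENNReal.ofReal_mul (by positivity), ← ENNReal.ofReal_mul (by positivity),
      ← ENNReal.ofReal_add (by positivity) (by positivity)]
    apply ENNReal.ofReal_le_ofReal
    have hδs0 : (0:ℝ) ≤ δ ^ s := by positivity
    have hδsθ0 : (0:ℝ) ≤ δ ^ (s/θ) := by positivity
    have hc1 : ((n'+1:ℕ):ℝ) ≤ T/δ + 2 := by
      push_cast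
      have := Nat.ceil_lt_add_one (by positivity : (0:ℝ) ≤ T/δ)
      rw [hn'def]; push_cast; linarith
    have hc2 : (m:ℝ) ≤ T ^ (-(1/p)) + 1 := by
      have := Nat.ceil_lt_add_one (by positivity : (0:ℝ) ≤ T ^ (-(1/p)))
      rw [hmdef]; linarith
    have hid1 : T/δ * δ^s = δ^e1 := by
      rw [he1def, show a + s - 1 = (a+s) - 1 by ring, Real.rpow_sub hδ0,
        Real.rpow_add hδ0, Real.rpow_one, hTdef]; ring
    have hid2 : δ1^s = δ^(s/θ) := by
      rw [hδ1def, ← Real.rpow_mul hδ0.le, show (1/θ)*s = s/θ by ring]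
    have hid3 : T^(-(1/p)) * δ^(s/θ) = δ^e2 := by
      rw [hTdef, ← Real.rpow_mul hδ0.le, he2def, show s/θ - a/p = a * (-(1/p)) + s/θ by
        field_simp; ring, Real.rpow_add hδ0]
    have hb1 : δ^e1 ≤ δ^e := Real.rpow_le_rpow_of_exponent_ge hδ0 hδle1 (min_le_left _ _)
    have hb2 : δ^e2 ≤ δ^e := Real.rpow_le_rpow_of_exponent_ge hδ0 hδle1 (min_le_right _ _)
    have hb3 : δ^s ≤ δ^e := Real.rpow_le_rpow_of_exponent_ge hδ0 hδle1
      (le_trans (min_le_left _ _) he1s)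
    have hb4 : δ^(s/θ) ≤ δ^e := Real.rpow_le_rpow_of_exponent_ge hδ0 hδle1
      (le_trans (min_le_right _ _) he2s)
    have m1 : ((n'+1:ℕ):ℝ) * δ^s ≤ (T/δ + 2) * δ^s := mul_le_mul_of_nonneg_right hc1 hδs0
    have m2 : (m:ℝ) * δ^(s/θ) ≤ (T^(-(1/p)) + 1) * δ^(s/θ) :=
      mul_le_mul_of_nonneg_right hc2 hδsθ0
    have expand : (T/δ+2)*δ^s + (T^(-(1/p))+1)*δ^(s/θ)
        = δ^e1 + 2*δ^s + δ^e2 + δ^(s/θ) := by rw [← hid1, ← hid3]; ring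
    rw [hid2]
    linarith [m1, m2, expand, hb1, hb2, hb3, hb4, hkey]

lemma rpow_le_of_le_rpow {δ X z : ℝ} (hδ0 : 0 < δ) (hX : 0 < X) (hz : 0 < z)
    (h : δ ≤ X ^ (1/z)) : δ ^ z ≤ X := by
  have h2 := Real.rpow_le_rpow hδ0.le h hz.le
  rwa [← Real.rpow_mul hX.le, show (1/z)*z = 1 by field_simp, Real.rpow_one] at h2

lemma lbA (p θ : ℝ) (hp : 0 < p) (hθ : 0 < θ) (s : ℝ) (hs0 : 0 ≤ s)
    (hst : s < θ / (p + θ)) :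
    ∃ δ₀ > (0:ℝ), ∀ δ : ℝ, 0 < δ → δ ≤ δ₀ → ¬ ICov (Fp p) s (δ ^ (1/θ)) δ (1/2) := by
  classical
  have hpθ : 0 < p + θ := by linarith
  have hs1 : s < 1 := lt_of_lt_of_le hst (by rw [div_le_one hpθ]; linarith)
  have hsθp : s / θ < (1 - s) / p := by
    rw [div_lt_div_iff₀ hθ hp]
    have := (lt_div_iff₀ hpθ).mp hst
    nlinarith
  set b : ℝ := (s/θ + (1-s)/p) / 2 with hbdef
  have hb0 : 0 < b := by
    have h0 : 0 ≤ s / θ := by positivity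
    have h1 : 0 < (1-s) / p := div_pos (by linarith) hp
    rw [hbdef]; linarith
  have hbl : s/θ < b := by rw [hbdef]; linarith
  have hbu : b < (1-s)/p := by rw [hbdef]; linarith
  set v : ℝ := b - s/θ with hvdef
  have hv : 0 < v := by rw [hvdef]; linarith
  set u : ℝ := 1 - s - b*p with hudef
  have hu : 0 < u := by
    have h1 : b * p < 1 - s := (lt_div_iff₀ hp).mp hbu
    rw [hudef]; linarith
  set C : ℝ := p * (2:ℝ)^(-p-1) / 4 with hCdef
  have hC0 : 0 < C := by positivity
  refine ⟨min (min ((1/2:ℝ) ^ (1/b)) ((1/2:ℝ) ^ (1/v))) (C ^ (1/u)), by positivity,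
    fun δ hδ0 hδle => ?_⟩
  rintro ⟨ι, hι, U, hcov, hdiam, hsum⟩
  have hδb : δ ^ b ≤ 1/2 := rpow_le_of_le_rpow hδ0 (by norm_num) hb0
    (le_trans hδle (le_trans (min_le_left _ _) (min_le_left _ _)))
  have hδv : δ ^ v ≤ 1/2 := rpow_le_of_le_rpow hδ0 (by norm_num) hv
    (le_trans hδle (le_trans (min_le_left _ _) (min_le_right _ _)))
  have hδu : δ ^ u ≤ C := rpow_le_of_le_rpow hδ0 hC0 hu
    (le_trans hδle (min_le_right _ _))
  set K : ℕ := Nat.floor (δ ^ (-b)) with hKdef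
  have hKlb : δ ^ (-b) - 1 < (K:ℝ) := Nat.sub_one_lt_floor _
  have hKub : (K:ℝ) ≤ δ ^ (-b) := Nat.floor_le (by positivity)
  have hδbpos : (0:ℝ) < δ ^ b := Real.rpow_pos_of_pos hδ0 b
  have h2δ : (2:ℝ) ≤ δ ^ (-b) := by
    rw [Real.rpow_neg hδ0.le]
    rw [le_inv_comm₀ (by norm_num) hδbpos]
    linarith
  have hK2 : 2 ≤ K := by
    have h1 : (1:ℝ) < (K:ℝ) := by linarith
    exact_mod_cast Nat.succ_le_of_lt (by exact_mod_cast h1)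
  have hKhalf : δ^(-b)/2 ≤ (K:ℝ) := by linarith
  -- choice of covering indices
  obtain ⟨i₀, _⟩ := mem_iUnion.mp (hcov (show (0:ℝ) ∈ Fp p from Or.inl rfl))
  have hch : ∀ k : ℕ, ∃ i : ι, (K+1 ≤ k ∧ k ≤ 2*K → (k:ℝ)^(-p) ∈ U i) := by
    intro k
    by_cases h : K+1 ≤ k ∧ k ≤ 2*K
    · obtain ⟨i, hi⟩ := mem_iUnion.mp (hcov (mem_Fp_pow p k (by omega)))
      exact ⟨i, fun _ => hi⟩
    · exact ⟨i₀, fun hh => absurd hh h⟩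
  choose c hc using hch
  set S : Finset ℕ := Finset.Icc (K+1) (2*K) with hSdef
  have hcardS : S.card = K := by rw [hSdef, Nat.card_Icc]; omega
  set Tf : Finset ι := S.image c with hTdef
  have hfib : S.card = ∑ i ∈ Tf, (S.filter (fun k => c k = i)).card :=
    Finset.card_eq_sum_card_fiberwise (fun k hk => Finset.mem_image_of_mem c hk)
  set g : ℝ := p * ((2*K:ℕ):ℝ)^(-p-1) with hgdef
  have h2K0 : (0:ℝ) < ((2*K:ℕ):ℝ) := by positivity
  have hg0 : 0 < g := by rw [hgdef]; positivity
  set w1 : ℝ := g * δ^(s-1) / 2 with hw1def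
  set w2 : ℝ := (δ^(1/θ))^s with hw2def
  have hw10 : 0 < w1 := by rw [hw1def]; positivity
  have hw20 : 0 < w2 := by rw [hw2def]; positivity
  set w : ℝ := min w1 w2 with hwdef
  have hw0 : 0 ≤ w := le_min hw10.le hw20.le
  -- per index bound
  have key : ∀ i ∈ Tf, ENNReal.ofReal (((S.filter (fun k => c k = i)).card : ℝ) * w)
      ≤ EMetric.diam (U i) ^ s := by
    intro i _
    have hdi := hdiam i
    have hfin : EMetric.diam (U i) ≠ ⊤ := ne_top_of_le_ne_top ENNReal.ofReal_ne_top hdi.2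
    set r : ℝ := (EMetric.diam (U i)).toReal with hrdef
    have hrle : r ≤ δ := ENNReal.toReal_le_of_le_ofReal hδ0.le hdi.2
    have hrge : δ^(1/θ) ≤ r := by
      have h1 : ENNReal.ofReal (δ^(1/θ)) ≤ ENNReal.ofReal r := by
        rw [hrdef, ENNReal.ofReal_toReal hfin]; exact hdi.1
      exact (ENNReal.ofReal_le_ofReal_iff ENNReal.toReal_nonneg).mp h1
    have hr0 : 0 < r := lt_of_lt_of_le (by positivity) hrge
    have hw2r : w2 ≤ r^s := by
      rw [hw2def]; exact Real.rpow_le_rpow (by positivity) hrge hs0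
    set N : ℕ := (S.filter (fun k => c k = i)).card with hNdef
    have hreal : (N:ℝ) * w ≤ r^s := by
      rcases Nat.lt_or_ge N 2 with hN2 | hN2
      · have hN1 : (N:ℝ) ≤ 1 := by exact_mod_cast Nat.lt_succ_iff.mp hN2
        calc (N:ℝ)*w ≤ 1 * w2 :=
              mul_le_mul hN1 (min_le_right _ _) hw0 (by norm_num)
        _ = w2 := one_mul _
        _ ≤ r^s := hw2r
      · set fib := S.filter (fun k => c k = i) with hfibdef
        have hfibne : fib.Nonempty := Finset.card_pos.mp (by omega)
        set j := fib.min' hfibne with hjdef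
        set k := fib.max' hfibne with hkdef
        have hjf : j ∈ fib := Finset.min'_mem _ _
        have hkf : k ∈ fib := Finset.max'_mem _ _
        have hjk : j ≤ k := Finset.min'_le _ _ hkf
        have hsub : fib ⊆ Finset.Icc j k := fun x hx =>
          Finset.mem_Icc.mpr ⟨Finset.min'_le _ _ hx, Finset.le_max' _ _ hx⟩
        have hcard : N ≤ k - j + 1 := by
          calc N = fib.card := rfl
          _ ≤ (Finset.Icc j k).card := Finset.card_le_card hsub
          _ = k - j + 1 := by rw [Nat.card_Icc]; omega
        have hjS : j ∈ S := (Finset.mem_filter.mp hjf).1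
        have hkS : k ∈ S := (Finset.mem_filter.mp hkf).1
        rw [hSdef, Finset.mem_Icc] at hjS hkS
        have hcj : c j = i := (Finset.mem_filter.mp hjf).2
        have hck : c k = i := (Finset.mem_filter.mp hkf).2
        have hxj : ((j:ℝ)^(-p)) ∈ U i := hcj ▸ hc j ⟨hjS.1, hjS.2⟩
        have hxk : ((k:ℝ)^(-p)) ∈ U i := hck ▸ hc k ⟨hkS.1, hkS.2⟩
        have hdistle : (j:ℝ)^(-p) - (k:ℝ)^(-p) ≤ r := by
          have h1 := EMetric.edist_le_diam_of_mem hxj hxk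
          rw [edist_dist] at h1
          have h2 : dist ((j:ℝ)^(-p)) ((k:ℝ)^(-p)) ≤ r := by
            change _ ≤ EMetric.diam (U i) at h1
            rw [← ENNReal.ofReal_toReal hfin] at h1
            exact (ENNReal.ofReal_le_ofReal_iff ENNReal.toReal_nonneg).mp h1
          rw [Real.dist_eq] at h2
          exact le_trans (le_abs_self _) h2
        have htel := telescope p hp K j k hjS.1 hjk hkS.2
        have hNk : (N:ℝ) - 1 ≤ (k:ℝ) - (j:ℝ) := by
          have h3 : (N:ℝ) ≤ ((k - j + 1 : ℕ):ℝ) := by exact_mod_cast hcard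
          rw [Nat.cast_add, Nat.cast_sub hjk] at h3
          push_cast at h3 ⊢; linarith
        have hNr : ((N:ℝ) - 1) * g ≤ r := by
          have h4 : ((N:ℝ) - 1) * g ≤ ((k:ℝ) - (j:ℝ)) * g :=
            mul_le_mul_of_nonneg_right hNk hg0.le
          rw [hgdef]; rw [hgdef] at h4
          linarith [htel, hdistle]
        have hN2' : (2:ℝ) ≤ (N:ℝ) := by exact_mod_cast hN2
        have hNg : (N:ℝ) * g ≤ 2 * r := by
          have h7 : 0 ≤ ((N:ℝ)-2)*g := mul_nonneg (by linarith) hg0.le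
          have h8 := mul_le_mul_of_nonneg_left hNr (by norm_num : (0:ℝ) ≤ 2)
          calc (N:ℝ)*g = 2*(((N:ℝ)-1)*g) - ((N:ℝ)-2)*g := by ring
          _ ≤ 2*r := by linarith
        have hδs10 : (0:ℝ) ≤ δ^(s-1) := by positivity
        have hNw1 : (N:ℝ) * w1 ≤ r * δ^(s-1) := by
          rw [hw1def]
          calc (N:ℝ) * (g * δ^(s-1) / 2) = ((N:ℝ) * g) * δ^(s-1) / 2 := by ring
          _ ≤ (2*r) * δ^(s-1) / 2 := by
              apply div_le_div_of_nonneg_right ?_ (by norm_num)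
              exact mul_le_mul_of_nonneg_right hNg hδs10
          _ = r * δ^(s-1) := by ring
        have hrs : r * δ^(s-1) ≤ r^s := by
          have h5 : δ^(s-1) ≤ r^(s-1) := Real.rpow_le_rpow_of_nonpos hr0 hrle (by linarith)
          calc r * δ^(s-1) ≤ r * r^(s-1) := mul_le_mul_of_nonneg_left h5 hr0.le
          _ = r^s := by
            nth_rewrite 2 [show s = 1 + (s-1) by ring]
            rw [Real.rpow_add hr0, Real.rpow_one]
        calc (N:ℝ)*w ≤ (N:ℝ)*w1 :=
              mul_le_mul_of_nonneg_left (min_le_left _ _) (Nat.cast_nonneg N)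
        _ ≤ r * δ^(s-1) := hNw1
        _ ≤ r^s := hrs
    calc ENNReal.ofReal ((N:ℝ) * w) ≤ ENNReal.ofReal (r^s) := ENNReal.ofReal_le_ofReal hreal
    _ = (ENNReal.ofReal r)^s := (ENNReal.ofReal_rpow_of_pos hr0).symm
    _ = EMetric.diam (U i) ^ s := by rw [hrdef, ENNReal.ofReal_toReal hfin]
  -- summation
  have hKw : (K:ℝ) * w ≤ 1/2 := by
    have hsum2 : ENNReal.ofReal ((K:ℝ) * w) ≤ ENNReal.ofReal (1/2) := by
      have e0 : ((K:ℝ) * w) = ∑ i ∈ Tf, (((S.filter (fun k => c k = i)).card : ℝ) * w) := by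
        rw [← Finset.sum_mul]
        congr 1
        rw [← hcardS, hfib]
        exact_mod_cast rfl
      calc ENNReal.ofReal ((K:ℝ)*w)
          = ∑ i ∈ Tf, ENNReal.ofReal (((S.filter (fun k => c k = i)).card : ℝ) * w) := by
            rw [e0, ENNReal.ofReal_sum_of_nonneg (fun i _ => mul_nonneg (Nat.cast_nonneg _) hw0)]
      _ ≤ ∑ i ∈ Tf, EMetric.diam (U i) ^ s := Finset.sum_le_sum key
      _ ≤ ∑' i, EMetric.diam (U i) ^ s := ENNReal.sum_le_tsum _
      _ ≤ ENNReal.ofReal (1/2) := hsum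
    exact (ENNReal.ofReal_le_ofReal_iff (by norm_num)).mp hsum2
  -- contradiction: 1 ≤ K * w
  have hcast2K : ((2*K:ℕ):ℝ) = 2*(K:ℝ) := by push_cast; ring
  have hKw1 : 1 ≤ (K:ℝ) * w1 := by
    have h2K : 2*(K:ℝ) ≤ 2 * δ^(-b) := by linarith
    have hmono : (2*δ^(-b))^(-p-1) ≤ (2*(K:ℝ))^(-p-1) :=
      Real.rpow_le_rpow_of_nonpos (by positivity) h2K (by linarith)
    have e1 : (2*δ^(-b))^(-p-1) = (2:ℝ)^(-p-1) * δ^((-b)*(-p-1)) := by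
      rw [Real.mul_rpow (by norm_num) (by positivity), ← Real.rpow_mul hδ0.le]
    have t1 : (δ^(-b)/2) * (p * (2*δ^(-b))^(-p-1) * δ^(s-1) / 2) ≤ (K:ℝ) * w1 := by
      apply mul_le_mul hKhalf ?_ (by positivity) (Nat.cast_nonneg K)
      rw [hw1def, hgdef, hcast2K]
      have h6 : p * (2*δ^(-b))^(-p-1) ≤ p * (2*(K:ℝ))^(-p-1) :=
        mul_le_mul_of_nonneg_left hmono hp.le
      apply div_le_div_of_nonneg_right ?_ (by norm_num)
      exact mul_le_mul_of_nonneg_right h6 (by positivity)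
    have hδsplit : δ^(-b) * (δ^((-b)*(-p-1)) * δ^(s-1)) = δ^(-u) := by
      rw [← Real.rpow_add hδ0, ← Real.rpow_add hδ0]
      congr 1; rw [hudef]; ring
    have t2 : (δ^(-b)/2) * (p * ((2:ℝ)^(-p-1) * δ^((-b)*(-p-1))) * δ^(s-1) / 2) = C * δ^(-u) := by
      rw [hCdef, ← hδsplit]; ring
    have t3 : 1 ≤ C * δ^(-u) := by
      have hδupos : (0:ℝ) < δ^u := Real.rpow_pos_of_pos hδ0 u
      rw [Real.rpow_neg hδ0.le, ← div_eq_mul_inv, le_div_iff₀ hδupos, one_mul]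
      exact hδu
    rw [e1] at t1
    linarith [t1, t2, t3]
  have hKw2 : 1 ≤ (K:ℝ) * w2 := by
    have e3 : w2 = δ^(s/θ) := by
      rw [hw2def, ← Real.rpow_mul hδ0.le]; congr 1; ring
    have e4 : δ^(-b) * δ^(s/θ) = δ^(-v) := by
      rw [← Real.rpow_add hδ0]; congr 1; rw [hvdef]; ring
    have hδvpos : (0:ℝ) < δ^v := Real.rpow_pos_of_pos hδ0 v
    have h2v : (2:ℝ) ≤ δ^(-v) := by
      rw [Real.rpow_neg hδ0.le, le_inv_comm₀ (by norm_num) hδvpos]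
      linarith
    have t4 : (δ^(-b)/2) * δ^(s/θ) ≤ (K:ℝ) * w2 := by
      rw [e3]
      exact mul_le_mul_of_nonneg_right hKhalf (by positivity)
    have t5 : (δ^(-b)/2) * δ^(s/θ) = δ^(-v)/2 := by rw [← e4]; ring
    linarith
  rcases min_cases w1 w2 with ⟨hmin, _⟩ | ⟨hmin, _⟩
  · rw [hwdef, hmin] at hKw; linarith
  · rw [hwdef, hmin] at hKw; linarith

theorem stmt15 (p : ℝ) (hp : 0 < p) (θ : ℝ) (hθ : θ ∈ Set.Icc (0:ℝ) 1) :
    lowerIDim (Fp p) θ = θ / (p + θ) ∧ upperIDim (Fp p) θ = θ / (p + θ) := by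
  obtain ⟨hθ0, hθ1⟩ := hθ
  by_cases h0 : θ = 0
  · subst h0
    have hS : sInf {s : ℝ | 0 ≤ s ∧ ∀ ε > 0, HCov (Fp p) s ε} = 0 := by
      apply sInf_eq_of_between
      · exact fun s hs => hs.1
      · exact fun s hs => ⟨le_of_lt hs, fun ε hε => hcov0 p s ε hs⟩
    constructor
    · simp only [lowerIDim, if_pos rfl, hS]; norm_num
    · simp only [upperIDim, if_pos rfl, hS]; norm_num
  · have hθpos : 0 < θ := lt_of_le_of_ne hθ0 (Ne.symm h0)
    have hpθ : 0 < p + θ := by linarith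
    have ht0 : 0 ≤ θ / (p + θ) := by positivity
    have hlow : {s : ℝ | 0 ≤ s ∧ ∀ ε > 0, ∀ δ₀ > 0, ∃ δ : ℝ, 0 < δ ∧ δ ≤ δ₀ ∧
        ICov (Fp p) s (δ ^ (1 / θ)) δ ε} ⊆ Ici (θ / (p + θ)) := by
      intro s hsmem
      rw [mem_Ici]
      by_contra hcon
      push_neg at hcon
      obtain ⟨δ₀, hδ₀, hA⟩ := lbA p θ hp hθpos s hsmem.1 hcon
      obtain ⟨δ, hδ0, hδle, hIC⟩ := hsmem.2 (1/2) (by norm_num) δ₀ hδ₀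
      exact hA δ hδ0 hδle hIC
    have hup_sub : {s : ℝ | 0 ≤ s ∧ ∀ ε > 0, ∃ δ₀ > (0:ℝ), ∀ δ : ℝ, 0 < δ → δ ≤ δ₀ →
        ICov (Fp p) s (δ ^ (1 / θ)) δ ε} ⊆ {s : ℝ | 0 ≤ s ∧ ∀ ε > 0, ∀ δ₀ > 0,
        ∃ δ : ℝ, 0 < δ ∧ δ ≤ δ₀ ∧ ICov (Fp p) s (δ ^ (1 / θ)) δ ε} := by
      rintro s ⟨hs0, hs⟩
      refine ⟨hs0, fun ε hε δ₀ hδ₀ => ?_⟩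
      obtain ⟨δ₁, hδ₁, h⟩ := hs ε hε
      exact ⟨min δ₀ δ₁, lt_min hδ₀ hδ₁, min_le_left _ _,
        h _ (lt_min hδ₀ hδ₁) (min_le_right _ _)⟩
    have hupper : Ioi (θ / (p + θ)) ⊆ {s : ℝ | 0 ≤ s ∧ ∀ ε > 0, ∃ δ₀ > (0:ℝ),
        ∀ δ : ℝ, 0 < δ → δ ≤ δ₀ → ICov (Fp p) s (δ ^ (1 / θ)) δ ε} := by
      intro s hst
      exact ⟨le_trans ht0 (le_of_lt hst), fun ε hε => coverB p θ hp hθpos hθ1 s hst ε hε⟩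
    constructor
    · simp only [lowerIDim, if_neg h0]
      exact sInf_eq_of_between hlow (fun s hs => hup_sub (hupper hs))
    · simp only [upperIDim, if_neg h0]
      exact sInf_eq_of_between (fun s hs => hlow (hup_sub hs)) hupper
end

section
/- Upper bound for the θ-intermediate dimension of the sequence F_p: for p > 0, θ ∈ (0,1], and any s > θ/(p+θ), for every ε > 0 and every δ₀ > 0 there exists 0 < δ ≤ δ₀ and a cover {U_i} of F_p = {0} ∪ {k^{-p} : k ≥ 1} with δ ≤ |U_i| ≤ δ^θ for all i and Σ|U_i|^s ≤ ε. Hence the upper θ-intermediate dimension of F_p is at most θ/(p+θ). -/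
open Set

open scoped ENNReal

lemma main_cov (p : ℝ) (hp : 0 < p) (θ : ℝ) (hθ0 : 0 < θ) (hθ1 : θ ≤ 1)
    (s : ℝ) (hs : θ / (p + θ) < s) (ε : ℝ) (hε : 0 < ε) :
    ∃ δ₁ : ℝ, 0 < δ₁ ∧ δ₁ ≤ 1 ∧ ∀ δ : ℝ, 0 < δ → δ ≤ δ₁ → ICov (Fp p) s δ (δ ^ θ) ε := by
  have hpθ : 0 < p + θ := by linarith
  have hs0 : 0 < s := lt_trans (by positivity) hs
  set t : ℝ := (s * (p + θ) - θ) / (p + 1) with ht_def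
  have ht : 0 < t := by
    apply div_pos _ (by linarith)
    have : θ / (p + θ) * (p + θ) < s * (p + θ) := by
      exact mul_lt_mul_of_pos_right hs hpθ
    rw [div_mul_cancel₀ _ (ne_of_gt hpθ)] at this
    linarith
  set γ : ℝ := (s + θ * (1 - s)) / (p + 1) with hγ_def
  have hγ : 0 < γ := by
    apply div_pos _ (by linarith)
    nlinarith [mul_pos hθ0 hs0]
  have hθs : 0 < θ * s := mul_pos hθ0 hs0
  refine ⟨min 1 (min ((ε/6) ^ (1/t)) ((ε/2) ^ (1/(θ*s)))), by positivity, min_le_left _ _,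
    ?_⟩
  intro δ hδ0 hδle
  have hδ1 : δ ≤ 1 := hδle.trans (min_le_left _ _)
  -- powers of δ are ≤ corresponding bounds
  have key : ∀ a c : ℝ, 0 < a → 0 < c → δ ≤ (c) ^ (1/a) → δ ^ a ≤ c := by
    intro a c ha hc hle
    calc δ ^ a ≤ ((c) ^ (1/a)) ^ a :=
          Real.rpow_le_rpow hδ0.le hle ha.le
      _ = c := by
          rw [← Real.rpow_mul hc.le, one_div, inv_mul_cancel₀ (ne_of_gt ha), Real.rpow_one]
  have hδt : δ ^ t ≤ ε / 6 :=
    key t (ε/6) ht (by positivity) (hδle.trans ((min_le_right _ _).trans (min_le_left _ _)))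
  have hδθs : δ ^ (θ * s) ≤ ε / 2 :=
    key (θ*s) (ε/2) hθs (by positivity) (hδle.trans ((min_le_right _ _).trans (min_le_right _ _)))
  -- define M and N
  have hδγpos : (0:ℝ) < δ ^ (-γ) := Real.rpow_pos_of_pos hδ0 _
  set M : ℕ := ⌈δ ^ (-γ)⌉₊ with hM_def
  have hM1 : 1 ≤ M := Nat.one_le_ceil_iff.2 hδγpos
  have hMlb : δ ^ (-γ) ≤ (M : ℝ) := Nat.le_ceil _
  have hone_le : (1:ℝ) ≤ δ ^ (-γ) := by
    rw [Real.rpow_neg hδ0.le]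
    rw [le_inv_comm₀ zero_lt_one (Real.rpow_pos_of_pos hδ0 _)]
    simpa using Real.rpow_le_one hδ0.le hδ1 hγ.le
  have hMub : (M : ℝ) ≤ 2 * δ ^ (-γ) := by
    have h : (M:ℝ) < δ ^ (-γ) + 1 := Nat.ceil_lt_add_one hδγpos.le
    linarith
  have hMpos : (0:ℝ) < M := by exact_mod_cast hM1
  have hMp : (M:ℝ) ^ (-p) ≤ δ ^ (γ * p) := by
    calc (M:ℝ) ^ (-p) ≤ (δ ^ (-γ)) ^ (-p) :=
          Real.rpow_le_rpow_of_nonpos hδγpos hMlb (by linarith)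
      _ = δ ^ (γ * p) := by
          rw [← Real.rpow_mul hδ0.le]; ring_nf
  have hδθpos : (0:ℝ) < δ ^ θ := Real.rpow_pos_of_pos hδ0 _
  have hMppos : (0:ℝ) < (M:ℝ) ^ (-p) := Real.rpow_pos_of_pos hMpos _
  set N : ℕ := ⌈(M:ℝ) ^ (-p) / δ ^ θ⌉₊ with hN_def
  have hN1 : 1 ≤ N := Nat.one_le_ceil_iff.2 (by positivity)
  have hNlb : (M:ℝ) ^ (-p) / δ ^ θ ≤ (N:ℝ) := Nat.le_ceil _
  have hNub : (N:ℝ) ≤ δ ^ (γ * p - θ) + 1 := by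
    have h1 : (N:ℝ) < (M:ℝ) ^ (-p) / δ ^ θ + 1 := Nat.ceil_lt_add_one (by positivity)
    have h2 : (M:ℝ) ^ (-p) / δ ^ θ ≤ δ ^ (γ * p - θ) := by
      rw [div_le_iff₀ hδθpos, ← Real.rpow_add hδ0]
      simpa using hMp
    linarith
  -- the cover
  refine ⟨Fin M ⊕ Fin N, inferInstance, ?_, ?_, ?_, ?_⟩
  · exact Sum.elim
      (fun k => Icc (((k:ℕ)+1:ℝ) ^ (-p)) (((k:ℕ)+1:ℝ) ^ (-p) + δ))
      (fun j => Icc ((j:ℝ) * δ ^ θ) (((j:ℝ)+1) * δ ^ θ))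
  · -- covering
    rintro x (rfl | ⟨k, hk1, rfl⟩)
    · refine mem_iUnion.2 ⟨Sum.inr ⟨0, hN1⟩, ?_⟩
      simp only [Sum.elim_inr]
      constructor <;> simp [hδθpos.le]
    · by_cases hkM : k ≤ M
      · refine mem_iUnion.2 ⟨Sum.inl ⟨k - 1, by omega⟩, ?_⟩
        simp only [Sum.elim_inl]
        have hcast : ((k - 1 : ℕ) + 1 : ℝ) = (k:ℝ) := by
          have : k - 1 + 1 = k := by omega
          exact_mod_cast congrArg (Nat.cast : ℕ → ℝ) this
        rw [hcast]
        exact ⟨le_refl _, by linarith⟩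
      · push_neg at hkM
        have hkpos : (0:ℝ) < k := by exact_mod_cast hk1
        have hxlt : (k:ℝ) ^ (-p) < (M:ℝ) ^ (-p) := by
          apply Real.rpow_lt_rpow_of_neg hMpos (by exact_mod_cast hkM) (by linarith)
        have hxpos : (0:ℝ) < (k:ℝ) ^ (-p) := Real.rpow_pos_of_pos hkpos _
        have hxN : (k:ℝ) ^ (-p) < (N:ℝ) * δ ^ θ := by
          calc (k:ℝ) ^ (-p) < (M:ℝ) ^ (-p) := hxlt
            _ ≤ (N:ℝ) * δ ^ θ := by
                rw [← div_le_iff₀ hδθpos]; exact hNlb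
        set x := (k:ℝ) ^ (-p)
        have hfl : ⌊x / δ ^ θ⌋₊ < N := by
          rw [Nat.floor_lt (by positivity)]
          rw [div_lt_iff₀ hδθpos]; exact hxN
        refine mem_iUnion.2 ⟨Sum.inr ⟨⌊x / δ ^ θ⌋₊, hfl⟩, ?_⟩
        simp only [Sum.elim_inr]
        constructor
        · calc (⌊x / δ ^ θ⌋₊ : ℝ) * δ ^ θ ≤ x / δ ^ θ * δ ^ θ :=
              mul_le_mul_of_nonneg_right (Nat.floor_le (by positivity)) hδθpos.le
            _ = x := div_mul_cancel₀ _ (ne_of_gt hδθpos)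
        · have := Nat.lt_floor_add_one (x / δ ^ θ)
          calc x = x / δ ^ θ * δ ^ θ := (div_mul_cancel₀ _ (ne_of_gt hδθpos)).symm
            _ ≤ ((⌊x / δ ^ θ⌋₊:ℝ) + 1) * δ ^ θ :=
              mul_le_mul_of_nonneg_right this.le hδθpos.le
  · -- diameter bounds
    have hδδθ : δ ≤ δ ^ θ := by
      calc δ = δ ^ (1:ℝ) := (Real.rpow_one δ).symm
        _ ≤ δ ^ θ := Real.rpow_le_rpow_of_exponent_ge hδ0 hδ1 hθ1
    rintro (k | j)
    · simp only [Sum.elim_inl, EMetric.diam, Real.ediam_Icc]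
      constructor
      · exact ENNReal.ofReal_le_ofReal (by linarith)
      · exact ENNReal.ofReal_le_ofReal (by linarith)
    · simp only [Sum.elim_inr, EMetric.diam, Real.ediam_Icc]
      have : ((j:ℝ)+1) * δ ^ θ - (j:ℝ) * δ ^ θ = δ ^ θ := by ring
      rw [this]
      exact ⟨ENNReal.ofReal_le_ofReal hδδθ, le_refl _⟩
  · -- the sum
    have hsum : ∑' (i : Fin M ⊕ Fin N),
        EMetric.diam ((Sum.elim
          (fun k : Fin M => Icc (((k:ℕ)+1:ℝ) ^ (-p)) (((k:ℕ)+1:ℝ) ^ (-p) + δ))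
          (fun j : Fin N => Icc ((j:ℝ) * δ ^ θ) (((j:ℝ)+1) * δ ^ θ))) i) ^ s
        = (M:ℝ≥0∞) * ENNReal.ofReal (δ ^ s) + (N:ℝ≥0∞) * ENNReal.ofReal ((δ ^ θ) ^ s) := by
      rw [tsum_fintype, Fintype.sum_sum_type]
      have h1 : ∀ k : Fin M, EMetric.diam
          (Icc (((k:ℕ)+1:ℝ) ^ (-p)) (((k:ℕ)+1:ℝ) ^ (-p) + δ)) ^ s
          = ENNReal.ofReal (δ ^ s) := by
        intro k
        rw [EMetric.diam, Real.ediam_Icc]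
        have : (((k:ℕ)+1:ℝ) ^ (-p) + δ) - ((k:ℕ)+1:ℝ) ^ (-p) = δ := by ring
        rw [this, ← ENNReal.ofReal_rpow_of_pos hδ0]
      have h2 : ∀ j : Fin N, EMetric.diam
          (Icc ((j:ℝ) * δ ^ θ) (((j:ℝ)+1) * δ ^ θ)) ^ s
          = ENNReal.ofReal ((δ ^ θ) ^ s) := by
        intro j
        rw [EMetric.diam, Real.ediam_Icc]
        have : ((j:ℝ)+1) * δ ^ θ - (j:ℝ) * δ ^ θ = δ ^ θ := by ring
        rw [this, ← ENNReal.ofReal_rpow_of_pos hδθpos]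
      simp only [Sum.elim_inl, Sum.elim_inr]
      rw [Finset.sum_congr rfl (fun k _ => h1 k), Finset.sum_congr rfl (fun j _ => h2 j)]
      simp [mul_comm]
    rw [hsum]
    have hreal : (M:ℝ) * δ ^ s + (N:ℝ) * (δ ^ θ) ^ s ≤ ε := by
      have e1 : (δ ^ θ) ^ s = δ ^ (θ * s) := by
        rw [← Real.rpow_mul hδ0.le]
      have e2 : δ ^ (-γ) * δ ^ s = δ ^ t := by
        rw [← Real.rpow_add hδ0]
        congr 1
        rw [ht_def, hγ_def]
        field_simp
        ring
      have e3 : δ ^ (γ * p - θ) * δ ^ (θ * s) = δ ^ t := by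
        rw [← Real.rpow_add hδ0]
        congr 1
        rw [ht_def, hγ_def]
        field_simp
        ring
      have hb1 : (M:ℝ) * δ ^ s ≤ 2 * δ ^ t := by
        calc (M:ℝ) * δ ^ s ≤ 2 * δ ^ (-γ) * δ ^ s :=
            mul_le_mul_of_nonneg_right hMub (Real.rpow_pos_of_pos hδ0 _).le
          _ = 2 * δ ^ t := by rw [mul_assoc, e2]
      have hb2 : (N:ℝ) * (δ ^ θ) ^ s ≤ δ ^ t + δ ^ (θ * s) := by
        rw [e1]
        calc (N:ℝ) * δ ^ (θ*s) ≤ (δ ^ (γ * p - θ) + 1) * δ ^ (θ*s) :=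
            mul_le_mul_of_nonneg_right hNub (Real.rpow_pos_of_pos hδ0 _).le
          _ = δ ^ t + δ ^ (θ*s) := by rw [add_mul, e3, one_mul]
      have hδtpos : (0:ℝ) < δ ^ t := Real.rpow_pos_of_pos hδ0 _
      linarith
    calc (M:ℝ≥0∞) * ENNReal.ofReal (δ ^ s) + (N:ℝ≥0∞) * ENNReal.ofReal ((δ ^ θ) ^ s)
        = ENNReal.ofReal ((M:ℝ) * δ ^ s + (N:ℝ) * (δ ^ θ) ^ s) := by
          rw [ENNReal.ofReal_add (by positivity) (by positivity),
            ENNReal.ofReal_mul (by positivity), ENNReal.ofReal_mul (by positivity),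
            ENNReal.ofReal_natCast, ENNReal.ofReal_natCast]
      _ ≤ ENNReal.ofReal ε := ENNReal.ofReal_le_ofReal hreal

theorem stmt16 (p : ℝ) (hp : 0 < p) (θ : ℝ) (hθ : θ ∈ Set.Ioc (0:ℝ) 1) :
    (∀ s : ℝ, θ / (p + θ) < s → ∀ ε > (0:ℝ), ∀ δ₀ > (0:ℝ), ∃ δ : ℝ, 0 < δ ∧ δ ≤ δ₀ ∧
      ICov (Fp p) s δ (δ ^ θ) ε) ∧
    upperIDim (Fp p) θ ≤ θ / (p + θ) := by
  obtain ⟨hθ0, hθ1⟩ := hθ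
  have hpθ : 0 < p + θ := by linarith
  constructor
  · intro s hs ε hε δ₀ hδ₀
    obtain ⟨δ₁, hδ₁0, hδ₁1, hcov⟩ := main_cov p hp θ hθ0 hθ1 s hs ε hε
    exact ⟨min δ₀ δ₁, by positivity, min_le_left _ _,
      hcov _ (by positivity) (min_le_right _ _)⟩
  · rw [upperIDim, if_neg (ne_of_gt hθ0)]
    have hbdd : BddBelow {s : ℝ | 0 ≤ s ∧ ∀ ε > 0, ∃ δ₀ > (0:ℝ), ∀ δ : ℝ, 0 < δ → δ ≤ δ₀ →
        ICov (Fp p) s (δ ^ (1 / θ)) δ ε} := ⟨0, fun x hx => hx.1⟩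
    refine le_of_forall_gt_imp_ge_of_dense fun s hs => ?_
    refine csInf_le hbdd ⟨le_of_lt (lt_trans (by positivity) hs), fun ε hε => ?_⟩
    obtain ⟨δ₁, hδ₁0, hδ₁1, hcov⟩ := main_cov p hp θ hθ0 hθ1 s hs ε hε
    refine ⟨δ₁ ^ θ, by positivity, fun δ hδ0 hδle => ?_⟩
    have hδ' : (0:ℝ) < δ ^ (1/θ) := Real.rpow_pos_of_pos hδ0 _
    have h1 : δ ^ (1/θ) ≤ δ₁ := by
      calc δ ^ (1/θ) ≤ (δ₁ ^ θ) ^ (1/θ) :=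
            Real.rpow_le_rpow hδ0.le hδle (by positivity)
        _ = δ₁ := by
            rw [← Real.rpow_mul hδ₁0.le, mul_one_div, div_self (ne_of_gt hθ0),
              Real.rpow_one]
    have h2 : (δ ^ (1/θ)) ^ θ = δ := by
      rw [← Real.rpow_mul hδ0.le, one_div, inv_mul_cancel₀ (ne_of_gt hθ0), Real.rpow_one]
    have := hcov _ hδ' h1
    rwa [h2] at this
end

section
/- Let F_{log} = {0} ∪ {1/log k : k ∈ ℕ, k ≥ 2} ⊆ ℝ. Then for every θ ∈ (0,1], the lower and upper θ-intermediate dimensions of F_{log} equal 1, while the Hausdorff dimension of F_{log} is 0; hence θ ↦ dim_θ F_{log} is discontinuous at θ = 0. -/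
open Set

/-- The set `{0} ∪ {1 / log k : k ∈ ℕ, k ≥ 2}`. -/
noncomputable def Flog : Set ℝ :=
  insert 0 {x : ℝ | ∃ k : ℕ, 2 ≤ k ∧ x = 1 / Real.log k}

namespace S17

noncomputable def p (k : ℕ) : ℝ := 1 / Real.log k

lemma p_mem {k : ℕ} (hk : 2 ≤ k) : p k ∈ Flog := Or.inr ⟨k, hk, rfl⟩

lemma logk_pos {k : ℕ} (hk : 2 ≤ k) : 0 < Real.log k := by
  apply Real.log_pos; exact_mod_cast Nat.lt_of_lt_of_le one_lt_two hk

lemma Flog_countable : Flog.Countable := by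
  apply Set.Countable.insert
  apply Set.Countable.mono _ (Set.countable_range (fun k : ℕ => 1 / Real.log k))
  rintro x ⟨k, _, rfl⟩; exact ⟨k, rfl⟩

lemma dimH_Flog : dimH Flog = 0 := Flog_countable.dimH_zero

-- consecutive gap
lemma gap {k : ℕ} (hk : 2 ≤ k) :
    1 / (((k:ℝ)+1) * (Real.log ((k:ℝ)+1))^2) ≤ p k - p (k+1) := by
  have hk0 : (0:ℝ) < k := by positivity
  have hk1 : (0:ℝ) < (k:ℝ) + 1 := by positivity
  have h2 : (0:ℝ) < Real.log k := logk_pos hk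
  have h3 : (0:ℝ) < Real.log (k+1 : ℕ) := logk_pos (by omega)
  have hc : ((k+1 : ℕ) : ℝ) = (k:ℝ) + 1 := by push_cast; ring
  have hstep : (1:ℝ)/((k:ℝ)+1) ≤ Real.log (k+1:ℕ) - Real.log k := by
    have h := Real.log_le_sub_one_of_pos (x := (k:ℝ)/((k:ℝ)+1)) (by positivity)
    rw [Real.log_div (ne_of_gt hk0) (ne_of_gt hk1)] at h
    rw [hc]
    have : (k:ℝ)/((k:ℝ)+1) - 1 = -(1/((k:ℝ)+1)) := by field_simp; ring
    rw [this] at h; linarith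
  rw [hc] at h3 hstep
  have heq : p k - p (k+1) = (Real.log ((k:ℝ)+1) - Real.log k) / (Real.log k * Real.log ((k:ℝ)+1)) := by
    unfold p
    rw [hc, div_sub_div _ _ (ne_of_gt h2) (ne_of_gt h3)]
    ring_nf
  rw [heq]
  rw [show (1:ℝ) / (((k:ℝ)+1) * (Real.log ((k:ℝ)+1))^2) = (1/((k:ℝ)+1)) / ((Real.log ((k:ℝ)+1))^2) by
    field_simp]
  have hnum : (0:ℝ) ≤ Real.log ((k:ℝ)+1) - Real.log k := by
    have h0 : (0:ℝ) < 1/((k:ℝ)+1) := by positivity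
    linarith
  apply div_le_div₀ hnum hstep (by positivity)
  nlinarith [h2, h3, Real.log_le_log hk0 (by linarith : (k:ℝ) ≤ (k:ℝ)+1)]

noncomputable def g (K : ℕ) : ℝ := 1 / ((2*(K:ℝ)+1) * (Real.log (2*(K:ℝ)+1))^2)

lemma g_pos {K : ℕ} (hK : 1 ≤ K) : 0 < g K := by
  have h1 : (1:ℝ) ≤ K := by exact_mod_cast hK
  have : (0:ℝ) < Real.log (2*(K:ℝ)+1) := Real.log_pos (by linarith)
  unfold g; positivity

lemma gap_ge {K k : ℕ} (hK : 1 ≤ K) (hk : K+1 ≤ k) (hk2 : k+1 ≤ 2*K) :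
    g K ≤ p k - p (k+1) := by
  refine le_trans ?_ (gap (by omega))
  have h1 : ((k:ℝ)+1) ≤ 2*(K:ℝ)+1 := by
    have : (k:ℝ)+1 ≤ 2*(K:ℝ) := by exact_mod_cast hk2
    linarith
  have hk1 : (1:ℝ) < (k:ℝ)+1 := by
    have : (1:ℝ) ≤ k := by exact_mod_cast (show 1 ≤ k by omega)
    linarith
  have hl1 : (0:ℝ) < Real.log ((k:ℝ)+1) := Real.log_pos hk1
  have hl2 : Real.log ((k:ℝ)+1) ≤ Real.log (2*(K:ℝ)+1) := Real.log_le_log (by linarith) h1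
  unfold g
  apply one_div_le_one_div_of_le (by positivity)
  have : Real.log ((k:ℝ)+1)^2 ≤ Real.log (2*(K:ℝ)+1)^2 := by nlinarith
  nlinarith [hl1, hl2, hk1, h1]

lemma sep {K : ℕ} (hK : 1 ≤ K) {j l : ℕ} (hj : K+1 ≤ j) (hjl : j ≤ l) (hl : l ≤ 2*K) :
    ((l:ℝ) - (j:ℝ)) * g K ≤ p j - p l := by
  induction l, hjl using Nat.le_induction with
  | base => simp
  | succ l hjl ih =>
    have hl' : l ≤ 2*K := by omega
    have h1 := ih hl'
    have h2 := gap_ge hK (le_trans hj hjl) (by omega)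
    have : ((l:ℝ)+1) - (j:ℝ) = ((l:ℝ) - j) + 1 := by ring
    push_cast
    nlinarith [g_pos hK]

lemma icov_one {θ : ℝ} (hθ : θ ∈ Ioc (0:ℝ) 1) {ε : ℝ} (hε : 0 < ε) :
    ∃ δ₀ > (0:ℝ), ∀ δ : ℝ, 0 < δ → δ ≤ δ₀ → ICov Flog 1 (δ ^ (1/θ)) δ ε := by
  obtain ⟨hθ0, hθ1⟩ := hθ
  set t : ℝ := ε/2 with ht
  have ht0 : 0 < t := by positivity
  set N : ℕ := ⌈Real.exp (1/t)⌉₊ + 2 with hN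
  refine ⟨min 1 (ε/(2*((N:ℝ)+2))), by positivity, ?_⟩
  intro δ hδ0 hδ₀
  have hδ1 : δ ≤ 1 := le_trans hδ₀ (min_le_left _ _)
  have hδε : δ ≤ ε/(2*((N:ℝ)+2)) := le_trans hδ₀ (min_le_right _ _)
  have hlo : 0 < δ ^ (1/θ) := Real.rpow_pos_of_pos hδ0 _
  have hloδ : δ ^ (1/θ) ≤ δ := by
    calc δ ^ (1/θ) ≤ δ ^ (1:ℝ) :=
          Real.rpow_le_rpow_of_exponent_ge hδ0 hδ1 (by rw [le_div_iff₀ hθ0]; linarith)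
    _ = δ := Real.rpow_one δ
  set n₁ : ℕ := ⌈t/δ⌉₊ + 1 with hn₁
  refine ⟨Fin n₁ ⊕ Fin N, inferInstance,
    Sum.elim (fun j => Icc ((j:ℝ)*δ) ((j:ℝ)*δ + δ)) (fun k => Icc (p (k+2)) (p (k+2) + δ^(1/θ))),
    ?_, ?_, ?_⟩
  · -- cover
    rintro x (rfl | ⟨k, hk2, rfl⟩)
    · apply mem_iUnion.2 ⟨Sum.inl ⟨0, by omega⟩, ?_⟩
      simp only [Sum.elim_inl]
      constructor <;> simp <;> linarith
    · by_cases hxt : 1 / Real.log k ≤ t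
      · have hx0 : 0 < 1 / Real.log k := by
          have := logk_pos hk2; positivity
        set j : ℕ := ⌊(1/Real.log k)/δ⌋₊ with hj
        have hjle : (j:ℝ) ≤ (1/Real.log k)/δ := Nat.floor_le (by positivity)
        have hjlt : j < n₁ := by
          have h1 : (1/Real.log k)/δ ≤ t/δ := by gcongr
          have h2 : (j:ℝ) ≤ (⌈t/δ⌉₊:ℝ) := le_trans hjle (le_trans h1 (Nat.le_ceil _))
          have h3 : j ≤ ⌈t/δ⌉₊ := by exact_mod_cast h2
          omega
        apply mem_iUnion.2 ⟨Sum.inl ⟨j, hjlt⟩, ?_⟩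
        simp only [Sum.elim_inl]
        constructor
        · calc (j:ℝ)*δ ≤ ((1/Real.log k)/δ)*δ := by nlinarith
          _ = 1/Real.log k := div_mul_cancel₀ _ (ne_of_gt hδ0)
        · have := Nat.lt_floor_add_one ((1/Real.log k)/δ)
          calc (1/Real.log k) = ((1/Real.log k)/δ)*δ := (div_mul_cancel₀ _ (ne_of_gt hδ0)).symm
          _ ≤ ((j:ℝ)+1)*δ := by nlinarith
          _ = (j:ℝ)*δ + δ := by ring
      · push_neg at hxt
        have hlk := logk_pos hk2
        have hklt : k < N := by
          have h1 : Real.log k < 1/t := by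
            rw [lt_div_iff₀ hlk] at hxt
            rw [lt_div_iff₀ ht0]
            nlinarith
          have h2 : (k:ℝ) < Real.exp (1/t) := by
            calc (k:ℝ) = Real.exp (Real.log k) := (Real.exp_log (by positivity)).symm
            _ < Real.exp (1/t) := Real.exp_lt_exp.2 h1
          have h3 : (k:ℝ) ≤ (⌈Real.exp (1/t)⌉₊ : ℝ) := le_trans h2.le (Nat.le_ceil _)
          have : k ≤ ⌈Real.exp (1/t)⌉₊ := by exact_mod_cast h3
          omega
        apply mem_iUnion.2 ⟨Sum.inr ⟨k-2, by omega⟩, ?_⟩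
        simp only [Sum.elim_inr]
        have hkk : (k-2)+2 = k := by omega
        constructor
        · simp [p, hkk]
        · simp only [p, hkk]; linarith
  · -- diam bounds
    rintro (j | k) <;> simp only [Sum.elim_inl, Sum.elim_inr, EMetric.diam, Real.ediam_Icc]
    · constructor
      · apply ENNReal.ofReal_le_ofReal; linarith [hloδ]
      · apply ENNReal.ofReal_le_ofReal; linarith
    · constructor
      · apply ENNReal.ofReal_le_ofReal; linarith
      · apply ENNReal.ofReal_le_ofReal; linarith
  · -- sum
    rw [tsum_fintype, Fintype.sum_sum_type]
    simp only [Sum.elim_inl, Sum.elim_inr, EMetric.diam, Real.ediam_Icc, ENNReal.rpow_one]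
    have e1 : ∀ j : Fin n₁, ENNReal.ofReal ((j:ℝ)*δ + δ - (j:ℝ)*δ) = ENNReal.ofReal δ := by
      intro j; congr 1; ring
    have e2 : ∀ k : Fin N, ENNReal.ofReal (p (k+2) + δ^(1/θ) - p (k+2)) = ENNReal.ofReal (δ^(1/θ)) := by
      intro k; congr 1; ring
    simp only [e1, e2, Finset.sum_const, Finset.card_univ, Fintype.card_fin, nsmul_eq_mul]
    rw [← ENNReal.ofReal_natCast n₁, ← ENNReal.ofReal_natCast N,
      ← ENNReal.ofReal_mul (by positivity), ← ENNReal.ofReal_mul (by positivity),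
      ← ENNReal.ofReal_add (by positivity) (by positivity)]
    apply ENNReal.ofReal_le_ofReal
    have h1 : (n₁:ℝ) ≤ t/δ + 2 := by
      rw [hn₁]; push_cast
      have := Nat.ceil_lt_add_one (by positivity : (0:ℝ) ≤ t/δ)
      linarith
    have h2 : (n₁:ℝ)*δ ≤ t + 2*δ := by
      calc (n₁:ℝ)*δ ≤ (t/δ + 2)*δ := by nlinarith
      _ = t + 2*δ := by field_simp
    have h3 : (N:ℝ)*δ^(1/θ) ≤ (N:ℝ)*δ := by nlinarith [hloδ, hlo]
    have h4 : ((N:ℝ)+2)*δ ≤ ε/2 := by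
      have hN2 : (0:ℝ) < 2*((N:ℝ)+2) := by positivity
      rw [le_div_iff₀ hN2] at hδε
      linarith
    calc (n₁:ℝ)*δ + (N:ℝ)*δ^(1/θ) ≤ (t + 2*δ) + (N:ℝ)*δ := by linarith
    _ = t + ((N:ℝ)+2)*δ := by ring
    _ ≤ ε/2 + ε/2 := by linarith
    _ = ε := by ring

lemma key_asymp {θ s : ℝ} (hθ0 : 0 < θ) (hθ1 : θ ≤ 1) (hs0 : 0 ≤ s) (hs1 : s < 1) :
    ∃ δ₀ : ℝ, 0 < δ₀ ∧ δ₀ < 1 ∧ ∀ δ : ℝ, 0 < δ → δ ≤ δ₀ →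
      1 ≤ (⌈δ ^ (-(1/θ))⌉₊ : ℝ) ∧
      1 < (⌈δ ^ (-(1/θ))⌉₊ : ℝ) * δ^(s/θ) ∧
      2 < (⌈δ ^ (-(1/θ))⌉₊ : ℝ) * g ⌈δ ^ (-(1/θ))⌉₊ * δ^(s-1) := by
  have hs1' : 0 < 1 - s := by linarith
  set c : ℝ := Real.log 6 + 1/θ with hc
  clear_value c
  have hc0 : 0 < c := by
    have h1 : (0:ℝ) < Real.log 6 := Real.log_pos (by norm_num)
    have h2 : (0:ℝ) < 1/θ := by positivity
    rw [hc]; linarith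
  set M : ℝ := 6*c^2/(1-s)^2 + 1 with hM
  clear_value M
  obtain ⟨x₀, hx₀⟩ := Filter.eventually_atTop.1
    ((Real.tendsto_exp_div_pow_atTop 2).eventually_ge_atTop M)
  set L₀ : ℝ := max 1 (x₀/(1-s)) with hL₀
  have hL₀x : x₀/(1-s) ≤ L₀ := le_max_right _ _
  have hL₀1 : 1 ≤ L₀ := le_max_left _ _
  clear_value L₀
  refine ⟨Real.exp (-L₀), Real.exp_pos _, by
    rw [Real.exp_lt_one_iff]; linarith, ?_⟩
  intro δ hδ0 hδδ₀
  set L : ℝ := -Real.log δ with hL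
  clear_value L
  have hLge : L₀ ≤ L := by
    have h1 : Real.log δ ≤ Real.log (Real.exp (-L₀)) := Real.log_le_log hδ0 hδδ₀
    rw [Real.log_exp] at h1
    rw [hL]; linarith
  have hL1 : 1 ≤ L := le_trans hL₀1 hLge
  have hδ1 : δ < 1 := lt_of_le_of_lt hδδ₀ (by rw [Real.exp_lt_one_iff]; linarith)
  have hrpow : ∀ y : ℝ, δ ^ y = Real.exp (-(L*y)) := by
    intro y
    rw [Real.rpow_def_of_pos hδ0]
    congr 1
    rw [hL]; ring
  set K : ℕ := ⌈δ ^ (-(1/θ))⌉₊ with hK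
  clear_value K
  have hxgt : 1 < δ ^ (-(1/θ)) := by
    rw [Real.one_lt_rpow_iff_of_pos hδ0]
    right
    constructor
    · exact hδ1
    · have : 0 < 1/θ := by positivity
      linarith
  have hKge : δ ^ (-(1/θ)) ≤ (K:ℝ) := by rw [hK]; exact Nat.le_ceil _
  have hK1 : 1 ≤ (K:ℝ) := le_trans hxgt.le hKge
  have hKle : (K:ℝ) ≤ 2 * δ ^ (-(1/θ)) := by
    have h1 := Nat.ceil_lt_add_one (le_of_lt (lt_trans one_pos hxgt))
    rw [hK]; linarith
  refine ⟨hK1, ?_, ?_⟩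
  · -- part (a)
    have h1 : δ ^ (-(1/θ)) * δ^(s/θ) = δ ^ ((s-1)/θ) := by
      rw [← Real.rpow_add hδ0]; congr 1; field_simp; ring
    have h2 : 1 < δ ^ ((s-1)/θ) := by
      rw [Real.one_lt_rpow_iff_of_pos hδ0]
      right
      exact ⟨hδ1, div_neg_of_neg_of_pos (by linarith) hθ0⟩
    calc (1:ℝ) < δ ^ ((s-1)/θ) := h2
    _ = δ ^ (-(1/θ)) * δ^(s/θ) := h1.symm
    _ ≤ (K:ℝ) * δ^(s/θ) := by
        apply mul_le_mul_of_nonneg_right hKge (Real.rpow_nonneg hδ0.le _)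
  · -- part (b)
    set B : ℝ := Real.log (3*(K:ℝ)) with hB
    clear_value B
    have hB0 : 0 < B := by rw [hB]; exact Real.log_pos (by linarith)
    have hA0 : 0 < Real.log (2*(K:ℝ)+1) := Real.log_pos (by linarith)
    have hAB : Real.log (2*(K:ℝ)+1) ≤ B := by rw [hB]; exact Real.log_le_log (by linarith) (by linarith)
    -- K * g K ≥ 1/(3B²)
    have hKg : 1/(3*B^2) ≤ (K:ℝ) * g K := by
      have he : (K:ℝ) * g K = (K:ℝ) / ((2*(K:ℝ)+1) * (Real.log (2*(K:ℝ)+1))^2) := by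
        unfold g; field_simp
      rw [he]
      have he2 : 1/(3*B^2) = (K:ℝ)/(3*(K:ℝ)*B^2) := by
        rw [div_eq_div_iff (by positivity) (by positivity)]; ring
      rw [he2]
      apply div_le_div₀ (by linarith) le_rfl (by positivity)
      have h1 : Real.log (2*(K:ℝ)+1)^2 ≤ B^2 := pow_le_pow_left₀ hA0.le hAB 2
      have h2 : (2*(K:ℝ)+1) * Real.log (2*(K:ℝ)+1)^2 ≤ (2*(K:ℝ)+1)*B^2 :=
        mul_le_mul_of_nonneg_left h1 (by linarith)
      have h3 : (2*(K:ℝ)+1)*B^2 ≤ 3*(K:ℝ)*B^2 :=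
        mul_le_mul_of_nonneg_right (by linarith) (sq_nonneg B)
      linarith
    -- B ≤ c * L
    have hBcL : B ≤ c * L := by
      have h3K : 3*(K:ℝ) ≤ 6 * Real.exp (L/θ) := by
        have e3 : δ ^ (-(1/θ)) = Real.exp (L/θ) := by
          rw [hrpow]; rw [mul_neg, neg_neg, mul_one_div]
        rw [← e3]; linarith
      have h4 : B ≤ Real.log (6 * Real.exp (L/θ)) := by rw [hB]; exact Real.log_le_log (by linarith) h3K
      rw [Real.log_mul (by norm_num) (Real.exp_ne_zero _), Real.log_exp] at h4
      have hl6 : (0:ℝ) < Real.log 6 := Real.log_pos (by norm_num)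
      have h5 : Real.log 6 + L/θ ≤ c*L := by
        have e : c*L - (Real.log 6 + L/θ) = Real.log 6 * (L-1) := by
          rw [hc]; field_simp; ring
        nlinarith [mul_nonneg hl6.le (show (0:ℝ) ≤ L-1 by linarith)]
      linarith
    -- exp((1-s)L) ≥ M (1-s)² L²
    have hexp : M * ((1-s)*L)^2 ≤ Real.exp ((1-s)*L) := by
      have hxx : x₀ ≤ (1-s)*L := by
        have h7 : x₀/(1-s) ≤ L := le_trans hL₀x hLge
        rw [div_le_iff₀ hs1'] at h7
        linarith [h7]
      have h8 := hx₀ _ hxx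
      have hpos : (0:ℝ) < ((1-s)*L)^2 := by positivity
      rw [le_div_iff₀ hpos] at h8
      linarith [h8]
    have hδs1 : δ^(s-1) = Real.exp ((1-s)*L) := by
      rw [hrpow]; congr 1; ring
    -- conclude
    have hBL : B^2 ≤ c^2*L^2 := by
      calc B^2 ≤ (c*L)^2 := pow_le_pow_left₀ hB0.le hBcL 2
      _ = c^2*L^2 := by ring
    have hE : 6*B^2 < Real.exp ((1-s)*L) := by
      have he5 : M * ((1-s)*L)^2 = 6*c^2*L^2 + (1-s)^2*L^2 := by
        rw [hM]; field_simp
      have hpos2 : 0 < (1-s)^2*L^2 := by positivity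
      linarith [hexp, hBL, hpos2]
    have hfinal : 2 < (1/(3*B^2)) * Real.exp ((1-s)*L) := by
      rw [show (1/(3*B^2)) * Real.exp ((1-s)*L) = Real.exp ((1-s)*L) / (3*B^2) by ring,
        lt_div_iff₀ (by positivity)]
      linarith
    calc (2:ℝ) < (1/(3*B^2)) * Real.exp ((1-s)*L) := hfinal
    _ = (1/(3*B^2)) * δ^(s-1) := by rw [hδs1]
    _ ≤ ((K:ℝ) * g K) * δ^(s-1) := by
        apply mul_le_mul_of_nonneg_right hKg (Real.rpow_nonneg hδ0.le _)

lemma not_icov {θ s : ℝ} (hθ0 : 0 < θ) (hθ1 : θ ≤ 1) (hs0 : 0 ≤ s) (hs1 : s < 1) :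
    ∃ δ₀ > (0:ℝ), ∀ δ : ℝ, 0 < δ → δ ≤ δ₀ → ¬ ICov Flog s (δ ^ (1/θ)) δ 1 := by
  classical
  obtain ⟨δ₀, hδ₀0, hδ₀1, hmain⟩ := key_asymp hθ0 hθ1 hs0 hs1
  refine ⟨δ₀, hδ₀0, ?_⟩
  intro δ hδ0 hδδ₀ hicov
  obtain ⟨hK1, ha, hb⟩ := hmain δ hδ0 hδδ₀
  set K : ℕ := ⌈δ ^ (-(1/θ))⌉₊ with hKdef
  clear_value K
  obtain ⟨ι, cnt, U, hcov, hdiam, hsum⟩ := hicov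
  have hKnat : 1 ≤ K := by exact_mod_cast hK1
  have hlo0 : 0 < δ ^ (1/θ) := Real.rpow_pos_of_pos hδ0 _
  have hchoose : ∀ k : ℕ, 2 ≤ k → ∃ i, p k ∈ U i := fun k hk =>
    mem_iUnion.1 (hcov (p_mem hk))
  obtain ⟨i₀, -⟩ := mem_iUnion.1 (hcov (Or.inl rfl))
  set f : ℕ → ι := fun k => if h : ∃ i, p k ∈ U i then h.choose else i₀ with hf
  have hfmem : ∀ k, 2 ≤ k → p k ∈ U (f k) := by
    intro k hk
    rw [hf]; dsimp only
    rw [dif_pos (hchoose k hk)]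
    exact (hchoose k hk).choose_spec
  set I : Finset ℕ := Finset.Icc (K+1) (2*K) with hI
  have hIk : ∀ k ∈ I, 2 ≤ k ∧ K+1 ≤ k ∧ k ≤ 2*K := by
    intro k hk
    rw [hI, Finset.mem_Icc] at hk
    omega
  set T : Finset ι := I.image f with hT
  set m : ι → ℕ := fun i => (I.filter (fun k => f k = i)).card with hm
  have hcard : ∑ i ∈ T, m i = K := by
    rw [hm, hT, ← Finset.card_eq_sum_card_fiberwise
      (fun k hk => Finset.mem_image_of_mem f hk)]
    rw [hI, Nat.card_Icc]; omega
  set cst : ℝ := min (g K * δ^(s-1) / 2) (δ^(s/θ)) with hcst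
  have hg0 : 0 < g K := g_pos hKnat
  have hcst0 : 0 < cst :=
    lt_min (by positivity) (Real.rpow_pos_of_pos hδ0 _)
  -- key per-set bound
  have key : ∀ i ∈ T, ENNReal.ofReal (cst * m i) ≤ EMetric.diam (U i) ^ s := by
    intro i hiT
    obtain ⟨k₀, hk₀I, hfk₀⟩ := Finset.mem_image.1 (hT ▸ hiT)
    set A : Finset ℕ := I.filter (fun k => f k = i) with hA
    have hk₀A : k₀ ∈ A := Finset.mem_filter.2 ⟨hk₀I, hfk₀⟩
    have hAne : A.Nonempty := ⟨k₀, hk₀A⟩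
    have hmemU : ∀ k ∈ A, p k ∈ U i := by
      intro k hk
      obtain ⟨hkI, hfk⟩ := Finset.mem_filter.1 hk
      rw [← hfk]
      exact hfmem k (hIk k hkI).1
    obtain ⟨hd1, hd2⟩ := hdiam i
    have hne_top : EMetric.diam (U i) ≠ ⊤ :=
      ne_top_of_le_ne_top ENNReal.ofReal_ne_top hd2
    set d : ℝ := (EMetric.diam (U i)).toReal with hd
    have hdiam_eq : EMetric.diam (U i) = ENNReal.ofReal d :=
      (ENNReal.ofReal_toReal hne_top).symm
    have hd0 : 0 ≤ d := ENNReal.toReal_nonneg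
    have hdlo : δ^(1/θ) ≤ d := by
      rw [hdiam_eq] at hd1
      exact (ENNReal.ofReal_le_ofReal_iff hd0).1 hd1
    have hdhi : d ≤ δ := by
      rw [hdiam_eq] at hd2
      exact (ENNReal.ofReal_le_ofReal_iff hδ0.le).1 hd2
    have hdpos : 0 < d := lt_of_lt_of_le hlo0 hdlo
    have hmi : m i = A.card := rfl
    have hreal : cst * m i ≤ d ^ s := by
      rcases eq_or_lt_of_le (show 1 ≤ A.card from Finset.card_pos.2 hAne) with h1 | h2
      · -- card = 1
        rw [hmi, ← h1]
        have e1 : δ^(s/θ) = (δ^(1/θ))^s := by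
          rw [← Real.rpow_mul hδ0.le]
          congr 1; field_simp
        calc cst * (1:ℕ) = cst := by norm_num
        _ ≤ δ^(s/θ) := min_le_right _ _
        _ = (δ^(1/θ))^s := e1
        _ ≤ d^s := Real.rpow_le_rpow hlo0.le hdlo hs0
      · -- card ≥ 2
        have hA2 : 2 ≤ A.card := h2
        set j : ℕ := A.min' hAne with hj
        set l : ℕ := A.max' hAne with hl
        have hjA : j ∈ A := A.min'_mem hAne
        have hlA : l ∈ A := A.max'_mem hAne
        have hjl : j ≤ l := A.min'_le l hlA
        have hjI := (hIk j (Finset.mem_filter.1 hjA).1)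
        have hlI := (hIk l (Finset.mem_filter.1 hlA).1)
        have hsub : A ⊆ Finset.Icc j l := by
          intro k hk
          exact Finset.mem_Icc.2 ⟨A.min'_le k hk, A.le_max' k hk⟩
        have hcard_le : A.card ≤ l - j + 1 := by
          have := Finset.card_le_card hsub
          rw [Nat.card_Icc] at this; omega
        have hsep := sep hKnat hjI.2.1 hjl hlI.2.2
        have hdist : p j - p l ≤ d := by
          have h3 : edist (p j) (p l) ≤ EMetric.diam (U i) := EMetric.edist_le_diam_of_mem (hmemU j hjA) (hmemU l hlA)
          rw [edist_dist, hdiam_eq] at h3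
          have h4 := (ENNReal.ofReal_le_ofReal_iff hd0).1 h3
          calc p j - p l ≤ |p j - p l| := le_abs_self _
          _ = dist (p j) (p l) := (Real.dist_eq _ _).symm
          _ ≤ d := h4
        have hmr : ((A.card:ℝ) - 1) ≤ (l:ℝ) - (j:ℝ) := by
          have h5 : A.card + j ≤ l + 1 := by omega
          have h6 : (A.card:ℝ) + j ≤ (l:ℝ) + 1 := by exact_mod_cast h5
          linarith
        have hdge : ((A.card:ℝ)/2) * g K ≤ d := by
          have h7 : ((A.card:ℝ)/2) ≤ (A.card:ℝ) - 1 := by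
            have : (2:ℝ) ≤ (A.card:ℝ) := by exact_mod_cast hA2
            linarith
          calc ((A.card:ℝ)/2) * g K ≤ ((A.card:ℝ) - 1) * g K :=
                mul_le_mul_of_nonneg_right h7 hg0.le
          _ ≤ ((l:ℝ) - (j:ℝ)) * g K := mul_le_mul_of_nonneg_right hmr hg0.le
          _ ≤ p j - p l := hsep
          _ ≤ d := hdist
        have hds : d * δ^(s-1) ≤ d^s := by
          have h8 : δ^(s-1) ≤ d^(s-1) :=
            Real.rpow_le_rpow_of_nonpos hdpos hdhi (by linarith)
          have h9 : d^s = d * d^(s-1) := by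
            rw [show s = 1 + (s-1) by ring, Real.rpow_add hdpos, Real.rpow_one]
            ring_nf
          rw [h9]
          exact mul_le_mul_of_nonneg_left h8 hd0
        calc cst * m i ≤ (g K * δ^(s-1)/2) * (m i) := by
              apply mul_le_mul_of_nonneg_right (min_le_left _ _) (Nat.cast_nonneg _)
        _ = ((A.card:ℝ)/2 * g K) * δ^(s-1) := by rw [hmi]; ring
        _ ≤ d * δ^(s-1) := by
              apply mul_le_mul_of_nonneg_right hdge (Real.rpow_nonneg hδ0.le _)
        _ ≤ d^s := hds
    rw [hdiam_eq, ENNReal.ofReal_rpow_of_pos hdpos]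
    exact ENNReal.ofReal_le_ofReal hreal
  -- summation
  have hsum2 : ENNReal.ofReal (cst * K) ≤ ENNReal.ofReal 1 := by
    have hcast : ((∑ i ∈ T, m i : ℕ) : ℝ) = (K:ℝ) := by rw [hcard]
    calc ENNReal.ofReal (cst * K)
        = ∑ i ∈ T, ENNReal.ofReal (cst * m i) := by
          rw [← ENNReal.ofReal_sum_of_nonneg (fun i _ => by positivity)]
          congr 1
          rw [← Finset.mul_sum, ← hcast]
          push_cast
          ring
    _ ≤ ∑ i ∈ T, EMetric.diam (U i) ^ s := Finset.sum_le_sum key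
    _ ≤ ∑' i, EMetric.diam (U i) ^ s := ENNReal.sum_le_tsum T
    _ ≤ ENNReal.ofReal 1 := hsum
  have hle : cst * K ≤ 1 :=
    (ENNReal.ofReal_le_ofReal_iff (by norm_num)).1 hsum2
  rcases min_le_iff.1 (le_refl cst) with h | h
  all_goals {
    rcases min_cases (g K * δ^(s-1) / 2) (δ^(s/θ)) with ⟨he, _⟩ | ⟨he, _⟩
    · rw [hcst, he] at hle; nlinarith
    · rw [hcst, he] at hle; nlinarith }

lemma lowerIDim_eq_one {θ : ℝ} (hθ : θ ∈ Ioc (0:ℝ) 1) : lowerIDim Flog θ = 1 := by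
  rw [lowerIDim, if_neg (ne_of_gt hθ.1)]
  have h1mem : (1:ℝ) ∈ {s : ℝ | 0 ≤ s ∧ ∀ ε > 0, ∀ δ₀ > 0, ∃ δ : ℝ, 0 < δ ∧ δ ≤ δ₀ ∧
      ICov Flog s (δ ^ (1 / θ)) δ ε} := by
    refine ⟨zero_le_one, fun ε hε δ₀ hδ₀ => ?_⟩
    obtain ⟨δ₁, hδ₁, h⟩ := icov_one hθ hε
    exact ⟨min δ₀ δ₁, lt_min hδ₀ hδ₁, min_le_left _ _,
      h _ (lt_min hδ₀ hδ₁) (min_le_right _ _)⟩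
  have hlb : ∀ s ∈ {s : ℝ | 0 ≤ s ∧ ∀ ε > 0, ∀ δ₀ > 0, ∃ δ : ℝ, 0 < δ ∧ δ ≤ δ₀ ∧
      ICov Flog s (δ ^ (1 / θ)) δ ε}, 1 ≤ s := by
    rintro s ⟨hs0, hs⟩
    by_contra hc
    push_neg at hc
    obtain ⟨δ₀, hδ₀, hno⟩ := not_icov hθ.1 hθ.2 hs0 hc
    obtain ⟨δ, h1, h2, h3⟩ := hs 1 one_pos δ₀ hδ₀
    exact hno δ h1 h2 h3
  exact le_antisymm (csInf_le ⟨1, hlb⟩ h1mem) (le_csInf ⟨1, h1mem⟩ hlb)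

lemma upperIDim_eq_one {θ : ℝ} (hθ : θ ∈ Ioc (0:ℝ) 1) : upperIDim Flog θ = 1 := by
  rw [upperIDim, if_neg (ne_of_gt hθ.1)]
  have h1mem : (1:ℝ) ∈ {s : ℝ | 0 ≤ s ∧ ∀ ε > 0, ∃ δ₀ > (0:ℝ), ∀ δ : ℝ, 0 < δ → δ ≤ δ₀ →
      ICov Flog s (δ ^ (1 / θ)) δ ε} :=
    ⟨zero_le_one, fun ε hε => icov_one hθ hε⟩
  have hlb : ∀ s ∈ {s : ℝ | 0 ≤ s ∧ ∀ ε > 0, ∃ δ₀ > (0:ℝ), ∀ δ : ℝ, 0 < δ → δ ≤ δ₀ →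
      ICov Flog s (δ ^ (1 / θ)) δ ε}, 1 ≤ s := by
    rintro s ⟨hs0, hs⟩
    by_contra hc
    push_neg at hc
    obtain ⟨δ₀, hδ₀, hno⟩ := not_icov hθ.1 hθ.2 hs0 hc
    obtain ⟨δ₀', hδ₀', hic⟩ := hs 1 one_pos
    exact hno (min δ₀ δ₀') (lt_min hδ₀ hδ₀') (min_le_left _ _)
      (hic _ (lt_min hδ₀ hδ₀') (min_le_right _ _))
  exact le_antisymm (csInf_le ⟨1, hlb⟩ h1mem) (le_csInf ⟨1, h1mem⟩ hlb)

lemma hcov_of_pos {s : ℝ} (hs : 0 < s) {ε : ℝ} (hε : 0 < ε) : HCov Flog s ε := by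
  refine ⟨ℕ, inferInstance, fun n => if n = 0 then {0} else {p (n+1)}, ?_, ?_⟩
  · rintro x (rfl | ⟨k, hk2, rfl⟩)
    · exact mem_iUnion.2 ⟨0, by simp⟩
    · refine mem_iUnion.2 ⟨k-1, ?_⟩
      have h1 : k - 1 ≠ 0 := by omega
      have h2 : (k-1)+1 = k := by omega
      simp only [if_neg h1, h2]
      exact rfl
  · have : ∀ n : ℕ, EMetric.diam (if n = 0 then ({0}:Set ℝ) else {p (n+1)}) ^ s = 0 := by
      intro n
      rcases eq_or_ne n 0 with h | h
      · rw [if_pos h, EMetric.diam, EMetric.diam_singleton, ENNReal.zero_rpow_of_pos hs]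
      · rw [if_neg h, EMetric.diam, EMetric.diam_singleton, ENNReal.zero_rpow_of_pos hs]
    rw [tsum_congr this, tsum_zero]
    exact zero_le

lemma lowerIDim_zero : lowerIDim Flog 0 = 0 := by
  rw [lowerIDim, if_pos rfl]
  have hbdd : BddBelow {s : ℝ | 0 ≤ s ∧ ∀ ε > 0, HCov Flog s ε} :=
    ⟨0, fun s hs => hs.1⟩
  have hmem : ∀ s : ℝ, 0 < s → s ∈ {s : ℝ | 0 ≤ s ∧ ∀ ε > 0, HCov Flog s ε} :=
    fun s hs => ⟨hs.le, fun ε hε => hcov_of_pos hs hε⟩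
  apply le_antisymm
  · by_contra hc
    push_neg at hc
    have h1 := csInf_le hbdd (hmem (sInf {s : ℝ | 0 ≤ s ∧ ∀ ε > 0, HCov Flog s ε} / 2)
      (by linarith))
    linarith
  · exact le_csInf ⟨1, hmem 1 one_pos⟩ (fun s hs => hs.1)

lemma discont : ¬ ContinuousWithinAt (fun θ : ℝ => lowerIDim Flog θ) (Set.Icc (0:ℝ) 1) 0 := by
  intro hcont
  have hcont' : Filter.Tendsto (fun θ : ℝ => lowerIDim Flog θ)
      (nhdsWithin 0 (Ioc (0:ℝ) 1)) (nhds 0) := by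
    have h := hcont.tendsto
    rw [lowerIDim_zero] at h
    exact h.mono_left (nhdsWithin_mono _ Ioc_subset_Icc_self)
  have heq : (fun θ : ℝ => lowerIDim Flog θ) =ᶠ[nhdsWithin 0 (Ioc (0:ℝ) 1)]
      (fun _ => (1:ℝ)) := by
    filter_upwards [self_mem_nhdsWithin] with θ hθ using lowerIDim_eq_one hθ
  have hne : (nhdsWithin (0:ℝ) (Ioc (0:ℝ) 1)).NeBot := by
    rw [nhdsWithin_Ioc_eq_nhdsGT (by norm_num : (0:ℝ) < 1)]
    infer_instance
  have h2 : Filter.Tendsto (fun _ : ℝ => (1:ℝ)) (nhdsWithin 0 (Ioc (0:ℝ) 1)) (nhds 0) :=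
    hcont'.congr' heq
  have := tendsto_nhds_unique h2 tendsto_const_nhds
  norm_num at this

end S17

theorem stmt17 :
    (∀ θ ∈ Set.Ioc (0:ℝ) 1, lowerIDim Flog θ = 1 ∧ upperIDim Flog θ = 1) ∧
    dimH Flog = 0 ∧
    ¬ ContinuousWithinAt (fun θ : ℝ => lowerIDim Flog θ) (Set.Icc (0:ℝ) 1) 0 :=
  ⟨fun _ hθ => ⟨S17.lowerIDim_eq_one hθ, S17.upperIDim_eq_one hθ⟩, S17.dimH_Flog, S17.discont⟩
end
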